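/- arXiv:2101.08384 — 6 statements merged into one kernel-verified Lean document; each statement's English description precedes it below -/
import Mathlib

section
/- Let n ≥ 3, ε ∈ (0,1), r > 0, and let K ⊂ ℝⁿ be an origin-symmetric convex body such that (1−ε) r B₂ⁿ ⊆ K ⊆ (1+ε) r B₂ⁿ and such that H^{n−1}(∂K) = c_n ∫_{S^{n−1}} (vol_{n−1}(K ∩ θ⊥))^{n+1} dm_{n−1}(θ), where c_n > 0 is the constant determined by requiring the same identity for the unit ball, i.e., c_n = H^{n−1}(S^{n−1}) / ∫_{S^{n−1}} (vol_{n−1}(B₂ⁿ ∩ θ⊥))^{n+1} dm_{n−1}(θ). Then (1−ε)/(1+ε)^{n+1} ≤ rⁿ ≤ (1+ε)/(1−ε)^{n+1}. -/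
open MeasureTheory Metric Set Real
open scoped ENNReal NNReal RealInnerProductSpace Pointwise

noncomputable section

abbrev Eucl (n : ℕ) := EuclideanSpace ℝ (Fin n)

/-- The support function of a set `K`. -/
def suppFn {n : ℕ} (K : Set (Eucl n)) (θ : Eucl n) : ℝ :=
  sSup ((fun x => ⟪x, θ⟫) '' K)

/-- The radial function of a set `K`. -/
def radFn {n : ℕ} (K : Set (Eucl n)) (θ : Eucl n) : ℝ :=
  sSup {t : ℝ | 0 < t ∧ t • θ ∈ K}

/-- An origin-symmetric convex body. -/
def IsSymmConvexBody {n : ℕ} (K : Set (Eucl n)) : Prop :=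
  Convex ℝ K ∧ IsCompact K ∧ (interior K).Nonempty ∧ K = -K

/-- `vol_{n-1}(K ∩ θ^⊥)`, the `(n-1)`-dimensional Hausdorff measure of the
central hyperplane section of `K` orthogonal to `θ`. -/
def secVol (n : ℕ) (K : Set (Eucl n)) (θ : Eucl n) : ℝ :=
  (μH[(n : ℝ) - 1] (K ∩ {x : Eucl n | ⟪x, θ⟫ = 0})).toReal


variable {N : ℕ}

open Classical in
/-- Metric projection onto a convex set (choice-based). -/
def cproj (A : Set (Eucl N)) (z : Eucl N) : Eucl N :=
  if h : ∃ v ∈ A, ∀ w ∈ A, ⟪z - v, w - v⟫ ≤ 0 then h.choose else z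

lemma cproj_spec {A : Set (Eucl N)} (hA : Convex ℝ A) (hAc : IsClosed A)
    (hne : A.Nonempty) (z : Eucl N) :
    cproj A z ∈ A ∧ ∀ w ∈ A, ⟪z - cproj A z, w - cproj A z⟫ ≤ 0 := by
  obtain ⟨v, hv, hmin⟩ :=
    exists_norm_eq_iInf_of_complete_convex hne (hAc.isComplete) hA z
  have hchar := (norm_eq_iInf_iff_real_inner_le_zero hA hv).1 hmin
  have hex : ∃ v ∈ A, ∀ w ∈ A, ⟪z - v, w - v⟫ ≤ 0 := ⟨v, hv, hchar⟩
  classical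
  rw [cproj, dif_pos hex]
  exact ⟨hex.choose_spec.1, hex.choose_spec.2⟩

lemma cproj_eq {A : Set (Eucl N)} (hA : Convex ℝ A) (hAc : IsClosed A)
    (hne : A.Nonempty) {z v : Eucl N} (hv : v ∈ A)
    (hch : ∀ w ∈ A, ⟪z - v, w - v⟫ ≤ 0) : cproj A z = v := by
  obtain ⟨hp, hpch⟩ := cproj_spec hA hAc hne z
  set p := cproj A z
  have h1 : ⟪z - v, p - v⟫ ≤ 0 := hch p hp
  have h2 : ⟪z - p, v - p⟫ ≤ 0 := hpch v hv
  have e1 : (z - v) - (z - p) = p - v := by abel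
  have e2 : ⟪z - v, p - v⟫ - ⟪z - p, p - v⟫ = ⟪p - v, p - v⟫ := by
    rw [← inner_sub_left, e1]
  have e3 : ⟪z - p, v - p⟫ = - ⟪z - p, p - v⟫ := by
    rw [← inner_neg_right]; congr 1; abel
  have hself : ⟪p - v, p - v⟫ ≤ 0 := by
    rw [e3] at h2; linarith
  have : p - v = 0 := by
    have := real_inner_self_nonneg (x := p - v)
    have hz : ⟪p - v, p - v⟫ = 0 := le_antisymm hself this
    exact inner_self_eq_zero.1 hz
  have : p = v := by rwa [sub_eq_zero] at this
  exact this

lemma cproj_lipschitz {A : Set (Eucl N)} (hA : Convex ℝ A) (hAc : IsClosed A)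
    (hne : A.Nonempty) : LipschitzWith 1 (cproj A) := by
  refine LipschitzWith.of_dist_le_mul fun x y => ?_
  obtain ⟨hpx, hchx⟩ := cproj_spec hA hAc hne x
  obtain ⟨hpy, hchy⟩ := cproj_spec hA hAc hne y
  set p := cproj A x
  set q := cproj A y
  simp only [NNReal.coe_one, one_mul, dist_eq_norm]
  have h1 : ⟪x - p, q - p⟫ ≤ 0 := hchx q hpy
  have h2 : ⟪y - q, p - q⟫ ≤ 0 := hchy p hpx
  have key : ⟪p - q, p - q⟫ ≤ ⟪x - y, p - q⟫ := by
    have e1 : ⟪x - p, q - p⟫ = - ⟪x - p, p - q⟫ := by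
      rw [← inner_neg_right]; congr 1; abel
    have e2 : (x - p) + (p - q) - (y - q) = x - y := by abel
    have e3 : ⟪x - p, p - q⟫ + ⟪p - q, p - q⟫ - ⟪y - q, p - q⟫ = ⟪x - y, p - q⟫ := by
      rw [← inner_add_left, ← inner_sub_left, e2]
    have h1' : 0 ≤ ⟪x - p, p - q⟫ := by rw [e1] at h1; linarith
    linarith
  have hn : ‖p - q‖ ^ 2 ≤ ‖x - y‖ * ‖p - q‖ := by
    have := real_inner_le_norm (x - y) (p - q)
    have e : ⟪p - q, p - q⟫ = ‖p - q‖ ^ 2 := real_inner_self_eq_norm_sq (p - q)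
    linarith
  rcases eq_or_lt_of_le (norm_nonneg (p - q)) with h0 | h0
  · rw [← h0]; exact norm_nonneg _
  · nlinarith [norm_nonneg (x - y)]

lemma exists_support {A : Set (Eucl N)} (hA : Convex ℝ A)
    (hAi : (interior A).Nonempty) {x : Eucl N} (hx : x ∈ frontier A) :
    ∃ u : Eucl N, u ≠ 0 ∧ ∀ y ∈ A, ⟪u, y - x⟫ ≤ 0 := by
  have hxi : x ∉ interior A := hx.2
  obtain ⟨f, hf⟩ := geometric_hahn_banach_open_point (hA.interior) isOpen_interior hxi
  obtain ⟨y₀, hy₀⟩ := hAi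
  set u := (InnerProductSpace.toDual ℝ (Eucl N)).symm f with hu
  have hinner : ∀ y, ⟪u, y⟫ = f y := fun y => InnerProductSpace.toDual_symm_apply
  refine ⟨u, ?_, ?_⟩
  · intro h0
    have := hf y₀ hy₀
    have h1 : f y₀ = 0 := by rw [← hinner, h0, inner_zero_left]
    have h2 : f x = 0 := by rw [← hinner, h0, inner_zero_left]
    rw [h1, h2] at this; exact lt_irrefl 0 this
  · intro y hy
    have key : f y ≤ f x := by
      by_contra hlt
      push_neg at hlt
      set d := f y - f x with hd
      have hdpos : 0 < d := by simp [hd]; linarith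
      set a := f y₀ - f y with ha
      set t := min (1/2 : ℝ) (d / (2 * (|a| + 1))) with ht
      have habs : 0 ≤ |a| := abs_nonneg a
      have ht0 : 0 < t := lt_min (by norm_num) (div_pos hdpos (by linarith))
      have ht1 : t ≤ 1 := le_trans (min_le_left _ _) (by norm_num)
      have htd : t ≤ d / (2 * (|a| + 1)) := min_le_right _ _
      have hz : t • y₀ + (1 - t) • y ∈ interior A :=
        hA.combo_interior_closure_mem_interior hy₀ (subset_closure hy) ht0
          (by linarith) (by ring)
      have hfz := hf _ hz
      have hfz' : t * f y₀ + (1 - t) * f y < f x := by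
        simpa [map_add, _root_.map_smul, smul_eq_mul] using hfz
      have hta : t * |a| ≤ d / 2 := by
        have h1 : t * |a| ≤ d / (2 * (|a| + 1)) * |a| :=
          mul_le_mul_of_nonneg_right htd habs
        have h2 : d / (2 * (|a| + 1)) * |a| ≤ d / 2 := by
          rw [div_mul_eq_mul_div, div_le_div_iff₀ (by linarith) (by norm_num)]
          nlinarith
        linarith
      have hge : t * a ≥ -(d / 2) := by
        have := neg_abs_le a
        nlinarith
      have : t * f y₀ + (1 - t) * f y = f y + t * a := by ring
      rw [this] at hfz'
      linarith
    have : ⟪u, y - x⟫ = f y - f x := by rw [inner_sub_right, hinner, hinner]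
    linarith

lemma frontier_subset_cproj_image {A B : Set (Eucl N)} (hA : Convex ℝ A)
    (hAc : IsClosed A) (hAi : (interior A).Nonempty) (hB : IsCompact B)
    (hAB : A ⊆ B) : frontier A ⊆ cproj A '' frontier B := by
  intro x hx
  have hne : A.Nonempty := hAi.mono interior_subset
  have hxA : x ∈ A := by
    have := hx.1; rwa [hAc.closure_eq] at this
  obtain ⟨u, hu0, hu⟩ := exists_support hA hAi hx
  have hun : 0 < ‖u‖ := norm_pos_iff.2 hu0
  set S := {t : ℝ | 0 ≤ t ∧ x + t • u ∈ B} with hS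
  have hS0 : (0 : ℝ) ∈ S := ⟨le_refl 0, by simpa using hAB hxA⟩
  have hSne : S.Nonempty := ⟨0, hS0⟩
  obtain ⟨R, hR⟩ := hB.isBounded.subset_closedBall 0
  have hSbdd : BddAbove S := by
    refine ⟨(R + ‖x‖) / ‖u‖, fun t ht => ?_⟩
    have h1 : ‖x + t • u‖ ≤ R := by simpa [mem_closedBall, dist_zero_right] using hR ht.2
    have h2 : ‖t • u‖ ≤ ‖x + t • u‖ + ‖x‖ := by
      have := norm_add_le (x + t • u) (-x)
      simpa using this
    have h3 : t * ‖u‖ ≤ R + ‖x‖ := by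
      rw [norm_smul, Real.norm_of_nonneg ht.1] at h2
      linarith
    rw [le_div_iff₀ hun]
    linarith
  have hScl : IsClosed S := by
    have : S = Ici (0 : ℝ) ∩ (fun t : ℝ => x + t • u) ⁻¹' B := by
      ext t; simp [hS, Ici]
    rw [this]
    exact isClosed_Ici.inter (hB.isClosed.preimage (by continuity))
  set T := sSup S with hT
  have hTS : T ∈ S := hScl.csSup_mem hSne hSbdd
  set z := x + T • u with hz
  have hzB : z ∈ B := hTS.2
  have hznotint : z ∉ interior B := by
    intro hint
    obtain ⟨δ, hδ0, hδ⟩ := Metric.isOpen_iff.1 isOpen_interior z hint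
    set t' := T + δ / (2 * ‖u‖) with ht'
    have ht'T : T < t' := by
      have : 0 < δ / (2 * ‖u‖) := div_pos hδ0 (by linarith)
      simp [ht']; linarith
    have ht'S : t' ∈ S := by
      refine ⟨le_trans hTS.1 ht'T.le, ?_⟩
      have : x + t' • u ∈ ball z δ := by
        rw [mem_ball, dist_eq_norm]
        have e : x + t' • u - z = (δ / (2 * ‖u‖)) • u := by
          rw [hz, ht']; module
        rw [e, norm_smul, Real.norm_of_nonneg (by positivity)]
        rw [div_mul_eq_mul_div, div_lt_iff₀ (by linarith)]
        nlinarith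
      exact interior_subset (hδ this)
    exact absurd (le_csSup hSbdd ht'S) (not_le.2 ht'T)
  have hzfr : z ∈ frontier B := ⟨subset_closure hzB, hznotint⟩
  refine ⟨z, hzfr, ?_⟩
  refine cproj_eq hA hAc hne hxA fun w hw => ?_
  have : z - x = T • u := by rw [hz]; abel
  rw [this, real_inner_smul_left]
  exact mul_nonpos_of_nonneg_of_nonpos hTS.1 (hu w hw)

lemma frontier_measure_mono {A B : Set (Eucl N)} (hA : Convex ℝ A)
    (hAc : IsClosed A) (hAi : (interior A).Nonempty) (hB : IsCompact B)
    (hAB : A ⊆ B) {d : ℝ} (hd : 0 ≤ d) :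
    μH[d] (frontier A) ≤ μH[d] (frontier B) := by
  have hne : A.Nonempty := hAi.mono interior_subset
  calc μH[d] (frontier A) ≤ μH[d] (cproj A '' frontier B) :=
        measure_mono (frontier_subset_cproj_image hA hAc hAi hB hAB)
    _ ≤ ((1 : ℝ≥0) : ℝ≥0∞) ^ d * μH[d] (frontier B) :=
        (cproj_lipschitz hA hAc hne).hausdorffMeasure_image_le hd _
    _ = μH[d] (frontier B) := by
        norm_num

section Hyperplanes

variable {N : ℕ}

lemma unitBall_pos (m : ℕ) : 0 < μH[((m : ℕ) : ℝ)] (closedBall (0 : Eucl m) 1) := by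
  have h : ((m : ℕ) : ℝ) = ((Module.finrank ℝ (Eucl m) : ℕ) : ℝ) := by
    rw [finrank_euclideanSpace_fin]
  rw [h]
  exact (isOpen_ball.measure_pos _ (nonempty_ball.2 one_pos)).trans_le
    (measure_mono ball_subset_closedBall)

lemma unitBall_lt_top (m : ℕ) : μH[((m : ℕ) : ℝ)] (closedBall (0 : Eucl m) 1) < ⊤ := by
  have h : ((m : ℕ) : ℝ) = ((Module.finrank ℝ (Eucl m) : ℕ) : ℝ) := by
    rw [finrank_euclideanSpace_fin]
  rw [h]
  exact (isCompact_closedBall _ _).measure_lt_top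

lemma compact_submodule_lt_top {E : Submodule ℝ (Eucl N)} {s : Set (Eucl N)}
    (hs : IsCompact s) (hsub : s ⊆ (E : Set (Eucl N))) :
    μH[((Module.finrank ℝ E : ℕ) : ℝ)] s < ⊤ := by
  have hiso : Isometry ((↑) : E → Eucl N) := E.subtypeₗᵢ.isometry
  set t : Set E := ((↑) : E → Eucl N) ⁻¹' s with ht
  have hts : ((↑) : E → Eucl N) '' t = s := by
    rw [ht, image_preimage_eq_inter_range, Subtype.range_coe]
    exact inter_eq_left.2 hsub
  have htc : IsCompact t := hiso.isClosedEmbedding.isCompact_preimage hs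
  rw [← hts, hiso.hausdorffMeasure_image (Or.inl (by positivity))]
  exact htc.measure_lt_top

lemma mem_ortho_iff {θ x : Eucl N} : x ∈ (ℝ ∙ θ)ᗮ ↔ ⟪x, θ⟫ = 0 := by
  rw [Submodule.mem_orthogonal_singleton_iff_inner_right, real_inner_comm]

lemma ortho_coe (θ : Eucl N) :
    {x : Eucl N | ⟪x, θ⟫ = 0} = ((ℝ ∙ θ)ᗮ : Set (Eucl N)) := by
  ext x; simp [mem_ortho_iff]

lemma finrank_ortho (hN : 1 ≤ N) {θ : Eucl N} (hθ : θ ≠ 0) :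
    Module.finrank ℝ ((ℝ ∙ θ)ᗮ : Submodule ℝ (Eucl N)) = N - 1 := by
  haveI : Fact (Module.finrank ℝ (Eucl N) = (N - 1) + 1) :=
    ⟨by rw [finrank_euclideanSpace_fin]; omega⟩
  exact Submodule.finrank_orthogonal_span_singleton hθ

lemma sec_unitBall_eq (hN : 1 ≤ N) {θ : Eucl N} (hθ : ‖θ‖ = 1) :
    μH[((N - 1 : ℕ) : ℝ)] (closedBall (0 : Eucl N) 1 ∩ {x : Eucl N | ⟪x, θ⟫ = 0})
      = μH[((N - 1 : ℕ) : ℝ)] (closedBall (0 : Eucl (N - 1)) 1) := by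
  have hθ0 : θ ≠ 0 := by intro h; rw [h, norm_zero] at hθ; norm_num at hθ
  set E := ((ℝ ∙ θ)ᗮ : Submodule ℝ (Eucl N)) with hE
  have hfr : Module.finrank ℝ E = N - 1 := finrank_ortho hN hθ0
  set b : OrthonormalBasis (Fin (N - 1)) ℝ E :=
    (stdOrthonormalBasis ℝ E).reindex (finCongr (by rw [hfr])) with hb
  set L := b.repr with hL
  have hiso : Isometry ((↑) : E → Eucl N) := E.subtypeₗᵢ.isometry
  have step1 : closedBall (0 : Eucl N) 1 ∩ {x : Eucl N | ⟪x, θ⟫ = 0}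
      = ((↑) : E → Eucl N) '' (closedBall (0 : E) 1) := by
    ext x
    simp only [mem_inter_iff, mem_closedBall_zero_iff, mem_image, mem_setOf_eq]
    constructor
    · rintro ⟨hx1, hx2⟩
      exact ⟨⟨x, mem_ortho_iff.2 hx2⟩, by simpa [mem_closedBall_zero_iff] using hx1, rfl⟩
    · rintro ⟨y, hy, rfl⟩
      refine ⟨by simpa [mem_closedBall_zero_iff] using hy, mem_ortho_iff.1 y.2⟩
  have step2 : (L : E → Eucl (N - 1)) '' (closedBall (0 : E) 1)
      = closedBall (0 : Eucl (N - 1)) 1 := by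
    have := L.toIsometryEquiv.image_closedBall (0 : E) 1
    simpa using this
  rw [step1, hiso.hausdorffMeasure_image (Or.inl (by positivity)), ← step2,
    L.isometry.hausdorffMeasure_image (Or.inl (by positivity))]

end Hyperplanes

section SphereMeasure

variable {N : ℕ}

def cube (N : ℕ) : Set (Eucl N) := {x : Eucl N | ∀ i, |x i| ≤ 1}

lemma abs_coord_le_norm (x : Eucl N) (i : Fin N) : |x i| ≤ ‖x‖ := by
  rw [EuclideanSpace.norm_eq, ← Real.sqrt_sq_eq_abs]
  apply Real.sqrt_le_sqrt
  have := Finset.single_le_sum (f := fun j => ‖x j‖ ^ 2)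
    (fun j _ => sq_nonneg _) (Finset.mem_univ i)
  simpa [Real.norm_eq_abs, sq_abs] using this

lemma cube_closed : IsClosed (cube N) := by
  have : cube N = ⋂ i, {x : Eucl N | |x i| ≤ 1} := by ext x; simp [cube]
  rw [this]
  refine isClosed_iInter fun i => ?_
  exact isClosed_le ((EuclideanSpace.proj (𝕜 := ℝ) i).continuous.abs) continuous_const

lemma cube_compact : IsCompact (cube N) := by
  refine IsCompact.of_isClosed_subset (isCompact_closedBall (0 : Eucl N) (Real.sqrt N))
    cube_closed fun x hx => ?_
  rw [mem_closedBall_zero_iff, EuclideanSpace.norm_eq]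
  apply Real.sqrt_le_sqrt
  calc ∑ i, ‖x i‖ ^ 2 ≤ ∑ _i : Fin N, (1 : ℝ) := by
        refine Finset.sum_le_sum fun i _ => ?_
        have := hx i
        rw [Real.norm_eq_abs]
        nlinarith [abs_nonneg (x i)]
    _ = N := by simp

lemma ball_subset_cube : closedBall (0 : Eucl N) 1 ⊆ cube N := fun x hx i =>
  le_trans (abs_coord_le_norm x i) (mem_closedBall_zero_iff.1 hx)

def face (i : Fin N) (c : ℝ) : Set (Eucl N) := {x : Eucl N | x i = c} ∩ cube N

lemma frontier_cube_subset :
    frontier (cube N) ⊆ ⋃ i, (face i 1 ∪ face i (-1)) := by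
  intro x hx
  have hxc : x ∈ cube N := by
    have := hx.1; rwa [cube_closed.closure_eq] at this
  by_contra hmem
  simp only [mem_iUnion, mem_union, not_exists, not_or] at hmem
  have hlt : ∀ i, |x i| < 1 := by
    intro i
    rcases (hmem i) with ⟨h1, h2⟩
    have hne1 : x i ≠ 1 := fun h => h1 ⟨h, hxc⟩
    have hne2 : x i ≠ -1 := fun h => h2 ⟨h, hxc⟩
    rcases lt_or_eq_of_le (hxc i) with h | h
    · exact h
    · exfalso
      rcases (abs_eq (by norm_num : (0:ℝ) ≤ 1)).1 h with h' | h'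
      · exact hne1 h'
      · exact hne2 h'
  have hU : IsOpen {y : Eucl N | ∀ i, |y i| < 1} := by
    have : {y : Eucl N | ∀ i, |y i| < 1} = ⋂ i, {y : Eucl N | |y i| < 1} := by
      ext y; simp
    rw [this]
    exact isOpen_iInter_of_finite fun i =>
      isOpen_lt ((EuclideanSpace.proj (𝕜 := ℝ) i).continuous.abs) continuous_const
  have hsub : {y : Eucl N | ∀ i, |y i| < 1} ⊆ cube N := fun y hy i => (hy i).le
  have hxU : x ∈ interior {y : Eucl N | ∀ i, |y i| < 1} := by
    rw [hU.interior_eq]; exact hlt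
  exact hx.2 (interior_mono hsub hxU)

lemma face_lt_top (hN : 1 ≤ N) (i : Fin N) (c : ℝ) :
    μH[((N - 1 : ℕ) : ℝ)] (face i c) < ⊤ := by
  set e : Eucl N := EuclideanSpace.single i (1 : ℝ) with he
  have he1 : ‖e‖ = 1 := by simp [he]
  have he0 : e ≠ 0 := by intro h; rw [h, norm_zero] at he1; norm_num at he1
  set E := ((ℝ ∙ e)ᗮ : Submodule ℝ (Eucl N)) with hE
  have hfr : Module.finrank ℝ E = N - 1 := finrank_ortho hN he0
  set f : Eucl N → Eucl N := fun x => x - c • e with hf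
  have hiso : Isometry f := Isometry.of_dist_eq fun a b => by
    simp only [hf, dist_eq_norm]
    congr 1
    abel
  set G := f '' face i c with hG
  have hGE : G ⊆ (E : Set (Eucl N)) := by
    rintro _ ⟨x, ⟨hx1, _⟩, rfl⟩
    refine mem_ortho_iff.2 ?_
    have h1 : ⟪x, e⟫ = x i := by
      rw [he, EuclideanSpace.inner_single_right]
      simp
    have h2 : ⟪e, e⟫ = 1 := by
      rw [real_inner_self_eq_norm_sq, he1]; norm_num
    rw [hf, inner_sub_left, real_inner_smul_left, h1, h2, hx1]
    ring
  have hGc : IsCompact G :=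
    ((cube_compact.inter_left (isClosed_eq ((EuclideanSpace.proj (𝕜 := ℝ) i).continuous)
      continuous_const)).image hiso.continuous)
  have := compact_submodule_lt_top (E := E) hGc hGE
  rw [hfr] at this
  rwa [hG, hiso.hausdorffMeasure_image (Or.inl (by positivity))] at this

lemma nontrivial_eucl (hN : 1 ≤ N) : Nontrivial (Eucl N) := by
  refine ⟨EuclideanSpace.single ⟨0, by omega⟩ (1 : ℝ), 0, ?_⟩
  intro h
  have : ‖EuclideanSpace.single (⟨0, by omega⟩ : Fin N) (1 : ℝ)‖ = 1 := by simp
  rw [h, norm_zero] at this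
  norm_num at this

lemma sphere_lt_top (hN : 1 ≤ N) :
    μH[((N - 1 : ℕ) : ℝ)] (sphere (0 : Eucl N) 1) < ⊤ := by
  haveI := nontrivial_eucl hN
  have h1 : sphere (0 : Eucl N) 1 = frontier (closedBall (0 : Eucl N) 1) :=
    (frontier_closedBall (0 : Eucl N) one_ne_zero).symm
  have h2 : μH[((N - 1 : ℕ) : ℝ)] (frontier (closedBall (0 : Eucl N) 1))
      ≤ μH[((N - 1 : ℕ) : ℝ)] (frontier (cube N)) :=
    frontier_measure_mono (convex_closedBall _ _) isClosed_closedBall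
      ⟨0, by rw [interior_closedBall _ one_ne_zero]; exact mem_ball_self one_pos⟩
      cube_compact ball_subset_cube (by positivity)
  have h3 : μH[((N - 1 : ℕ) : ℝ)] (frontier (cube N))
      ≤ ∑ i : Fin N, μH[((N - 1 : ℕ) : ℝ)] (face i 1 ∪ face i (-1)) :=
    le_trans (measure_mono frontier_cube_subset) (measure_iUnion_fintype_le _ _)
  have h4 : ∀ i : Fin N, μH[((N - 1 : ℕ) : ℝ)] (face i 1 ∪ face i (-1)) < ⊤ :=
    fun i => lt_of_le_of_lt (measure_union_le _ _)
      (ENNReal.add_lt_top.2 ⟨face_lt_top hN i 1, face_lt_top hN i (-1)⟩)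
  rw [h1]
  exact lt_of_le_of_lt (h2.trans h3) (ENNReal.sum_lt_top.2 fun i _ => h4 i)

lemma sphere_pos (hN : 1 ≤ N) :
    0 < μH[((N - 1 : ℕ) : ℝ)] (sphere (0 : Eucl N) 1) := by
  set θ : Eucl N := EuclideanSpace.single ⟨0, by omega⟩ (1 : ℝ) with hθdef
  have hθ1 : ‖θ‖ = 1 := by simp [hθdef]
  have hθ0 : θ ≠ 0 := by intro h; rw [h, norm_zero] at hθ1; norm_num at hθ1
  set E := ((ℝ ∙ θ)ᗮ : Submodule ℝ (Eucl N)) with hE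
  set P : Eucl N →L[ℝ] Eucl N := E.subtypeL.comp (E.orthogonalProjectionOnto) with hP
  have hPlip : LipschitzWith 1 P := by
    have hle : ∀ x : Eucl N, ‖P x‖ ≤ 1 * ‖x‖ := by
      intro x
      have h1 : ‖P x‖ = ‖E.orthogonalProjectionOnto x‖ := by simp [hP]
      have h2 : ‖E.orthogonalProjectionOnto x‖ ≤ ‖(E.orthogonalProjectionOnto : Eucl N →L[ℝ] E)‖ * ‖x‖ :=
        (E.orthogonalProjectionOnto).le_opNorm x
      have h3 := Submodule.orthogonalProjectionOnto_norm_le E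
      rw [one_mul, h1]
      calc ‖E.orthogonalProjectionOnto x‖ ≤ _ * ‖x‖ := h2
        _ ≤ 1 * ‖x‖ := by
            apply mul_le_mul_of_nonneg_right h3 (norm_nonneg x)
        _ = ‖x‖ := one_mul _
    refine LipschitzWith.of_dist_le_mul fun x y => ?_
    rw [dist_eq_norm, dist_eq_norm, ← map_sub, NNReal.coe_one]
    exact hle (x - y)
  have hPθ : P θ = 0 := by
    have hmem : θ ∈ Eᗮ := by
      rw [hE, Submodule.orthogonal_orthogonal]
      exact Submodule.mem_span_singleton_self θ
    have := Submodule.orthogonalProjectionOnto_apply_of_mem_orthogonal hmem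
    simp [hP, this]
  have hsub : closedBall (0 : Eucl N) 1 ∩ {x : Eucl N | ⟪x, θ⟫ = 0}
      ⊆ P '' sphere (0 : Eucl N) 1 := by
    rintro x ⟨hx1, hx2⟩
    rw [mem_closedBall_zero_iff] at hx1
    have hx2' : ⟪x, θ⟫ = 0 := hx2
    set tv := Real.sqrt (1 - ‖x‖ ^ 2) with htv
    have hxs : ‖x‖ ^ 2 ≤ 1 := by nlinarith [norm_nonneg x]
    have htv2 : tv ^ 2 = 1 - ‖x‖ ^ 2 := Real.sq_sqrt (by linarith)
    set y := x + tv • θ with hy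
    have hny : ‖y‖ ^ 2 = 1 := by
      rw [hy, norm_add_sq_real, real_inner_smul_right, hx2', norm_smul, hθ1]
      rw [Real.norm_eq_abs, mul_one]
      rw [sq_abs]
      rw [htv2]
      ring
    have hy1 : ‖y‖ = 1 := by
      have hfac : (‖y‖ - 1) * (‖y‖ + 1) = 0 := by nlinarith
      rcases mul_eq_zero.1 hfac with h | h
      · linarith
      · nlinarith [norm_nonneg y]
    refine ⟨y, ?_, ?_⟩
    · rwa [mem_sphere_iff_norm, sub_zero]
    · have hxE : x ∈ E := mem_ortho_iff.2 hx2'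
      have hPx : P x = x := by
        have h := Submodule.starProjection_eq_self_iff.2 hxE
        simp only [hP, ContinuousLinearMap.comp_apply, Submodule.subtypeL_apply]
        exact h
      rw [hy, map_add, ContinuousLinearMap.map_smul, hPθ, smul_zero, add_zero, hPx]
  have hkey : μH[((N - 1 : ℕ) : ℝ)] (closedBall (0 : Eucl N) 1 ∩ {x : Eucl N | ⟪x, θ⟫ = 0})
      ≤ μH[((N - 1 : ℕ) : ℝ)] (sphere (0 : Eucl N) 1) := by
    calc μH[((N - 1 : ℕ) : ℝ)] (closedBall (0 : Eucl N) 1 ∩ {x : Eucl N | ⟪x, θ⟫ = 0})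
        ≤ μH[((N - 1 : ℕ) : ℝ)] (P '' sphere (0 : Eucl N) 1) := measure_mono hsub
      _ ≤ ((1 : ℝ≥0) : ℝ≥0∞) ^ ((N - 1 : ℕ) : ℝ) * μH[((N - 1 : ℕ) : ℝ)] (sphere (0 : Eucl N) 1) :=
          hPlip.hausdorffMeasure_image_le (by positivity) _
      _ = μH[((N - 1 : ℕ) : ℝ)] (sphere (0 : Eucl N) 1) := by norm_num
  refine lt_of_lt_of_le ?_ hkey
  rw [sec_unitBall_eq hN hθ1]
  exact unitBall_pos (N - 1)

end SphereMeasure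

section Scaling

variable {N : ℕ}

lemma smul_hset {θ : Eucl N} {R : ℝ} (hR : R ≠ 0) :
    R • {x : Eucl N | ⟪x, θ⟫ = 0} = {x : Eucl N | ⟪x, θ⟫ = 0} := by
  ext x
  rw [mem_smul_set_iff_inv_smul_mem₀ hR]
  simp only [mem_setOf_eq, real_inner_smul_left]
  constructor
  · intro h
    rcases mul_eq_zero.1 h with h | h
    · exact absurd h (inv_ne_zero hR)
    · exact h
  · intro h; rw [h, mul_zero]

lemma smul_ball_inter {θ : Eucl N} {R : ℝ} (hR : 0 < R) :
    closedBall (0 : Eucl N) R ∩ {x : Eucl N | ⟪x, θ⟫ = 0}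
      = R • (closedBall (0 : Eucl N) 1 ∩ {x : Eucl N | ⟪x, θ⟫ = 0}) := by
  rw [smul_set_inter₀ hR.ne', smul_hset hR.ne']
  congr 1
  rw [smul_closedBall' hR.ne', smul_zero, Real.norm_eq_abs, abs_of_pos hR, mul_one]

lemma toReal_nnnorm_rpow_smul {R : ℝ} (hR : 0 < R) (m : ℕ) (x : ℝ≥0∞) :
    ((‖R‖₊ ^ ((m : ℕ) : ℝ) : ℝ≥0) • x).toReal = R ^ m * x.toReal := by
  rw [ENNReal.smul_def, smul_eq_mul, ENNReal.toReal_mul, ENNReal.coe_toReal, NNReal.coe_rpow,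
    coe_nnnorm, Real.norm_eq_abs, abs_of_pos hR, Real.rpow_natCast]

lemma sphere_scale {R : ℝ} (hR : 0 < R) :
    μH[((N - 1 : ℕ) : ℝ)] (sphere (0 : Eucl N) R)
      = (‖R‖₊ ^ ((N - 1 : ℕ) : ℝ) : ℝ≥0) • μH[((N - 1 : ℕ) : ℝ)] (sphere (0 : Eucl N) 1) := by
  have h : sphere (0 : Eucl N) R = R • sphere (0 : Eucl N) 1 := by
    rw [smul_sphere' hR.ne' (0 : Eucl N) 1, smul_zero, Real.norm_eq_abs, abs_of_pos hR, mul_one]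
  rw [h, MeasureTheory.Measure.hausdorffMeasure_smul₀ (by positivity) hR.ne']

lemma ball_sec_scale {θ : Eucl N} {R : ℝ} (hR : 0 < R) :
    μH[((N - 1 : ℕ) : ℝ)] (closedBall (0 : Eucl N) R ∩ {x : Eucl N | ⟪x, θ⟫ = 0})
      = (‖R‖₊ ^ ((N - 1 : ℕ) : ℝ) : ℝ≥0) •
        μH[((N - 1 : ℕ) : ℝ)] (closedBall (0 : Eucl N) 1 ∩ {x : Eucl N | ⟪x, θ⟫ = 0}) := by
  rw [smul_ball_inter hR, MeasureTheory.Measure.hausdorffMeasure_smul₀ (by positivity) hR.ne']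

end Scaling

/-- a body satisfying the integrated eighth Busemann–Petty condition
(with the constant normalized by the unit ball), squeezed between `(1-ε)r B` and
`(1+ε)r B`, has `(1-ε)/(1+ε)^{n+1} ≤ rⁿ ≤ (1+ε)/(1-ε)^{n+1}`. -/
theorem stmt_4 (n : ℕ) (hn : 3 ≤ n) (ε r c : ℝ) (hε : ε ∈ Ioo (0 : ℝ) 1) (hr : 0 < r)
    (K : Set (Eucl n)) (hK : IsSymmConvexBody K)
    (h1 : closedBall (0 : Eucl n) ((1 - ε) * r) ⊆ K)
    (h2 : K ⊆ closedBall (0 : Eucl n) ((1 + ε) * r))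
    (hc : c = (μH[(n : ℝ) - 1] (sphere (0 : Eucl n) 1)).toReal /
      ∫ θ in sphere (0 : Eucl n) 1,
        (secVol n (closedBall (0 : Eucl n) 1) θ) ^ (n + 1) ∂μH[(n : ℝ) - 1])
    (hBP : (μH[(n : ℝ) - 1] (frontier K)).toReal =
      c * ∫ θ in sphere (0 : Eucl n) 1, (secVol n K θ) ^ (n + 1) ∂μH[(n : ℝ) - 1]) :
    (1 - ε) / (1 + ε) ^ (n + 1) ≤ r ^ n ∧ r ^ n ≤ (1 + ε) / (1 - ε) ^ (n + 1) := by
  classical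
  obtain ⟨hKconv, hKcomp, hKint, _⟩ := hK
  obtain ⟨hε0, hε1⟩ := hε
  have hn1 : 1 ≤ n := by omega
  have hm0 : n - 1 ≠ 0 := by omega
  haveI : Nontrivial (Eucl n) := nontrivial_eucl hn1
  have hdcast : (n : ℝ) - 1 = ((n - 1 : ℕ) : ℝ) := by
    rw [Nat.cast_sub hn1, Nat.cast_one]
  have hμ : (μH[(n : ℝ) - 1] : Measure (Eucl n)) = μH[((n - 1 : ℕ) : ℝ)] := by rw [hdcast]
  rw [hμ] at hc hBP
  have hRm : 0 < (1 - ε) * r := by nlinarith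
  have hRp : 0 < (1 + ε) * r := by nlinarith
  -- sphere measure
  have hSpos := sphere_pos (N := n) hn1
  have hSfin := sphere_lt_top (N := n) hn1
  set s : ℝ := (μH[((n - 1 : ℕ) : ℝ)] (sphere (0 : Eucl n) 1)).toReal with hs
  have hs0 : 0 < s := ENNReal.toReal_pos hSpos.ne' hSfin.ne
  -- section constant
  have hA0pos := unitBall_pos (n - 1)
  have hA0fin := unitBall_lt_top (n - 1)
  set a : ℝ := (μH[((n - 1 : ℕ) : ℝ)] (closedBall (0 : Eucl (n - 1)) 1)).toReal with ha
  have ha0 : 0 < a := ENNReal.toReal_pos hA0pos.ne' hA0fin.ne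
  -- secVol of the unit ball is the constant `a` on the sphere
  have hsecB : ∀ θ ∈ sphere (0 : Eucl n) 1, secVol n (closedBall (0 : Eucl n) 1) θ = a := by
    intro θ hθ
    have hθ1 : ‖θ‖ = 1 := by simpa [mem_sphere_iff_norm] using hθ
    simp only [secVol]
    rw [hμ, sec_unitBall_eq hn1 hθ1, ha]
  -- scaled ball sections
  have hsec_ball : ∀ {R : ℝ}, 0 < R → ∀ θ ∈ sphere (0 : Eucl n) 1,
      (μH[((n - 1 : ℕ) : ℝ)]
          (closedBall (0 : Eucl n) R ∩ {x : Eucl n | ⟪x, θ⟫ = 0})).toReal = R ^ (n - 1) * a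
        ∧ μH[((n - 1 : ℕ) : ℝ)]
          (closedBall (0 : Eucl n) R ∩ {x : Eucl n | ⟪x, θ⟫ = 0}) < ⊤ := by
    intro R hR θ hθ
    have hθ1 : ‖θ‖ = 1 := by simpa [mem_sphere_iff_norm] using hθ
    constructor
    · rw [ball_sec_scale hR, sec_unitBall_eq hn1 hθ1, toReal_nnnorm_rpow_smul hR, ha]
    · rw [ball_sec_scale hR, sec_unitBall_eq hn1 hθ1, ENNReal.smul_def, smul_eq_mul]
      exact ENNReal.mul_lt_top ENNReal.coe_lt_top hA0fin
  -- pointwise bounds on sections of K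
  have hsecK_ub : ∀ θ ∈ sphere (0 : Eucl n) 1,
      secVol n K θ ≤ ((1 + ε) * r) ^ (n - 1) * a := by
    intro θ hθ
    obtain ⟨he, hf⟩ := hsec_ball hRp θ hθ
    simp only [secVol]
    rw [hμ, ← he]
    exact ENNReal.toReal_mono hf.ne (measure_mono (inter_subset_inter_left _ h2))
  have hsecK_lb : ∀ θ ∈ sphere (0 : Eucl n) 1,
      ((1 - ε) * r) ^ (n - 1) * a ≤ secVol n K θ := by
    intro θ hθ
    obtain ⟨he, _⟩ := hsec_ball hRm θ hθ
    obtain ⟨_, hfp⟩ := hsec_ball hRp θ hθ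
    simp only [secVol]
    rw [hμ, ← he]
    refine ENNReal.toReal_mono ?_ (measure_mono (inter_subset_inter_left _ h1))
    exact (lt_of_le_of_lt (measure_mono (inter_subset_inter_left _ h2)) hfp).ne
  -- surface area bounds
  have hfrK_le : μH[((n - 1 : ℕ) : ℝ)] (frontier K)
      ≤ (‖(1 + ε) * r‖₊ ^ ((n - 1 : ℕ) : ℝ) : ℝ≥0) •
          μH[((n - 1 : ℕ) : ℝ)] (sphere (0 : Eucl n) 1) := by
    have := frontier_measure_mono hKconv hKcomp.isClosed hKint
      (isCompact_closedBall (0 : Eucl n) ((1 + ε) * r)) h2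
      (d := ((n - 1 : ℕ) : ℝ)) (by positivity)
    rwa [frontier_closedBall _ hRp.ne', sphere_scale hRp] at this
  have hfrK_fin : μH[((n - 1 : ℕ) : ℝ)] (frontier K) < ⊤ := by
    refine lt_of_le_of_lt hfrK_le ?_
    rw [ENNReal.smul_def, smul_eq_mul]
    exact ENNReal.mul_lt_top ENNReal.coe_lt_top hSfin
  have hSfK_ub : (μH[((n - 1 : ℕ) : ℝ)] (frontier K)).toReal ≤ ((1 + ε) * r) ^ (n - 1) * s := by
    rw [hs, ← toReal_nnnorm_rpow_smul hRp]
    refine ENNReal.toReal_mono ?_ hfrK_le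
    rw [ENNReal.smul_def, smul_eq_mul]
    exact (ENNReal.mul_lt_top ENNReal.coe_lt_top hSfin).ne
  have hSfK_lb : ((1 - ε) * r) ^ (n - 1) * s ≤ (μH[((n - 1 : ℕ) : ℝ)] (frontier K)).toReal := by
    have hmono := frontier_measure_mono (convex_closedBall (0 : Eucl n) ((1 - ε) * r))
      isClosed_closedBall
      ⟨0, by rw [interior_closedBall _ hRm.ne']; exact mem_ball_self hRm⟩
      hKcomp h1 (d := ((n - 1 : ℕ) : ℝ)) (by positivity)
    rw [frontier_closedBall _ hRm.ne', sphere_scale hRm] at hmono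
    rw [hs, ← toReal_nnnorm_rpow_smul hRm]
    exact ENNReal.toReal_mono hfrK_fin.ne hmono
  haveI hfinres : IsFiniteMeasure
      ((μH[((n - 1 : ℕ) : ℝ)] : Measure (Eucl n)).restrict (sphere (0 : Eucl n) 1)) :=
    ⟨by rw [Measure.restrict_apply_univ]; exact hSfin⟩
  -- compute the normalizing constant
  have hI1 : (∫ θ in sphere (0 : Eucl n) 1,
      (secVol n (closedBall (0 : Eucl n) 1) θ) ^ (n + 1) ∂μH[((n - 1 : ℕ) : ℝ)])
        = s * a ^ (n + 1) := by
    rw [setIntegral_congr_fun (isClosed_sphere.measurableSet)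
      (g := fun _ => a ^ (n + 1)) (fun θ hθ => by rw [hsecB θ hθ])]
    rw [setIntegral_const, smul_eq_mul, measureReal_def, ← hs]
  rw [hI1] at hc
  have hc' : c = (a ^ (n + 1))⁻¹ := by
    rw [hc, div_mul_eq_div_div, div_self hs0.ne', one_div]
  have hcpos : 0 < c := by rw [hc']; positivity
  set I : ℝ := ∫ θ in sphere (0 : Eucl n) 1, (secVol n K θ) ^ (n + 1)
      ∂μH[((n - 1 : ℕ) : ℝ)] with hI
  -- upper bound on the integral
  have hIub : I ≤ s * (((1 + ε) * r) ^ (n - 1) * a) ^ (n + 1) := by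
    have hle : ∀ᵐ θ ∂((μH[((n - 1 : ℕ) : ℝ)] : Measure (Eucl n)).restrict
        (sphere (0 : Eucl n) 1)),
        (secVol n K θ) ^ (n + 1) ≤ (((1 + ε) * r) ^ (n - 1) * a) ^ (n + 1) := by
      filter_upwards [self_mem_ae_restrict isClosed_sphere.measurableSet] with θ hθ
      exact pow_le_pow_left₀ ENNReal.toReal_nonneg (hsecK_ub θ hθ) _
    have hmono := integral_mono_of_nonneg
      (Filter.Eventually.of_forall fun θ => pow_nonneg ENNReal.toReal_nonneg (n + 1))
      (integrable_const ((((1 + ε) * r) ^ (n - 1) * a) ^ (n + 1))) hle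
    rw [hI]
    refine le_trans hmono ?_
    rw [setIntegral_const, smul_eq_mul, measureReal_def, ← hs]
  have hSlb' : ((1 - ε) * r) ^ (n - 1) * s ≤ c * I := by rw [← hBP]; exact hSfK_lb
  -- lower chain
  have hlow : ((1 - ε) * r) ^ (n - 1) ≤ (((1 + ε) * r) ^ (n - 1)) ^ (n + 1) := by
    have h1' : ((1 - ε) * r) ^ (n - 1) * s ≤ c * (s * (((1 + ε) * r) ^ (n - 1) * a) ^ (n + 1)) :=
      le_trans hSlb' (mul_le_mul_of_nonneg_left hIub hcpos.le)
    have h2' : c * (s * (((1 + ε) * r) ^ (n - 1) * a) ^ (n + 1))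
        = (((1 + ε) * r) ^ (n - 1)) ^ (n + 1) * s := by
      rw [hc', mul_pow]
      field_simp
    rw [h2'] at h1'
    exact le_of_mul_le_mul_right h1' hs0
  -- integrability and lower bound on the integral
  have hIpos : 0 < I := by
    have hpos : 0 < ((1 - ε) * r) ^ (n - 1) * s := by positivity
    have hcI : 0 < c * I := lt_of_lt_of_le hpos hSlb'
    have := div_pos hcI hcpos
    rwa [mul_div_cancel_left₀ _ hcpos.ne'] at this
  have hfint : Integrable (fun θ => (secVol n K θ) ^ (n + 1))
      ((μH[((n - 1 : ℕ) : ℝ)] : Measure (Eucl n)).restrict (sphere (0 : Eucl n) 1)) := by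
    by_contra hni
    rw [hI, integral_undef hni] at hIpos
    exact lt_irrefl 0 hIpos
  have hIlb : s * (((1 - ε) * r) ^ (n - 1) * a) ^ (n + 1) ≤ I := by
    have hle : ∀ᵐ θ ∂((μH[((n - 1 : ℕ) : ℝ)] : Measure (Eucl n)).restrict
        (sphere (0 : Eucl n) 1)),
        (fun _ : Eucl n => (((1 - ε) * r) ^ (n - 1) * a) ^ (n + 1)) θ
          ≤ (secVol n K θ) ^ (n + 1) := by
      filter_upwards [self_mem_ae_restrict isClosed_sphere.measurableSet] with θ hθ
      exact pow_le_pow_left₀ (by positivity) (hsecK_lb θ hθ) _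
    have hmono := integral_mono_ae
      (integrable_const ((((1 - ε) * r) ^ (n - 1) * a) ^ (n + 1))) hfint hle
    rw [hI]
    refine le_trans (le_of_eq ?_) hmono
    rw [setIntegral_const, smul_eq_mul, measureReal_def, ← hs]
  -- upper chain
  have hup : (((1 - ε) * r) ^ (n - 1)) ^ (n + 1) ≤ ((1 + ε) * r) ^ (n - 1) := by
    have h1' : c * (s * (((1 - ε) * r) ^ (n - 1) * a) ^ (n + 1)) ≤ c * I :=
      mul_le_mul_of_nonneg_left hIlb hcpos.le
    have h2' : c * (s * (((1 - ε) * r) ^ (n - 1) * a) ^ (n + 1))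
        = (((1 - ε) * r) ^ (n - 1)) ^ (n + 1) * s := by
      rw [hc', mul_pow]
      field_simp
    rw [h2', ← hBP] at h1'
    have h3' := le_trans h1' hSfK_ub
    exact le_of_mul_le_mul_right h3' hs0
  -- final arithmetic
  have hrm : (0 : ℝ) < r ^ (n - 1) := pow_pos hr _
  constructor
  · rw [← pow_le_pow_iff_left₀ (div_nonneg (by linarith) (by positivity))
      (by positivity : (0 : ℝ) ≤ r ^ n) hm0]
    have e1 : ((1 - ε) / (1 + ε) ^ (n + 1)) ^ (n - 1)
        = (1 - ε) ^ (n - 1) / ((1 + ε) ^ (n - 1)) ^ (n + 1) := by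
      rw [div_pow, ← pow_mul, ← pow_mul, Nat.mul_comm]
    have e2 : (r ^ n) ^ (n - 1) = r ^ ((n - 1) * n) := by
      rw [← pow_mul, Nat.mul_comm]
    rw [e1, e2, div_le_iff₀ (by positivity)]
    have hkey : (1 - ε) ^ (n - 1) * r ^ (n - 1)
        ≤ ((1 + ε) ^ (n - 1)) ^ (n + 1) * r ^ ((n - 1) * n) * r ^ (n - 1) := by
      have h := hlow
      have hexp : (n - 1) * (n + 1) = (n - 1) * n + (n - 1) := by ring
      rw [mul_pow (1 - ε) r (n - 1), mul_pow (1 + ε) r (n - 1),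
        mul_pow ((1 + ε) ^ (n - 1)) (r ^ (n - 1)) (n + 1),
        ← pow_mul r (n - 1) (n + 1), hexp, pow_add r ((n - 1) * n) (n - 1)] at h
      rw [mul_assoc]
      exact h
    have := le_of_mul_le_mul_right hkey hrm
    rwa [mul_comm (((1 + ε) ^ (n - 1)) ^ (n + 1)) (r ^ ((n - 1) * n))] at this
  · rw [← pow_le_pow_iff_left₀ (by positivity : (0 : ℝ) ≤ r ^ n)
      (div_nonneg (by linarith) (pow_nonneg (by linarith) _)) hm0]
    have e1 : ((1 + ε) / (1 - ε) ^ (n + 1)) ^ (n - 1)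
        = (1 + ε) ^ (n - 1) / ((1 - ε) ^ (n - 1)) ^ (n + 1) := by
      rw [div_pow, ← pow_mul, ← pow_mul, Nat.mul_comm]
    have e2 : (r ^ n) ^ (n - 1) = r ^ ((n - 1) * n) := by
      rw [← pow_mul, Nat.mul_comm]
    rw [e1, e2, le_div_iff₀ (pow_pos (pow_pos (by linarith : (0:ℝ) < 1 - ε) _) _)]
    have hkey : ((1 - ε) ^ (n - 1)) ^ (n + 1) * r ^ ((n - 1) * n) * r ^ (n - 1)
        ≤ (1 + ε) ^ (n - 1) * r ^ (n - 1) := by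
      have h := hup
      have hexp : (n - 1) * (n + 1) = (n - 1) * n + (n - 1) := by ring
      rw [mul_pow (1 - ε) r (n - 1), mul_pow ((1 - ε) ^ (n - 1)) (r ^ (n - 1)) (n + 1),
        ← pow_mul r (n - 1) (n + 1), hexp, pow_add r ((n - 1) * n) (n - 1),
        mul_pow (1 + ε) r (n - 1)] at h
      rw [mul_assoc]
      exact h
    have := le_of_mul_le_mul_right hkey hrm
    rwa [mul_comm (((1 - ε) ^ (n - 1)) ^ (n + 1)) (r ^ ((n - 1) * n))] at this

end
end

section
/- Let n ≥ 2, ε ∈ (0,1), and let K ⊂ ℝⁿ be an origin-symmetric convex body with (1−ε) B₂ⁿ ⊆ K ⊆ (1+ε) B₂ⁿ. Then there exists a symmetric positive-definite linear map T : ℝⁿ → ℝⁿ with det T = 1 and ‖T‖, ‖T⁻¹‖ ≤ ((1+ε)/(1−ε))^{(n+2)/2} such that the body K̃ = T⁻¹K is in isotropic position, i.e., there is a constant c > 0 with ∫_{K̃} ⟨x,y⟩² dy = c |x|² for all x ∈ ℝⁿ; moreover (1−ε)((1−ε)/(1+ε))^{(n+2)/2} B₂ⁿ ⊆ K̃ ⊆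 (1+ε)((1+ε)/(1−ε))^{(n+2)/2} B₂ⁿ. -/
open MeasureTheory Metric Set Real
open scoped ENNReal RealInnerProductSpace Pointwise

noncomputable section

namespace Stmt5Aux


variable {n : ℕ}

/-- diagonal map in an orthonormal basis -/
def diagMap (b : OrthonormalBasis (Fin n) ℝ (Eucl n)) (f : Fin n → ℝ) (x : Eucl n) : Eucl n :=
  ∑ i, (f i * ⟪b i, x⟫) • b i

lemma inner_diagMap_left (b : OrthonormalBasis (Fin n) ℝ (Eucl n)) (f : Fin n → ℝ)
    (x y : Eucl n) : ⟪diagMap b f x, y⟫ = ∑ i, f i * (⟪b i, x⟫ * ⟪b i, y⟫) := by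
  rw [diagMap, sum_inner]
  exact Finset.sum_congr rfl fun i _ => by rw [real_inner_smul_left]; ring

lemma inner_basis_diagMap (b : OrthonormalBasis (Fin n) ℝ (Eucl n)) (f : Fin n → ℝ)
    (x : Eucl n) (j : Fin n) : ⟪b j, diagMap b f x⟫ = f j * ⟪b j, x⟫ := by
  rw [real_inner_comm, inner_diagMap_left]
  have hb := orthonormal_iff_ite.mp b.orthonormal
  rw [Finset.sum_eq_single j]
  · rw [hb j j]; simp
  · intro i _ hij; rw [hb i j, if_neg hij]; ring
  · intro h; exact absurd (Finset.mem_univ j) h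

lemma diagMap_diagMap (b : OrthonormalBasis (Fin n) ℝ (Eucl n)) (f g : Fin n → ℝ)
    (x : Eucl n) : diagMap b f (diagMap b g x) = diagMap b (fun i => f i * g i) x := by
  conv_lhs => rw [diagMap]
  conv_rhs => rw [diagMap]
  refine Finset.sum_congr rfl fun i _ => ?_
  rw [inner_basis_diagMap b g x i]; ring_nf

lemma diagMap_one (b : OrthonormalBasis (Fin n) ℝ (Eucl n)) (x : Eucl n) :
    diagMap b (fun _ => 1) x = x := by
  have := b.sum_repr' x
  simpa [diagMap] using this

lemma diagMap_add (b : OrthonormalBasis (Fin n) ℝ (Eucl n)) (f : Fin n → ℝ) (x y : Eucl n) :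
    diagMap b f (x + y) = diagMap b f x + diagMap b f y := by
  unfold diagMap
  rw [← Finset.sum_add_distrib]
  refine Finset.sum_congr rfl fun i _ => ?_
  rw [inner_add_right, ← add_smul]; ring_nf

lemma diagMap_smul (b : OrthonormalBasis (Fin n) ℝ (Eucl n)) (f : Fin n → ℝ) (c : ℝ)
    (x : Eucl n) : diagMap b f (c • x) = c • diagMap b f x := by
  unfold diagMap
  rw [Finset.smul_sum]
  refine Finset.sum_congr rfl fun i _ => ?_
  rw [real_inner_smul_right, smul_smul]; ring_nf

lemma inner_diagMap_diagMap (b : OrthonormalBasis (Fin n) ℝ (Eucl n)) (f g : Fin n → ℝ)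
    (x : Eucl n) : ⟪diagMap b f x, diagMap b g x⟫ = ∑ i, f i * g i * ⟪b i, x⟫ ^ 2 := by
  rw [inner_diagMap_left]
  refine Finset.sum_congr rfl fun i _ => ?_
  rw [inner_basis_diagMap]; ring

lemma sum_inner_sq (b : OrthonormalBasis (Fin n) ℝ (Eucl n)) (x : Eucl n) :
    ∑ i, ⟪b i, x⟫ ^ 2 = ‖x‖ ^ 2 := by
  have h := b.sum_inner_mul_inner x x
  rw [real_inner_self_eq_norm_sq] at h
  rw [← h]
  exact Finset.sum_congr rfl fun i _ => by rw [real_inner_comm]; ring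

lemma norm_diagMap_le (b : OrthonormalBasis (Fin n) ℝ (Eucl n)) (f : Fin n → ℝ) {C : ℝ}
    (hC : 0 ≤ C) (hf : ∀ i, |f i| ≤ C) (x : Eucl n) : ‖diagMap b f x‖ ≤ C * ‖x‖ := by
  have h1 : ‖diagMap b f x‖ ^ 2 = ∑ i, f i * f i * ⟪b i, x⟫ ^ 2 := by
    rw [← real_inner_self_eq_norm_sq, inner_diagMap_diagMap]
  have h2 : ∑ i, f i * f i * ⟪b i, x⟫ ^ 2 ≤ C ^ 2 * ‖x‖ ^ 2 := by
    rw [← sum_inner_sq b x, Finset.mul_sum]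
    refine Finset.sum_le_sum fun i _ => ?_
    have : f i * f i ≤ C ^ 2 := by
      have := hf i
      nlinarith [abs_nonneg (f i), neg_abs_le (f i), le_abs_self (f i)]
    nlinarith [sq_nonneg (⟪b i, x⟫ : ℝ)]
  nlinarith [norm_nonneg (diagMap b f x), norm_nonneg x, mul_nonneg hC (norm_nonneg x)]


variable {n : ℕ}

lemma integral_ball_inner_sq_smul (θ : Eucl n) {r : ℝ} (hr : 0 < r) :
    ∫ y in closedBall (0 : Eucl n) r, ⟪θ, y⟫ ^ 2 =
      r ^ (n + 2) * ∫ y in closedBall (0 : Eucl n) 1, ⟪θ, y⟫ ^ 2 := by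
  set g : Eucl n → ℝ := fun y => ⟪θ, y⟫ ^ 2 with hg
  have key := MeasureTheory.Measure.integral_comp_smul (μ := (volume : Measure (Eucl n)))
    ((closedBall (0 : Eucl n) r).indicator g) r
  have hmem : ∀ x : Eucl n, r • x ∈ closedBall (0 : Eucl n) r ↔ x ∈ closedBall (0 : Eucl n) 1 := by
    intro x
    simp only [mem_closedBall_zero_iff, norm_smul, Real.norm_eq_abs, abs_of_pos hr]
    constructor
    · intro h; nlinarith
    · intro h; nlinarith [hr.le]
  have hind : ∀ x : Eucl n, (closedBall (0 : Eucl n) r).indicator g (r • x)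
      = (closedBall (0 : Eucl n) 1).indicator (fun x => g (r • x)) x := by
    intro x
    by_cases hx : x ∈ closedBall (0 : Eucl n) 1
    · rw [indicator_of_mem hx, indicator_of_mem ((hmem x).mpr hx)]
    · rw [indicator_of_notMem hx, indicator_of_notMem (fun h => hx ((hmem x).mp h))]
  rw [funext hind] at key
  rw [integral_indicator measurableSet_closedBall, integral_indicator measurableSet_closedBall]
    at key
  have hLHS : (∫ x in closedBall (0 : Eucl n) 1, g (r • x)) =
      r ^ 2 * ∫ y in closedBall (0 : Eucl n) 1, g y := by
    rw [← integral_const_mul]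
    refine setIntegral_congr_fun measurableSet_closedBall fun x _ => ?_
    simp only [hg, real_inner_smul_right]; ring
  rw [hLHS] at key
  have hfr : Module.finrank ℝ (Eucl n) = n := finrank_euclideanSpace_fin
  rw [hfr] at key
  have habs : |((r : ℝ) ^ n)⁻¹| = (r ^ n)⁻¹ := abs_of_pos (by positivity)
  rw [habs, smul_eq_mul] at key
  have hrn : (0:ℝ) < r ^ n := by positivity
  field_simp at key ⊢
  rw [pow_add]
  nlinarith [key]

set_option maxHeartbeats 1000000 in
lemma integral_inner_sq_basis_eq (b : OrthonormalBasis (Fin n) ℝ (Eucl n)) (i j : Fin n) :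
    ∫ y in closedBall (0 : Eucl n) 1, ⟪b i, y⟫ ^ 2 =
      ∫ y in closedBall (0 : Eucl n) 1, ⟪b j, y⟫ ^ 2 := by
  classical
  set P : Eucl n ≃ₗᵢ[ℝ] Eucl n :=
    LinearIsometryEquiv.piLpCongrLeft 2 ℝ ℝ (Equiv.swap i j) with hP
  set S : Eucl n ≃ₗᵢ[ℝ] Eucl n := (b.repr.trans P).trans b.repr.symm with hS
  have hSbi : S (b i) = b j := by
    simp only [hS, LinearIsometryEquiv.trans_apply]
    rw [b.repr_self]
    have hsingle : P (EuclideanSpace.single i (1:ℝ)) = EuclideanSpace.single j (1:ℝ) := by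
      have h := EuclideanSpace.piLpCongrLeft_single (𝕜 := ℝ) (Equiv.swap i j) i (1:ℝ)
      rw [Equiv.swap_apply_left] at h; exact h
    rw [hsingle, b.repr_symm_single]
  have hsymm : S.symm (b j) = b i := by rw [← hSbi, LinearIsometryEquiv.symm_apply_apply]
  have hmp : MeasurePreserving S volume volume := S.measurePreserving
  have hemb : MeasurableEmbedding S := S.toHomeomorph.measurableEmbedding
  have hpre : S ⁻¹' (closedBall (0 : Eucl n) 1) = closedBall (0 : Eucl n) 1 := by
    ext x
    simp [mem_closedBall_zero_iff, S.norm_map]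
  calc ∫ y in closedBall (0 : Eucl n) 1, ⟪b i, y⟫ ^ 2
      = ∫ x in S ⁻¹' (closedBall (0 : Eucl n) 1), ⟪b i, x⟫ ^ 2 := by rw [hpre]
    _ = ∫ x in S ⁻¹' (closedBall (0 : Eucl n) 1), ⟪b j, S x⟫ ^ 2 := by
        refine setIntegral_congr_fun (by rw [hpre]; exact measurableSet_closedBall) fun x _ => ?_
        rw [← hsymm]
        rw [← S.inner_map_map (S.symm (b j)) x, LinearIsometryEquiv.apply_symm_apply]
    _ = ∫ y in closedBall (0 : Eucl n) 1, ⟪b j, y⟫ ^ 2 :=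
        hmp.setIntegral_preimage_emb hemb (fun y => (⟪b j, y⟫ : ℝ) ^ 2) (closedBall 0 1)

lemma integral_inner_sq_pos (θ : Eucl n) (hθ : θ ≠ 0) :
    0 < ∫ y in closedBall (0 : Eucl n) 1, ⟪θ, y⟫ ^ 2 := by
  set f : Eucl n → ℝ := fun y => ⟪θ, y⟫ ^ 2 with hf
  have hnn : 0 ≤ᵐ[volume.restrict (closedBall (0 : Eucl n) 1)] f :=
    Filter.Eventually.of_forall fun y => sq_nonneg _
  have hcont : Continuous f := (continuous_const.inner continuous_id).pow 2
  have hint : IntegrableOn f (closedBall (0 : Eucl n) 1) volume :=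
    hcont.continuousOn.integrableOn_compact (isCompact_closedBall _ _)
  rw [setIntegral_pos_iff_support_of_nonneg_ae hnn hint]
  set N : Submodule ℝ (Eucl n) := LinearMap.ker ((innerSL ℝ θ : Eucl n →L[ℝ] ℝ) : Eucl n →ₗ[ℝ] ℝ)
    with hN
  have hNne : N ≠ ⊤ := by
    intro h
    have : θ ∈ N := h ▸ Submodule.mem_top
    rw [hN, LinearMap.mem_ker] at this
    simp only [ContinuousLinearMap.coe_coe, innerSL_apply_apply] at this
    exact hθ (inner_self_eq_zero.mp this)
  have hNzero : volume (N : Set (Eucl n)) = 0 := Measure.addHaar_submodule volume N hNne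
  have hsub : closedBall (0 : Eucl n) 1 ⊆
      (Function.support f ∩ closedBall (0 : Eucl n) 1) ∪ (N : Set (Eucl n)) := by
    intro y hy
    by_cases h : ⟪θ, y⟫ = 0
    · right
      rw [hN, SetLike.mem_coe, LinearMap.mem_ker]
      simpa using h
    · left
      refine ⟨?_, hy⟩
      simp only [Function.mem_support, hf]
      positivity
  have hball : 0 < volume (closedBall (0 : Eucl n) 1) := measure_closedBall_pos volume _ one_pos
  calc (0:ℝ≥0∞) < volume (closedBall (0 : Eucl n) 1) := hball
    _ ≤ volume ((Function.support f ∩ closedBall (0 : Eucl n) 1) ∪ (N : Set (Eucl n))) :=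
        measure_mono hsub
    _ ≤ volume (Function.support f ∩ closedBall (0 : Eucl n) 1) + volume (N : Set (Eucl n)) :=
        measure_union_le _ _
    _ = volume (Function.support f ∩ closedBall (0 : Eucl n) 1) := by rw [hNzero, add_zero]



lemma mu_facts {n : ℕ} (hn : 2 ≤ n) {lo hi : ℝ} (hlo : 0 < lo) (lam : Fin n → ℝ)
    (hlam1 : ∀ i, lo ≤ lam i) (hlam2 : ∀ i, lam i ≤ hi) :
    let α : ℝ := (∏ i, lam i) ^ ((1 : ℝ) / (2 * n))
    let μ : Fin n → ℝ := fun i => Real.sqrt (lam i) / α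
    (∀ i, 0 < μ i) ∧ (∏ i, μ i = 1) ∧ (∀ i, μ i ≤ Real.sqrt hi / Real.sqrt lo) ∧
      (∀ i, (μ i)⁻¹ ≤ Real.sqrt hi / Real.sqrt lo) ∧ (∀ i, lam i / (μ i) ^ 2 = α ^ 2) := by
  intro α μ
  have hn0 : (n : ℝ) ≠ 0 := by positivity
  have hlampos : ∀ i, 0 < lam i := fun i => lt_of_lt_of_le hlo (hlam1 i)
  have hhi : 0 < hi := lt_of_lt_of_le hlo ((hlam1 ⟨0, by omega⟩).trans (hlam2 _))
  set P : ℝ := ∏ i, lam i with hPdef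
  have hP : 0 < P := Finset.prod_pos fun i _ => hlampos i
  have hloP : lo ^ (n : ℝ) ≤ P := by
    rw [Real.rpow_natCast]
    calc lo ^ n = ∏ _i : Fin n, lo := by
          rw [Finset.prod_const, Finset.card_univ, Fintype.card_fin]
      _ ≤ P := Finset.prod_le_prod (fun i _ => hlo.le) (fun i _ => hlam1 i)
  have hPhi : P ≤ hi ^ (n : ℝ) := by
    rw [Real.rpow_natCast]
    calc P ≤ ∏ _i : Fin n, hi := Finset.prod_le_prod (fun i _ => (hlampos i).le)
          (fun i _ => hlam2 i)
      _ = hi ^ n := by rw [Finset.prod_const, Finset.card_univ, Fintype.card_fin]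
  have hexp : (n : ℝ) * ((1 : ℝ) / (2 * n)) = 1 / 2 := by field_simp
  have hαlo : Real.sqrt lo ≤ α := by
    have h1 : (lo ^ (n : ℝ)) ^ ((1 : ℝ) / (2 * n)) ≤ α :=
      Real.rpow_le_rpow (by positivity) hloP (by positivity)
    rwa [← Real.rpow_mul hlo.le, hexp, ← Real.sqrt_eq_rpow] at h1
  have hαhi : α ≤ Real.sqrt hi := by
    have h1 : α ≤ (hi ^ (n : ℝ)) ^ ((1 : ℝ) / (2 * n)) :=
      Real.rpow_le_rpow hP.le hPhi (by positivity)
    rwa [← Real.rpow_mul hhi.le, hexp, ← Real.sqrt_eq_rpow] at h1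
  have hα : 0 < α := lt_of_lt_of_le (Real.sqrt_pos.mpr hlo) hαlo
  have hμpos : ∀ i, 0 < μ i := fun i => div_pos (Real.sqrt_pos.mpr (hlampos i)) hα
  have hα2n : α ^ (2 * n) = P := by
    have : α ^ ((2 * n : ℕ) : ℝ) = P := by
      show (P ^ ((1 : ℝ) / (2 * n))) ^ ((2 * n : ℕ) : ℝ) = P
      rw [← Real.rpow_mul hP.le]
      have : (1 : ℝ) / (2 * n) * ((2 * n : ℕ) : ℝ) = 1 := by push_cast; field_simp
      rw [this, Real.rpow_one]
    rwa [Real.rpow_natCast] at this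
  have hμsq : ∀ i, (μ i) ^ 2 = lam i / α ^ 2 := by
    intro i
    rw [div_pow, Real.sq_sqrt (hlampos i).le]
  have hprodsq : (∏ i, μ i) ^ 2 = 1 := by
    rw [← Finset.prod_pow]
    calc ∏ i, (μ i) ^ 2 = ∏ i, lam i / α ^ 2 := Finset.prod_congr rfl fun i _ => hμsq i
      _ = P / (α ^ 2) ^ n := by
          rw [Finset.prod_div_distrib, Finset.prod_const, Finset.card_univ, Fintype.card_fin]
      _ = 1 := by rw [← pow_mul, hα2n]; field_simp
  have hprodpos : 0 < ∏ i, μ i := Finset.prod_pos fun i _ => hμpos i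
  have hprod : ∏ i, μ i = 1 := by nlinarith [hprodsq, hprodpos]
  refine ⟨hμpos, hprod, ?_, ?_, ?_⟩
  · intro i
    exact div_le_div₀ (Real.sqrt_nonneg hi) (Real.sqrt_le_sqrt (hlam2 i))
      (Real.sqrt_pos.mpr hlo) hαlo
  · intro i
    have : (μ i)⁻¹ = α / Real.sqrt (lam i) := by
      show (Real.sqrt (lam i) / α)⁻¹ = _
      rw [inv_div]
    rw [this]
    exact div_le_div₀ (Real.sqrt_nonneg hi) hαhi
      (Real.sqrt_pos.mpr hlo) (Real.sqrt_le_sqrt (hlam1 i))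
  · intro i
    rw [hμsq i]
    rw [div_div_eq_mul_div, mul_comm, mul_div_assoc, div_self (hlampos i).ne', mul_one]

lemma sqrt_ratio_eq {n : ℕ} (κ e1 e2 : ℝ) (hκ : 0 < κ) (he1 : 0 < e1) (he2 : 0 < e2) :
    Real.sqrt (κ * e2 ^ (n + 2)) / Real.sqrt (κ * e1 ^ (n + 2)) =
      (e2 / e1) ^ (((n : ℝ) + 2) / 2) := by
  rw [← Real.sqrt_div (by positivity)]
  have h1 : κ * e2 ^ (n + 2) / (κ * e1 ^ (n + 2)) = (e2 / e1) ^ (n + 2) := by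
    rw [div_pow]; field_simp
  rw [h1, Real.sqrt_eq_rpow, ← Real.rpow_natCast (e2 / e1) (n + 2),
    ← Real.rpow_mul (by positivity)]
  congr 1
  push_cast; ring


end Stmt5Aux

open Stmt5Aux

set_option maxHeartbeats 2000000 in
/-- existence of the isotropic position for a body close to the
unit ball, with quantitative bounds. -/
theorem stmt_5 (n : ℕ) (hn : 2 ≤ n) (ε : ℝ) (hε : ε ∈ Ioo (0 : ℝ) 1)
    (K : Set (Eucl n)) (hK : IsSymmConvexBody K)
    (h1 : closedBall (0 : Eucl n) (1 - ε) ⊆ K)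
    (h2 : K ⊆ closedBall (0 : Eucl n) (1 + ε)) :
    ∃ T : Eucl n ≃L[ℝ] Eucl n,
      LinearMap.IsSymmetric (T : Eucl n →ₗ[ℝ] Eucl n) ∧
      (∀ x : Eucl n, x ≠ 0 → 0 < ⟪T x, x⟫) ∧
      LinearMap.det (T : Eucl n →ₗ[ℝ] Eucl n) = 1 ∧
      ‖(T : Eucl n →L[ℝ] Eucl n)‖ ≤ ((1 + ε) / (1 - ε)) ^ (((n : ℝ) + 2) / 2) ∧
      ‖(T.symm : Eucl n →L[ℝ] Eucl n)‖ ≤ ((1 + ε) / (1 - ε)) ^ (((n : ℝ) + 2) / 2) ∧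
      (∃ c : ℝ, 0 < c ∧ ∀ x : Eucl n,
        (∫ y in T.symm '' K, ⟪x, y⟫ ^ 2) = c * ‖x‖ ^ 2) ∧
      closedBall (0 : Eucl n) ((1 - ε) * ((1 - ε) / (1 + ε)) ^ (((n : ℝ) + 2) / 2)) ⊆
        T.symm '' K ∧
      T.symm '' K ⊆
        closedBall (0 : Eucl n) ((1 + ε) * ((1 + ε) / (1 - ε)) ^ (((n : ℝ) + 2) / 2)) := by
  classical
  obtain ⟨hε0, hε1⟩ := hε
  obtain ⟨-, hKcomp, -, -⟩ := hK
  have hKmeas : MeasurableSet K := hKcomp.measurableSet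
  have he1 : (0:ℝ) < 1 - ε := by linarith
  have he2 : (0:ℝ) < 1 + ε := by linarith
  -- integrability facts
  have hint : ∀ (x : Eucl n) (s : Set (Eucl n)), IsCompact s →
      IntegrableOn (fun y => (⟪x, y⟫ : ℝ) ^ 2) s volume := fun x s hs =>
    (((continuous_const.inner continuous_id).pow 2).continuousOn).integrableOn_compact hs
  have hintv : ∀ x : Eucl n, IntegrableOn (fun y => (⟪x, y⟫ : ℝ) • y) K volume := fun x =>
    ((by fun_prop : Continuous fun y : Eucl n => (⟪x, y⟫ : ℝ) • y).continuousOn).integrableOn_compact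
      hKcomp
  -- the covariance operator M
  set M : Eucl n →ₗ[ℝ] Eucl n :=
    { toFun := fun x => ∫ y in K, (⟪x, y⟫ : ℝ) • y
      map_add' := by
        intro x x'
        rw [← integral_add (hintv x) (hintv x')]
        refine setIntegral_congr_fun hKmeas fun y _ => ?_
        rw [inner_add_left, add_smul]
      map_smul' := by
        intro c x
        simp only [RingHom.id_apply]
        rw [← integral_smul]
        refine setIntegral_congr_fun hKmeas fun y _ => ?_
        rw [real_inner_smul_left, smul_smul] } with hMdef
  have hMapply : ∀ x z : Eucl n, ⟪M x, z⟫ = ∫ y in K, ⟪x, y⟫ * ⟪z, y⟫ := by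
    intro x z
    rw [real_inner_comm]
    have : (⟪z, M x⟫ : ℝ) = ∫ y in K, ⟪z, (⟪x, y⟫ : ℝ) • y⟫ := (integral_inner (hintv x) z).symm
    rw [this]
    refine setIntegral_congr_fun hKmeas fun y _ => ?_
    rw [real_inner_smul_right]
  have hMsym : M.IsSymmetric := by
    intro x z
    rw [hMapply, real_inner_comm, hMapply]
    exact setIntegral_congr_fun hKmeas fun y _ => by ring
  have hMq : ∀ x : Eucl n, ⟪M x, x⟫ = ∫ y in K, ⟪x, y⟫ ^ 2 := by
    intro x
    rw [hMapply]
    exact setIntegral_congr_fun hKmeas fun y _ => by ring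
  have hfr : Module.finrank ℝ (Eucl n) = n := finrank_euclideanSpace_fin
  set b : OrthonormalBasis (Fin n) ℝ (Eucl n) := hMsym.eigenvectorBasis hfr with hbdef
  set lam : Fin n → ℝ := hMsym.eigenvalues hfr with hlamdef
  have hMb : ∀ i, M (b i) = lam i • b i := fun i => hMsym.apply_eigenvectorBasis hfr i
  have hbnorm : ∀ i, ‖b i‖ = 1 := fun i => b.orthonormal.1 i
  have hlamq : ∀ i, lam i = ∫ y in K, ⟪b i, y⟫ ^ 2 := by
    intro i
    rw [← hMq (b i), hMb i, real_inner_smul_left, real_inner_self_eq_norm_sq, hbnorm i]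
    ring
  -- the constant κ
  have hn0 : 0 < n := by omega
  set κ : ℝ := ∫ y in closedBall (0 : Eucl n) 1, ⟪b ⟨0, hn0⟩, y⟫ ^ 2 with hκdef
  have hκi : ∀ i, (∫ y in closedBall (0 : Eucl n) 1, ⟪b i, y⟫ ^ 2) = κ := fun i =>
    integral_inner_sq_basis_eq b i ⟨0, hn0⟩
  have hbne : (b ⟨0, hn0⟩ : Eucl n) ≠ 0 := by
    intro h
    have := hbnorm ⟨0, hn0⟩
    rw [h, norm_zero] at this
    norm_num at this
  have hκpos : 0 < κ := integral_inner_sq_pos _ hbne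
  -- eigenvalue bounds
  set lo : ℝ := κ * (1 - ε) ^ (n + 2) with hlodef
  set hi : ℝ := κ * (1 + ε) ^ (n + 2) with hhidef
  have hlopos : 0 < lo := by positivity
  have hnn : ∀ i : Fin n, 0 ≤ᵐ[volume.restrict (closedBall (0 : Eucl n) (1 + ε))]
      fun y => (⟪b i, y⟫ : ℝ) ^ 2 := fun i => Filter.Eventually.of_forall fun y => sq_nonneg _
  have hnnK : ∀ i : Fin n, 0 ≤ᵐ[volume.restrict K] fun y => (⟪b i, y⟫ : ℝ) ^ 2 :=
    fun i => Filter.Eventually.of_forall fun y => sq_nonneg _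
  have hlam_lo : ∀ i, lo ≤ lam i := by
    intro i
    rw [hlamq i, hlodef]
    calc κ * (1 - ε) ^ (n + 2) = ∫ y in closedBall (0 : Eucl n) (1 - ε), ⟪b i, y⟫ ^ 2 := by
          rw [integral_ball_inner_sq_smul (b i) he1, hκi i]; ring
      _ ≤ ∫ y in K, ⟪b i, y⟫ ^ 2 :=
          setIntegral_mono_set (hint (b i) K hKcomp) (hnnK i) (HasSubset.Subset.eventuallyLE h1)
  have hlam_hi : ∀ i, lam i ≤ hi := by
    intro i
    rw [hlamq i, hhidef]
    calc (∫ y in K, ⟪b i, y⟫ ^ 2)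
        ≤ ∫ y in closedBall (0 : Eucl n) (1 + ε), ⟪b i, y⟫ ^ 2 :=
          setIntegral_mono_set (hint (b i) _ (isCompact_closedBall _ _)) (hnn i)
            (HasSubset.Subset.eventuallyLE h2)
      _ = κ * (1 + ε) ^ (n + 2) := by rw [integral_ball_inner_sq_smul (b i) he2, hκi i]; ring
  have hlampos : ∀ i, 0 < lam i := fun i => lt_of_lt_of_le hlopos (hlam_lo i)
  -- the normalizing constant and eigenvalues of T
  set α : ℝ := (∏ i, lam i) ^ ((1 : ℝ) / (2 * n)) with hαdef
  set μl : Fin n → ℝ := fun i => Real.sqrt (lam i) / α with hμldef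
  obtain ⟨hμpos, hμprod, hμle, hμinvle, hμc⟩ := mu_facts hn hlopos lam hlam_lo hlam_hi
  have hαpos : 0 < α := Real.rpow_pos_of_pos (Finset.prod_pos fun i _ => hlampos i) _
  set Bd : ℝ := ((1 + ε) / (1 - ε)) ^ (((n : ℝ) + 2) / 2) with hBddef
  have hBdeq : Real.sqrt hi / Real.sqrt lo = Bd := sqrt_ratio_eq κ (1 - ε) (1 + ε) hκpos he1 he2
  have hBdpos : 0 < Bd := Real.rpow_pos_of_pos (by positivity) _
  have hμleBd : ∀ i, |μl i| ≤ Bd := fun i => by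
    rw [abs_of_pos (hμpos i), ← hBdeq]; exact hμle i
  set μinv : Fin n → ℝ := fun i => (μl i)⁻¹ with hμinvdef
  have hμinvleBd : ∀ i, |μinv i| ≤ Bd := fun i => by
    rw [hμinvdef, abs_of_pos (inv_pos.mpr (hμpos i))]
    rw [← hBdeq]; exact hμinvle i
  -- construction of T
  set φlin : Eucl n →ₗ[ℝ] Eucl n :=
    { toFun := diagMap b μl
      map_add' := diagMap_add b μl
      map_smul' := fun c x => diagMap_smul b μl c x } with hφdef
  set ψlin : Eucl n →ₗ[ℝ] Eucl n :=
    { toFun := diagMap b μinv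
      map_add' := diagMap_add b μinv
      map_smul' := fun c x => diagMap_smul b μinv c x } with hψdef
  have hcomp1 : ∀ x, diagMap b μl (diagMap b μinv x) = x := by
    intro x
    rw [diagMap_diagMap]
    have h : (fun i => μl i * μinv i) = fun _ => (1 : ℝ) :=
      funext fun i => mul_inv_cancel₀ (hμpos i).ne'
    rw [h, diagMap_one]
  have hcomp2 : ∀ x, diagMap b μinv (diagMap b μl x) = x := by
    intro x
    rw [diagMap_diagMap]
    have h : (fun i => μinv i * μl i) = fun _ => (1 : ℝ) :=
      funext fun i => inv_mul_cancel₀ (hμpos i).ne'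
    rw [h, diagMap_one]
  set Te : Eucl n ≃ₗ[ℝ] Eucl n := LinearEquiv.ofLinear φlin ψlin
    (LinearMap.ext fun x => hcomp1 x) (LinearMap.ext fun x => hcomp2 x) with hTedef
  set T : Eucl n ≃L[ℝ] Eucl n := Te.toContinuousLinearEquiv with hTdef
  have hTapp : ∀ x, T x = diagMap b μl x := fun x => rfl
  have hTsymmapp : ∀ x, T.symm x = diagMap b μinv x := fun x => rfl
  -- diagonal matrix representations
  have hdiagbasis : ∀ (f : Fin n → ℝ) (j : Fin n), diagMap b f (b j) = f j • b j := by
    intro f j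
    rw [diagMap, Finset.sum_eq_single j]
    · rw [orthonormal_iff_ite.mp b.orthonormal j j]; simp
    · intro i _ hij
      rw [orthonormal_iff_ite.mp b.orthonormal i j, if_neg hij]
      simp
    · intro h; exact absurd (Finset.mem_univ j) h
  have hmat : ∀ (f : Fin n → ℝ) (L : Eucl n →ₗ[ℝ] Eucl n), (∀ j, L (b j) = f j • b j) →
      LinearMap.det L = ∏ i, f i := by
    intro f L hL
    rw [← LinearMap.det_toMatrix b.toBasis, ← Matrix.det_diagonal]
    congr 1
    ext i j
    rw [LinearMap.toMatrix_apply, b.coe_toBasis, hL j, b.coe_toBasis_repr_apply,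
      _root_.map_smul, b.repr_self]
    by_cases hij : i = j
    · subst hij; simp [Matrix.diagonal]
    · simp [Matrix.diagonal, hij, Ne.symm hij, EuclideanSpace.single_apply]
  have hdetφ : LinearMap.det φlin = 1 := by
    rw [hmat μl φlin fun j => hdiagbasis μl j]; exact hμprod
  have hdetψ : LinearMap.det ψlin = 1 := by
    rw [hmat μinv ψlin fun j => hdiagbasis μinv j]
    rw [hμinvdef]
    rw [Finset.prod_inv_distrib]
    rw [hμprod]; norm_num
  refine ⟨T, ?_, ?_, ?_, ?_, ?_, ⟨α ^ 2, by positivity, ?_⟩, ?_, ?_⟩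
  -- symmetry
  · intro x y
    show (⟪diagMap b μl x, y⟫ : ℝ) = ⟪x, diagMap b μl y⟫
    rw [inner_diagMap_left, real_inner_comm, inner_diagMap_left]
    exact Finset.sum_congr rfl fun i _ => by ring
  -- positivity
  · intro x hx
    show (0 : ℝ) < ⟪diagMap b μl x, x⟫
    rw [inner_diagMap_left]
    have hexists : ∃ i, (⟪b i, x⟫ : ℝ) ≠ 0 := by
      by_contra hcon
      push_neg at hcon
      apply hx
      have := b.sum_repr' x
      rw [← this]
      exact Finset.sum_eq_zero fun i _ => by rw [hcon i, zero_smul]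
    obtain ⟨i0, hi0⟩ := hexists
    refine Finset.sum_pos' (fun i _ => ?_) ⟨i0, Finset.mem_univ i0, ?_⟩
    · have := (hμpos i).le
      nlinarith [mul_self_nonneg (⟪b i, x⟫ : ℝ)]
    · exact mul_pos (hμpos i0) (mul_self_pos.mpr hi0)
  -- determinant
  · have : (T : Eucl n →ₗ[ℝ] Eucl n) = φlin := rfl
    rw [this, hdetφ]
  -- norm of T
  · refine ContinuousLinearMap.opNorm_le_bound _ hBdpos.le fun x => ?_
    have : (T : Eucl n →L[ℝ] Eucl n) x = diagMap b μl x := rfl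
    rw [this]
    exact norm_diagMap_le b μl hBdpos.le hμleBd x
  -- norm of T.symm
  · refine ContinuousLinearMap.opNorm_le_bound _ hBdpos.le fun x => ?_
    have : (T.symm : Eucl n →L[ℝ] Eucl n) x = diagMap b μinv x := rfl
    rw [this]
    exact norm_diagMap_le b μinv hBdpos.le hμinvleBd x
  -- isotropy
  · intro x
    have hfd : ∀ y ∈ K, HasFDerivWithinAt (⇑T.symm)
        ((T.symm : Eucl n →L[ℝ] Eucl n)) K y := fun y _ =>
      T.symm.hasFDerivAt.hasFDerivWithinAt
    have key := integral_image_eq_integral_abs_det_fderiv_smul volume hKmeas hfd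
      T.symm.injective.injOn (fun y => (⟪x, y⟫ : ℝ) ^ 2)
    have hdet : ((T.symm : Eucl n →L[ℝ] Eucl n) : Eucl n →ₗ[ℝ] Eucl n).det = 1 := hdetψ
    rw [key]
    have hstep1 : (∫ y in K, |((T.symm : Eucl n →L[ℝ] Eucl n)).det| • (⟪x, T.symm y⟫ : ℝ) ^ 2)
        = ∫ y in K, (⟪diagMap b μinv x, y⟫ : ℝ) ^ 2 := by
      refine setIntegral_congr_fun hKmeas fun y _ => ?_
      have habs : |((T.symm : Eucl n →L[ℝ] Eucl n)).det| = 1 := by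
        rw [show ((T.symm : Eucl n →L[ℝ] Eucl n)).det = LinearMap.det ψlin from rfl, hdetψ,
          abs_one]
      rw [habs, one_smul, hTsymmapp]
      have : (⟪x, diagMap b μinv y⟫ : ℝ) = ⟪diagMap b μinv x, y⟫ := by
        rw [real_inner_comm, inner_diagMap_left, inner_diagMap_left]
        exact Finset.sum_congr rfl fun i _ => by ring
      rw [this]
    rw [hstep1, ← hMq]
    have hMdiag : M (diagMap b μinv x) = diagMap b (fun i => lam i * μinv i) x := by
      rw [diagMap, map_sum, diagMap]
      refine Finset.sum_congr rfl fun i _ => ?_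
      rw [_root_.map_smul, hMb i, smul_smul]
      congr 1
      show μinv i * ⟪b i, x⟫ * lam i = lam i * μinv i * ⟪b i, x⟫
      ring
    rw [hMdiag]
    have hinner : (⟪diagMap b (fun i => lam i * μinv i) x, diagMap b μinv x⟫ : ℝ)
        = ∑ i, (lam i * μinv i) * μinv i * ⟪b i, x⟫ ^ 2 := inner_diagMap_diagMap b _ _ x
    rw [hinner]
    have hterm : ∀ i, (lam i * μinv i) * μinv i = α ^ 2 := by
      intro i
      have h : lam i / μl i ^ 2 = α ^ 2 := hμc i
      rw [← h]
      show lam i * (μl i)⁻¹ * (μl i)⁻¹ = lam i / μl i ^ 2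
      rw [pow_two, div_eq_mul_inv, mul_inv, ← mul_assoc]
    calc (∑ i, (lam i * μinv i) * μinv i * ⟪b i, x⟫ ^ 2)
        = ∑ i, α ^ 2 * ⟪b i, x⟫ ^ 2 := Finset.sum_congr rfl fun i _ => by rw [hterm i]
      _ = α ^ 2 * ∑ i, ⟪b i, x⟫ ^ 2 := by rw [Finset.mul_sum]
      _ = α ^ 2 * ‖x‖ ^ 2 := by rw [sum_inner_sq b x]
  -- lower inclusion
  · intro x hx
    rw [mem_closedBall_zero_iff] at hx
    have hswap : ((1 - ε) / (1 + ε) : ℝ) ^ (((n : ℝ) + 2) / 2) = Bd⁻¹ := by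
      rw [hBddef, ← Real.inv_rpow (by positivity), inv_div]
    rw [hswap] at hx
    have hTx : ‖T x‖ ≤ 1 - ε := by
      rw [hTapp]
      calc ‖diagMap b μl x‖ ≤ Bd * ‖x‖ := norm_diagMap_le b μl hBdpos.le hμleBd x
        _ ≤ Bd * ((1 - ε) * Bd⁻¹) := by
            exact mul_le_mul_of_nonneg_left hx hBdpos.le
        _ = 1 - ε := by field_simp
    have hTxK : T x ∈ K := h1 (mem_closedBall_zero_iff.mpr hTx)
    exact ⟨T x, hTxK, T.symm_apply_apply x⟩
  -- upper inclusion
  · rintro y ⟨x, hxK, rfl⟩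
    rw [mem_closedBall_zero_iff]
    have hxball : ‖x‖ ≤ 1 + ε := mem_closedBall_zero_iff.mp (h2 hxK)
    rw [hTsymmapp]
    calc ‖diagMap b μinv x‖ ≤ Bd * ‖x‖ := norm_diagMap_le b μinv hBdpos.le hμinvleBd x
      _ ≤ Bd * (1 + ε) := mul_le_mul_of_nonneg_left hxball hBdpos.le
      _ = (1 + ε) * Bd := mul_comm _ _

end
end

section
/- Let K ⊂ ℝ² be an origin-symmetric convex body, let R > 0, and write h_K = R + ω on the unit circle S¹. Let e ∈ S¹ and ϑ ∈ (0, π/2), and assume h_K(e) ≤ R cos ϑ. For t ∈ ℝ let e′(t) denote the unit vector obtained by rotating e clockwise by angle t (so e′(t) = (cos t) e − (sin t) e⊥ where e⊥ is e rotated counterclockwise by π/2). Then |ω(e)| ≤ (35/ϑ) ∫_{ϑ/5}^{ϑ} |ω(e′(t))| dt. -/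
open MeasureTheory Metric Set Real
open scoped ENNReal RealInnerProductSpace Pointwise

noncomputable section

/-- `e` rotated counterclockwise by `π/2`. -/
def eperp (e : Eucl 2) : Eucl 2 :=
  (EuclideanSpace.equiv (Fin 2) ℝ).symm ![-(e 1), e 0]

/-- The unit vector obtained from `e` by rotating clockwise by the angle `t`. -/
def eRot (e : Eucl 2) (t : ℝ) : Eucl 2 :=
  Real.cos t • e - Real.sin t • eperp e

/-- The key vector identity: `e + eRot e (2t) = (2 cos t) • eRot e t`. -/
lemma eRot_double (e : Eucl 2) (t : ℝ) :
    e + eRot e (2 * t) = (2 * Real.cos t) • eRot e t := by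
  unfold eRot
  rw [Real.cos_two_mul, Real.sin_two_mul]
  module

set_option maxHeartbeats 1600000 in
/-- the planar maximal-function lemma (Lemma 5.1). -/
theorem stmt_6 (K : Set (Eucl 2)) (hK : IsSymmConvexBody K) (R : ℝ) (hR : 0 < R)
    (e : Eucl 2) (he : e ∈ sphere (0 : Eucl 2) 1) (ϑ : ℝ) (hϑ : ϑ ∈ Ioo 0 (π / 2))
    (hsupp : suppFn K e ≤ R * Real.cos ϑ) :
    |suppFn K e - R| ≤ (35 / ϑ) * ∫ t in (ϑ / 5)..ϑ, |suppFn K (eRot e t) - R| := by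
  obtain ⟨hconv, hcomp, hint, hsymm⟩ := hK
  obtain ⟨ϑpos, ϑlt⟩ := hϑ
  have hne : K.Nonempty := hint.mono interior_subset
  -- basic facts about the support function
  have hcont : ∀ θ : Eucl 2, Continuous fun x : Eucl 2 => ⟪x, θ⟫ :=
    fun θ => continuous_id.inner continuous_const
  have hbdd : ∀ θ : Eucl 2, BddAbove ((fun x => ⟪x, θ⟫) '' K) :=
    fun θ => (hcomp.image (hcont θ)).bddAbove
  have hmem : ∀ (θ : Eucl 2), ∀ x ∈ K, ⟪x, θ⟫ ≤ suppFn K θ :=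
    fun θ x hx => le_csSup (hbdd θ) ⟨x, hx, rfl⟩
  have hadd : ∀ u v : Eucl 2, suppFn K (u + v) ≤ suppFn K u + suppFn K v := by
    intro u v
    apply csSup_le (hne.image _)
    rintro y ⟨x, hx, rfl⟩
    simp only
    rw [inner_add_right]
    exact add_le_add (hmem u x hx) (hmem v x hx)
  have hsmul : ∀ (c : ℝ) (u : Eucl 2), 0 < c → c * suppFn K u ≤ suppFn K (c • u) := by
    intro c u hc
    rw [mul_comm, ← le_div_iff₀ hc]
    apply csSup_le (hne.image _)
    rintro y ⟨x, hx, rfl⟩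
    simp only
    rw [le_div_iff₀ hc, mul_comm, ← real_inner_smul_right]
    exact hmem _ x hx
  -- continuity of the support function
  obtain ⟨M, hM⟩ := hcomp.isBounded.exists_norm_le
  have hlip : ∀ u v : Eucl 2, suppFn K u - suppFn K v ≤ (max M 0) * ‖u - v‖ := by
    intro u v
    rw [sub_le_iff_le_add]
    apply csSup_le (hne.image _)
    rintro y ⟨x, hx, rfl⟩
    simp only
    have h1 : ⟪x, u⟫ = ⟪x, v⟫ + ⟪x, u - v⟫ := by rw [← inner_add_right]; congr 1; abel
    have h2 : ⟪x, u - v⟫ ≤ ‖x‖ * ‖u - v‖ := real_inner_le_norm x (u - v)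
    have h3 : ‖x‖ * ‖u - v‖ ≤ (max M 0) * ‖u - v‖ :=
      mul_le_mul_of_nonneg_right ((hM x hx).trans (le_max_left _ _)) (norm_nonneg _)
    have := hmem v x hx
    linarith
  have hscont : Continuous (suppFn K) := by
    have : LipschitzWith (Real.toNNReal (max M 0)) (suppFn K) := by
      apply LipschitzWith.of_dist_le_mul
      intro u v
      rw [Real.dist_eq, dist_eq_norm, Real.coe_toNNReal _ (le_max_right M 0), abs_sub_le_iff]
      exact ⟨hlip u v, by simpa [norm_sub_rev] using hlip v u⟩
    exact this.continuous
  have heRotCont : Continuous (eRot e) :=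
    (Real.continuous_cos.smul continuous_const).sub (Real.continuous_sin.smul continuous_const)
  set g : ℝ → ℝ := fun t => |suppFn K (eRot e t) - R| with hgdef
  have hgcont : Continuous g := ((hscont.comp heRotCont).sub continuous_const).abs
  have hgnonneg : ∀ t, 0 ≤ g t := fun t => abs_nonneg _
  set h : ℝ := suppFn K e with hhdef
  -- the key pointwise inequality
  have hkey : ∀ t ∈ Icc (ϑ / 5) (ϑ / 2), R - h - R * t ^ 2 ≤ g (2 * t) + 2 * g t := by
    intro t ⟨ht1, ht2⟩
    have htpos : 0 < t := lt_of_lt_of_le (by linarith) ht1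
    have htlt : t < π / 2 := by linarith
    have hct : 0 < Real.cos t := Real.cos_pos_of_mem_Ioo ⟨by linarith [Real.pi_pos], htlt⟩
    have hct1 : Real.cos t ≤ 1 := Real.cos_le_one t
    have hcq : 1 - t ^ 2 / 2 ≤ Real.cos t := Real.one_sub_sq_div_two_le_cos
    set f1 : ℝ := suppFn K (eRot e t)
    set f2 : ℝ := suppFn K (eRot e (2 * t))
    have key : 2 * Real.cos t * f1 ≤ h + f2 := by
      calc 2 * Real.cos t * f1 ≤ suppFn K ((2 * Real.cos t) • eRot e t) :=
            hsmul _ _ (by positivity)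
        _ = suppFn K (e + eRot e (2 * t)) := by rw [eRot_double]
        _ ≤ h + f2 := hadd _ _
    have habs1 : -(Real.cos t * (f1 - R)) ≤ |f1 - R| := by
      calc -(Real.cos t * (f1 - R)) = Real.cos t * (-(f1 - R)) := by ring
        _ ≤ Real.cos t * |f1 - R| :=
            mul_le_mul_of_nonneg_left (neg_le_abs _) hct.le
        _ ≤ 1 * |f1 - R| := mul_le_mul_of_nonneg_right hct1 (abs_nonneg _)
        _ = |f1 - R| := one_mul _
    have habs2 : f2 - R ≤ |f2 - R| := le_abs_self _
    have hloss : 2 * R * (1 - Real.cos t) ≤ R * t ^ 2 := by nlinarith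
    have hg1 : g t = |f1 - R| := rfl
    have hg2 : g (2 * t) = |f2 - R| := rfl
    rw [hg1, hg2]
    nlinarith [key, habs1, habs2, hloss]
  -- integrability
  have hgInt : ∀ a b : ℝ, IntervalIntegrable g volume a b :=
    fun a b => hgcont.intervalIntegrable a b
  have hgdblcont : Continuous fun t : ℝ => g (2 * t) :=
    hgcont.comp (continuous_const.mul continuous_id)
  have hg2Int : IntervalIntegrable (fun t => g (2 * t) + 2 * g t) volume (ϑ / 5) (ϑ / 2) :=
    (hgdblcont.add (continuous_const.mul hgcont)).intervalIntegrable _ _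
  have hlhsInt : IntervalIntegrable (fun t => R - h - R * t ^ 2) volume (ϑ / 5) (ϑ / 2) :=
    (continuous_const.sub (continuous_const.mul (continuous_pow 2))).intervalIntegrable _ _
  have hab : ϑ / 5 ≤ ϑ / 2 := by linarith
  -- integrate the pointwise inequality
  have hstep : (∫ t in (ϑ / 5)..(ϑ / 2), (R - h - R * t ^ 2)) ≤
      ∫ t in (ϑ / 5)..(ϑ / 2), (g (2 * t) + 2 * g t) :=
    intervalIntegral.integral_mono_on hab hlhsInt hg2Int hkey
  -- evaluate the left side
  set I : ℝ := ∫ t in (ϑ / 5)..ϑ, g t with hIdef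
  have hInonneg : 0 ≤ I :=
    intervalIntegral.integral_nonneg (by linarith) (fun x _ => hgnonneg x)
  have hLHS : (∫ t in (ϑ / 5)..(ϑ / 2), (R - h - R * t ^ 2)) =
      (R - h) * (ϑ / 2 - ϑ / 5) - R * (((ϑ / 2) ^ 3 - (ϑ / 5) ^ 3) / 3) := by
    rw [intervalIntegral.integral_sub (intervalIntegrable_const)
      (Continuous.intervalIntegrable (u := fun t : ℝ => R * t ^ 2) (continuous_const.mul (continuous_pow 2)) _ _),
      intervalIntegral.integral_const, intervalIntegral.integral_const_mul, integral_pow]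
    simp only [smul_eq_mul]
    push_cast
    ring
  -- bound the right side
  have hsub1 : (∫ t in (2 * (ϑ / 5))..(2 * (ϑ / 2)), g t) ≤ I := by
    apply intervalIntegral.integral_mono_interval (by linarith) (by linarith) (by linarith)
      (Filter.Eventually.of_forall fun x => hgnonneg x) (hgInt _ _)
  have hsub2 : (∫ t in (ϑ / 5)..(ϑ / 2), g t) ≤ I := by
    apply intervalIntegral.integral_mono_interval (le_refl _) hab (by linarith)
      (Filter.Eventually.of_forall fun x => hgnonneg x) (hgInt _ _)
  have hRHS : (∫ t in (ϑ / 5)..(ϑ / 2), (g (2 * t) + 2 * g t)) ≤ (5 / 2) * I := by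
    rw [intervalIntegral.integral_add
      (hgdblcont.intervalIntegrable _ _)
      (Continuous.intervalIntegrable (u := fun t : ℝ => 2 * g t) (continuous_const.mul hgcont) _ _),
      intervalIntegral.integral_const_mul,
      intervalIntegral.integral_comp_mul_left g (two_ne_zero)]
    have := hsub1
    have := hsub2
    simp only [smul_eq_mul]
    linarith
  -- Jordan's inequality lower bound for δ = R - h
  have hsin : ϑ / π ≤ Real.sin (ϑ / 2) := by
    have := Real.mul_le_sin (x := ϑ / 2) (by linarith) (by linarith)
    calc ϑ / π = 2 / π * (ϑ / 2) := by field_simp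
      _ ≤ Real.sin (ϑ / 2) := this
  have hcosϑ : Real.cos ϑ = 1 - 2 * Real.sin (ϑ / 2) ^ 2 := by
    have h2 := Real.cos_two_mul (ϑ / 2)
    have h3 := Real.sin_sq_add_cos_sq (ϑ / 2)
    have h4 : 2 * (ϑ / 2) = ϑ := by ring
    rw [h4] at h2
    linarith
  have hπpos : (0 : ℝ) < π := Real.pi_pos
  have hδlow : 2 * R * ϑ ^ 2 / π ^ 2 ≤ R - h := by
    have hsq : (ϑ / π) ^ 2 ≤ Real.sin (ϑ / 2) ^ 2 := by
      apply pow_le_pow_left₀ (by positivity) hsin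
    have : h ≤ R * (1 - 2 * Real.sin (ϑ / 2) ^ 2) := by rw [← hcosϑ]; exact hsupp
    have hfinal : R * (2 * (ϑ / π) ^ 2) ≤ R * (2 * Real.sin (ϑ / 2) ^ 2) := by
      apply mul_le_mul_of_nonneg_left (by linarith) hR.le
    have hdiv : R * (2 * (ϑ / π) ^ 2) = 2 * R * ϑ ^ 2 / π ^ 2 := by
      field_simp
    linarith
  have hδpos : 0 < R - h := lt_of_lt_of_le (by positivity) hδlow
  -- final computation
  have hπlt : π < 3.15 := Real.pi_lt_d2
  have hπsq : π ^ 2 < 9.9225 := by nlinarith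
  have hmain : (R - h) * (ϑ / 2 - ϑ / 5) - R * (((ϑ / 2) ^ 3 - (ϑ / 5) ^ 3) / 3) ≤
      (5 / 2) * I := by rw [← hLHS]; linarith
  have hRϑ2 : R * ϑ ^ 2 ≤ (R - h) * π ^ 2 / 2 := by
    rw [div_le_iff₀ (by positivity)] at hδlow
    linarith
  have habs : |h - R| = R - h := by rw [abs_of_neg (by linarith)]; ring
  rw [habs, div_mul_eq_mul_div, le_div_iff₀ ϑpos]
  have e1 : ϑ * (R * ϑ ^ 2) ≤ ϑ * ((R - h) * π ^ 2 / 2) :=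
    mul_le_mul_of_nonneg_left hRϑ2 ϑpos.le
  have e2 : ((R - h) * ϑ) * π ^ 2 ≤ ((R - h) * ϑ) * 9.9225 :=
    mul_le_mul_of_nonneg_left hπsq.le (mul_pos hδpos ϑpos).le
  nlinarith [hmain, hInonneg, e1, e2]

end
end

section
/- For every n ≥ 2 there is a constant C = C(n) > 0 with the following property. Let K ⊂ ℝⁿ be a convex body containing the origin in its interior, let R > 0, and write h_K = R + ω on S^{n−1}. Let e ∈ S^{n−1} and ϑ ∈ (0, π/2), and assume h_K(e) ≤ R cos ϑ. Then |ω(e)| ≤ C · σ(S_ϑ(e))^{−1} ∫_{S_ϑ(e)} |ω(e′)| dσ(e′). -/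
open MeasureTheory Metric Set Real
open scoped ENNReal RealInnerProductSpace Pointwise

noncomputable section

/-- The rotation-invariant probability measure on the unit sphere `S^{n-1}`
(normalized `(n-1)`-dimensional Hausdorff measure). -/
def sphσ (n : ℕ) : Measure (Eucl n) :=
  (μH[(n : ℝ) - 1] (sphere (0 : Eucl n) 1))⁻¹ •
    (μH[(n : ℝ) - 1]).restrict (sphere (0 : Eucl n) 1)

/-- The spherical cap `S_ϑ(e) = {x ∈ S^{n-1} : ⟨e,x⟩ ≥ cos ϑ}`. -/
def cap {n : ℕ} (e : Eucl n) (ϑ : ℝ) : Set (Eucl n) :=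
  {x ∈ sphere (0 : Eucl n) 1 | Real.cos ϑ ≤ ⟪e, x⟫}

open scoped NNReal

section dev
set_option maxHeartbeats 1000000
-- trig lemmas
lemma abs_sin_nat_mul_le (k : ℕ) (t : ℝ) : |Real.sin (k * t)| ≤ k * |Real.sin t| := by
  induction k with
  | zero => simp
  | succ k ih =>
    have h : ((k:ℝ)+1) * t = k*t + t := by ring
    rw [Nat.cast_succ, h, Real.sin_add]
    calc |Real.sin (k*t) * Real.cos t + Real.cos (k*t) * Real.sin t|
        ≤ |Real.sin (k*t) * Real.cos t| + |Real.cos (k*t) * Real.sin t| := abs_add_le _ _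
      _ ≤ |Real.sin (k*t)| * 1 + 1 * |Real.sin t| := by
          rw [abs_mul, abs_mul]
          gcongr
          · exact Real.abs_cos_le_one _
          · exact Real.abs_cos_le_one _
      _ ≤ k * |Real.sin t| + 1 * |Real.sin t| := by rw [mul_one]; gcongr
      _ = ((k:ℝ)+1) * |Real.sin t| := by ring

lemma one_sub_cos_eq (t : ℝ) : 1 - Real.cos t = 2 * Real.sin (t/2)^2 := by
  have h1 := Real.cos_two_mul (t/2)
  have h2 := Real.sin_sq_add_cos_sq (t/2)
  rw [show 2 * (t/2) = t by ring] at h1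
  linarith

lemma one_sub_cos_nat_mul_le (k : ℕ) (t : ℝ) :
    1 - Real.cos (k * t) ≤ (k:ℝ)^2 * (1 - Real.cos t) := by
  rw [one_sub_cos_eq, one_sub_cos_eq]
  have h : |Real.sin ((k*t)/2)| ≤ k * |Real.sin (t/2)| := by
    have h0 := abs_sin_nat_mul_le k (t/2)
    rw [show (k:ℝ) * (t/2) = (k*t)/2 by ring] at h0
    exact h0
  have h2 : Real.sin ((k*t)/2)^2 ≤ ((k:ℝ) * |Real.sin (t/2)|)^2 := by
    rw [← sq_abs]
    exact pow_le_pow_left₀ (abs_nonneg _) h 2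
  calc 2 * Real.sin (k*t/2)^2 ≤ 2 * ((k:ℝ) * |Real.sin (t/2)|)^2 := by linarith
    _ = (k:ℝ)^2 * (2 * Real.sin (t/2)^2) := by rw [mul_pow, sq_abs]; ring

lemma one_sub_cos_nonneg (t : ℝ) : 0 ≤ 1 - Real.cos t := by
  have := Real.cos_le_one t; linarith

-- suppFn basics
section suppFn
variable {n : ℕ} {K : Set (Eucl n)}

lemma suppFn_bddAbove (hK : IsCompact K) (θ : Eucl n) :
    BddAbove ((fun x => ⟪x, θ⟫) '' K) :=
  (hK.image (continuous_id.inner continuous_const)).bddAbove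

lemma inner_le_suppFn (hK : IsCompact K) {z : Eucl n} (hz : z ∈ K) (θ : Eucl n) :
    ⟪z, θ⟫ ≤ suppFn K θ :=
  le_csSup (suppFn_bddAbove hK θ) ⟨z, hz, rfl⟩

lemma suppFn_le (hne : K.Nonempty) {θ : Eucl n} {c : ℝ}
    (h : ∀ z ∈ K, ⟪z, θ⟫ ≤ c) : suppFn K θ ≤ c :=
  csSup_le (hne.image _) (by rintro _ ⟨z, hz, rfl⟩; exact h z hz)

lemma suppFn_comb (hK : IsCompact K) (hne : K.Nonempty) {s t : ℝ}
    (hs : 0 ≤ s) (ht : 0 ≤ t) (p q : Eucl n) :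
    suppFn K (s • p + t • q) ≤ s * suppFn K p + t * suppFn K q := by
  apply suppFn_le hne
  intro z hz
  rw [inner_add_right, real_inner_smul_right, real_inner_smul_right]
  have h1 := inner_le_suppFn hK hz p
  have h2 := inner_le_suppFn hK hz q
  have h3 := mul_le_mul_of_nonneg_left h1 hs
  have h4 := mul_le_mul_of_nonneg_left h2 ht
  linarith

lemma suppFn_pos (hK : IsCompact K) (h0 : (0:Eucl n) ∈ interior K) {θ : Eucl n}
    (hθ : ‖θ‖ = 1) : 0 < suppFn K θ := by
  obtain ⟨r, hr, hball⟩ := Metric.isOpen_iff.1 isOpen_interior 0 h0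
  have hz : (r/2) • θ ∈ K := by
    apply interior_subset
    apply hball
    simp only [Metric.mem_ball, dist_zero_right, norm_smul, hθ, mul_one, Real.norm_eq_abs,
      abs_of_nonneg (le_of_lt (half_pos hr))]
    linarith
  have h := inner_le_suppFn hK hz θ
  rw [real_inner_smul_left, real_inner_self_eq_norm_sq, hθ] at h
  nlinarith

lemma suppFn_lipschitz (hK : IsCompact K) (hne : K.Nonempty) {M : ℝ}
    (hM : ∀ z ∈ K, ‖z‖ ≤ M) (θ θ' : Eucl n) :
    suppFn K θ - suppFn K θ' ≤ M * ‖θ - θ'‖ := by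
  have h : suppFn K θ ≤ suppFn K θ' + M * ‖θ - θ'‖ := by
    apply suppFn_le hne
    intro z hz
    have h1 : ⟪z, θ⟫ = ⟪z, θ'⟫ + ⟪z, θ - θ'⟫ := by
      rw [← inner_add_right]
      congr 1
      abel
    rw [h1]
    have h2 := inner_le_suppFn hK hz θ'
    have h3 : ⟪z, θ - θ'⟫ ≤ M * ‖θ - θ'‖ :=
      le_trans (real_inner_le_norm _ _)
        (mul_le_mul_of_nonneg_right (hM z hz) (norm_nonneg _))
    linarith
  linarith

lemma suppFn_continuous (hK : IsCompact K) (hne : K.Nonempty) :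
    Continuous (suppFn K) := by
  obtain ⟨M, hM⟩ := hK.isBounded.exists_norm_le
  have hlip : LipschitzWith (Real.toNNReal M) (suppFn K) := by
    apply LipschitzWith.of_dist_le_mul
    intro x y
    rw [Real.dist_eq, dist_eq_norm, abs_le]
    have hMle : M ≤ Real.toNNReal M := Real.le_coe_toNNReal M
    have hn : (0:ℝ) ≤ ‖x - y‖ := norm_nonneg _
    constructor
    · have h := suppFn_lipschitz hK hne hM y x
      rw [norm_sub_rev] at h
      nlinarith
    · have h := suppFn_lipschitz hK hne hM x y
      nlinarith
  exact hlip.continuous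

end suppFn




lemma eucl_hausdorff_finite {m : ℕ} {S : Set (Eucl m)} (hS : Bornology.IsBounded S) :
    μH[(m:ℝ)] S < ∞ := by
  have hanti := PiLp.antilipschitzWith_ofLp 2 (fun _ : Fin m => ℝ)
  have h1 := hanti.le_hausdorffMeasure_image (Nat.cast_nonneg m) S
  have hcard : (μH[(m:ℝ)] : Measure (Fin m → ℝ)) = volume := by
    have := MeasureTheory.hausdorffMeasure_pi_real (ι := Fin m)
    simpa using this
  rw [hcard] at h1
  have himgbdd : Bornology.IsBounded ((WithLp.equiv 2 (Fin m → ℝ)) '' S) :=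
    (PiLp.lipschitzWith_ofLp 2 (fun _ : Fin m => ℝ)).isBounded_image hS
  obtain ⟨R, hR⟩ := himgbdd.subset_closedBall 0
  have hvol : volume ((WithLp.equiv 2 (Fin m → ℝ)) '' S) < ∞ :=
    lt_of_le_of_lt (measure_mono hR) (isCompact_closedBall 0 R).measure_lt_top
  calc μH[(m:ℝ)] S ≤ _ := h1
    _ < ∞ := by
        apply ENNReal.mul_lt_top _ hvol
        exact ENNReal.rpow_lt_top_of_nonneg (Nat.cast_nonneg m) ENNReal.coe_ne_top

lemma eucl_hausdorff_pos {m : ℕ} {S : Set (Eucl m)} {x : Eucl m} {r : ℝ}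
    (hr : 0 < r) (hball : ball x r ⊆ S) : 0 < μH[(m:ℝ)] S := by
  have hlip := PiLp.lipschitzWith_ofLp 2 (fun _ : Fin m => ℝ)
  have h1 := hlip.hausdorffMeasure_image_le (Nat.cast_nonneg m) S
  simp only [ENNReal.coe_one, ENNReal.one_rpow, one_mul] at h1
  have hcard : (μH[(m:ℝ)] : Measure (Fin m → ℝ)) = volume := by
    have := MeasureTheory.hausdorffMeasure_pi_real (ι := Fin m)
    simpa using this
  rw [hcard] at h1
  have hanti := PiLp.antilipschitzWith_ofLp 2 (fun _ : Fin m => ℝ)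
  obtain ⟨C, hanti⟩ : ∃ C : ℝ≥0, AntilipschitzWith C (WithLp.equiv 2 (Fin m → ℝ)) := ⟨_, hanti⟩
  have hCpos : (0:ℝ) < (C:ℝ) + 1 := by positivity
  set r' : ℝ := r / ((C:ℝ) + 1) with hr'
  have hr'pos : 0 < r' := div_pos hr hCpos
  have hsub : ball ((WithLp.equiv 2 (Fin m → ℝ)) x) r' ⊆ (WithLp.equiv 2 (Fin m → ℝ)) '' S := by
    intro y hy
    have : (WithLp.equiv 2 (Fin m → ℝ)).symm y ∈ ball x r := by
      rw [mem_ball] at hy ⊢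
      have hd := hanti.le_mul_dist ((WithLp.equiv 2 (Fin m → ℝ)).symm y) x
      rw [show (WithLp.equiv 2 (Fin m → ℝ)) ((WithLp.equiv 2 (Fin m → ℝ)).symm y) = y from
        (WithLp.equiv 2 (Fin m → ℝ)).apply_symm_apply y] at hd
      calc dist ((WithLp.equiv 2 (Fin m → ℝ)).symm y) x ≤ C * dist y ((WithLp.equiv 2 (Fin m → ℝ)) x) := hd
        _ ≤ ((C:ℝ)+1) * dist y ((WithLp.equiv 2 (Fin m → ℝ)) x) := by
            apply mul_le_mul_of_nonneg_right _ dist_nonneg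
            linarith
        _ < ((C:ℝ)+1) * r' := by
            apply mul_lt_mul_of_pos_left hy hCpos
        _ = r := by
            rw [hr']
            field_simp
    exact ⟨_, hball this, (WithLp.equiv 2 (Fin m → ℝ)).apply_symm_apply y⟩
  have hpos : 0 < volume ((WithLp.equiv 2 (Fin m → ℝ)) '' S) :=
    lt_of_lt_of_le (measure_ball_pos volume _ hr'pos) (measure_mono hsub)
  exact lt_of_lt_of_le hpos h1






def capC {k : ℕ} (e : Eucl k) (c : ℝ) : Set (Eucl k) :=
  {x ∈ sphere (0 : Eucl k) 1 | c ≤ ⟪e, x⟫}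

section rot
variable {k : ℕ}

lemma capC_image (ρ : Eucl k ≃ₗᵢ[ℝ] Eucl k) (e : Eucl k) (c : ℝ) :
    ρ '' capC e c = capC (ρ e) c := by
  ext y
  constructor
  · rintro ⟨x, ⟨hx1, hx2⟩, rfl⟩
    refine ⟨?_, ?_⟩
    · simpa [mem_sphere_iff_norm] using (by simpa [ρ.norm_map] using hx1 : ‖x‖ = 1)
    · rwa [ρ.inner_map_map]
  · rintro ⟨hy1, hy2⟩
    refine ⟨ρ.symm y, ⟨?_, ?_⟩, ρ.apply_symm_apply y⟩
    · simpa [mem_sphere_iff_norm] using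
        (by rw [ρ.symm.norm_map]; simpa [mem_sphere_iff_norm] using hy1 : ‖ρ.symm y‖ = 1)
    · rw [← ρ.apply_symm_apply y] at hy2
      rwa [ρ.inner_map_map] at hy2

lemma capC_measure_eq {v w : Eucl k} (hv : ‖v‖ = 1) (hw : ‖w‖ = 1) (c d : ℝ) (hd : 0 ≤ d) :
    μH[d] (capC w c) = μH[d] (capC v c) := by
  obtain ⟨ρ, hρ⟩ : ∃ ρ : Eucl k ≃ₗᵢ[ℝ] Eucl k, ρ v = w :=
    ⟨Submodule.reflection (ℝ ∙ (v - w))ᗮ, Submodule.reflection_sub (hv.trans hw.symm)⟩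
  rw [← hρ, ← capC_image ρ v c, (ρ.isometry).hausdorffMeasure_image (Or.inl hd)]

end rot

section graph
variable {m : ℕ}

def elast (m : ℕ) : Eucl (m+1) := EuclideanSpace.single (Fin.last m) 1

lemma norm_elast (m : ℕ) : ‖elast m‖ = 1 := by
  simp [elast, EuclideanSpace.norm_single]

lemma inner_elast (x : Eucl (m+1)) : ⟪elast m, x⟫ = x (Fin.last m) := by
  simp [elast, EuclideanSpace.inner_single_left]

/-- truncation -/
def qmap (x : Eucl (m+1)) : Eucl m := WithLp.toLp 2 (fun i : Fin m => x i.castSucc)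

/-- graph map -/
def gmap (y : Eucl m) : Eucl (m+1) := WithLp.toLp 2 (Fin.snoc (α := fun _ => ℝ) y.ofLp (Real.sqrt (1 - ‖y‖^2)))

lemma qmap_lipschitz : LipschitzWith 1 (qmap (m := m)) := by
  apply LipschitzWith.of_dist_le_mul
  intro x y
  rw [NNReal.coe_one, one_mul, EuclideanSpace.dist_eq, EuclideanSpace.dist_eq]
  apply Real.sqrt_le_sqrt
  rw [Fin.sum_univ_castSucc]
  have : (0:ℝ) ≤ dist (x (Fin.last m)) (y (Fin.last m)) ^ 2 := sq_nonneg _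
  simp only [qmap]
  linarith

lemma norm_sq_eucl (x : Eucl (m+1)) : ‖x‖^2 = ‖qmap x‖^2 + (x (Fin.last m))^2 := by
  have h1 : ‖x‖^2 = ∑ i, x i^2 := by
    rw [EuclideanSpace.norm_eq, Real.sq_sqrt (Finset.sum_nonneg fun i _ => sq_nonneg _)]
    congr 1; funext i; rw [Real.norm_eq_abs, sq_abs]
  have h2 : ‖qmap x‖^2 = ∑ i : Fin m, (x i.castSucc)^2 := by
    rw [EuclideanSpace.norm_eq, Real.sq_sqrt (Finset.sum_nonneg fun i _ => sq_nonneg _)]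
    simp only [qmap]
    congr 1; funext i; rw [Real.norm_eq_abs, sq_abs]
  rw [h1, h2, Fin.sum_univ_castSucc]

lemma gmap_mem {y : Eucl m} (hy : ‖y‖ ≤ 1) : gmap y ∈ sphere (0 : Eucl (m+1)) 1 := by
  rw [mem_sphere_iff_norm, sub_zero]
  have hq : qmap (gmap y) = y := by
    ext i; simp [qmap, gmap, Fin.snoc_castSucc]
  have hlast : (gmap y) (Fin.last m) = Real.sqrt (1 - ‖y‖^2) := by
    simp [gmap, Fin.snoc_last]
  have h1 : (0:ℝ) ≤ 1 - ‖y‖^2 := by nlinarith [norm_nonneg y]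
  have := norm_sq_eucl (gmap y)
  rw [hq, hlast, Real.sq_sqrt h1] at this
  have hnn : (0:ℝ) ≤ ‖gmap y‖ := norm_nonneg _
  nlinarith

lemma gmap_last (y : Eucl m) : ⟪elast m, gmap y⟫ = Real.sqrt (1 - ‖y‖^2) := by
  rw [inner_elast]; simp [gmap, Fin.snoc_last]

lemma sqrt_sub_sqrt_le {a b c : ℝ} (hc : 0 < c) (ha : c^2 ≤ a) (hb : c^2 ≤ b) :
    |Real.sqrt a - Real.sqrt b| ≤ |a - b| / (2*c) := by
  have ha0 : (0:ℝ) ≤ a := le_trans (sq_nonneg c) ha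
  have hb0 : (0:ℝ) ≤ b := le_trans (sq_nonneg c) hb
  have hsa : c ≤ Real.sqrt a := by
    rw [show c = Real.sqrt (c^2) from (Real.sqrt_sq hc.le).symm]
    exact Real.sqrt_le_sqrt ha
  have hsb : c ≤ Real.sqrt b := by
    rw [show c = Real.sqrt (c^2) from (Real.sqrt_sq hc.le).symm]
    exact Real.sqrt_le_sqrt hb
  have key : |Real.sqrt a - Real.sqrt b| * (2*c) ≤ |a - b| := by
    have h1 : (Real.sqrt a - Real.sqrt b) * (Real.sqrt a + Real.sqrt b) = a - b := by
      have := Real.sq_sqrt ha0; have := Real.sq_sqrt hb0; ring_nf; nlinarith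
    have h2 : |Real.sqrt a - Real.sqrt b| * (Real.sqrt a + Real.sqrt b) = |a - b| := by
      rw [← h1, abs_mul, abs_of_nonneg (by positivity : (0:ℝ) ≤ Real.sqrt a + Real.sqrt b)]
    rw [← h2]
    apply mul_le_mul_of_nonneg_left _ (abs_nonneg _)
    linarith
  rw [le_div_iff₀ (by positivity)]
  exact key

lemma gmap_lipschitzOn {c s : ℝ} (hc : 0 < c) (hcs : c^2 + s^2 = 1) :
    ∀ y ∈ closedBall (0 : Eucl m) s, ∀ z ∈ closedBall (0 : Eucl m) s,
      dist (gmap y) (gmap z) ≤ Real.sqrt (1 + (s/c)^2) * dist y z := by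
  intro y hy z hz
  rw [mem_closedBall, dist_zero_right] at hy hz
  have hs0 : 0 ≤ s := le_trans (norm_nonneg y) hy
  have hya : c^2 ≤ 1 - ‖y‖^2 := by nlinarith [norm_nonneg y, sq_nonneg (s - ‖y‖)]
  have hza : c^2 ≤ 1 - ‖z‖^2 := by nlinarith [norm_nonneg z, sq_nonneg (s - ‖z‖)]
  have hdiff := sqrt_sub_sqrt_le hc hya hza
  have hd2 : dist (gmap y) (gmap z)^2 =
      dist y z^2 + (Real.sqrt (1 - ‖y‖^2) - Real.sqrt (1 - ‖z‖^2))^2 := by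
    rw [EuclideanSpace.dist_eq, Real.sq_sqrt (Finset.sum_nonneg fun i _ => sq_nonneg _),
      Fin.sum_univ_castSucc]
    have h1 : ∀ i : Fin m, dist (gmap y i.castSucc) (gmap z i.castSucc) = dist (y i) (z i) := by
      intro i; simp [gmap, Fin.snoc_castSucc]
    have h2 : dist (gmap y (Fin.last m)) (gmap z (Fin.last m)) =
        |Real.sqrt (1 - ‖y‖^2) - Real.sqrt (1 - ‖z‖^2)| := by
      simp [gmap, Fin.snoc_last, Real.dist_eq]
    rw [h2, sq_abs]
    congr 1
    rw [EuclideanSpace.dist_eq, Real.sq_sqrt (Finset.sum_nonneg fun i _ => sq_nonneg _)]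
    exact Finset.sum_congr rfl fun i _ => by rw [h1 i]
  have habs : |(1 - ‖y‖^2) - (1 - ‖z‖^2)| / (2*c) ≤ (s/c) * dist y z := by
    have h3 : |(1 - ‖y‖^2) - (1 - ‖z‖^2)| = |‖z‖^2 - ‖y‖^2| := by ring_nf
    rw [h3]
    have h4 : |‖z‖^2 - ‖y‖^2| = (‖z‖ + ‖y‖) * |‖z‖ - ‖y‖| := by
      rw [← abs_of_nonneg (by positivity : (0:ℝ) ≤ ‖z‖ + ‖y‖), ← abs_mul]
      congr 1; ring
    rw [h4]
    have h5 : |‖z‖ - ‖y‖| ≤ dist y z := by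
      rw [dist_comm, dist_eq_norm]; exact abs_norm_sub_norm_le z y
    have h6 : ‖z‖ + ‖y‖ ≤ 2*s := by linarith
    rw [div_le_iff₀ (by positivity)]
    calc (‖z‖ + ‖y‖) * |‖z‖ - ‖y‖| ≤ (2*s) * dist y z := by
          apply mul_le_mul h6 h5 (abs_nonneg _) (by positivity)
      _ = s / c * dist y z * (2 * c) := by field_simp
  have hfin : (Real.sqrt (1-‖y‖^2) - Real.sqrt (1-‖z‖^2))^2 ≤ (s/c)^2 * dist y z^2 := by
    have := le_trans hdiff habs
    have h7 : |Real.sqrt (1-‖y‖^2) - Real.sqrt (1-‖z‖^2)|^2 ≤ ((s/c) * dist y z)^2 := by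
      apply pow_le_pow_left₀ (abs_nonneg _) this
    rw [sq_abs] at h7
    calc (Real.sqrt (1-‖y‖^2) - Real.sqrt (1-‖z‖^2))^2 ≤ ((s/c) * dist y z)^2 := h7
      _ = (s/c)^2 * dist y z^2 := by ring
  have hL : dist (gmap y) (gmap z)^2 ≤ (1 + (s/c)^2) * dist y z^2 := by
    rw [hd2]; nlinarith [sq_nonneg (dist y z)]
  have h8 : dist (gmap y) (gmap z) ≤ Real.sqrt ((1 + (s/c)^2) * dist y z^2) := by
    rw [← Real.sqrt_sq dist_nonneg]
    exact Real.sqrt_le_sqrt hL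
  rw [Real.sqrt_mul (by positivity), Real.sqrt_sq dist_nonneg] at h8
  exact h8

lemma capC_elast_subset {c : ℝ} (hc : 0 < c) (hc1 : c ≤ 1) :
    capC (elast m) c ⊆ gmap '' (closedBall (0 : Eucl m) (Real.sqrt (1 - c^2))) := by
  rintro x ⟨hx1, hx2⟩
  rw [mem_sphere_iff_norm, sub_zero] at hx1
  rw [inner_elast] at hx2
  refine ⟨qmap x, ?_, ?_⟩
  · rw [mem_closedBall, dist_zero_right]
    have h := norm_sq_eucl x
    rw [hx1] at h
    have : ‖qmap x‖^2 ≤ 1 - c^2 := by nlinarith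
    calc ‖qmap x‖ = Real.sqrt (‖qmap x‖^2) := (Real.sqrt_sq (norm_nonneg _)).symm
      _ ≤ Real.sqrt (1 - c^2) := Real.sqrt_le_sqrt this
  · have h := norm_sq_eucl x
    rw [hx1] at h
    have hlast : Real.sqrt (1 - ‖qmap x‖^2) = x (Fin.last m) := by
      rw [show 1 - ‖qmap x‖^2 = (x (Fin.last m))^2 by nlinarith]
      exact Real.sqrt_sq (by linarith)
    ext i
    refine Fin.lastCases ?_ ?_ i
    · simp [gmap, Fin.snoc_last, hlast]
    · intro j
      simp [gmap, Fin.snoc_castSucc, qmap]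

lemma capC_elast_finite {c : ℝ} (hc : 0 < c) (hc1 : c ≤ 1) :
    μH[(m:ℝ)] (capC (elast m) c) < ∞ := by
  set s := Real.sqrt (1 - c^2) with hs
  have hs1 : s^2 = 1 - c^2 := Real.sq_sqrt (by nlinarith)
  have hcs : c^2 + s^2 = 1 := by rw [hs1]; ring
  set L : ℝ≥0 := Real.toNNReal (Real.sqrt (1 + (s/c)^2)) with hL
  have hlip : LipschitzOnWith L gmap (closedBall (0 : Eucl m) s) := by
    apply LipschitzOnWith.of_dist_le_mul
    intro y hy z hz
    have := gmap_lipschitzOn hc hcs y hy z hz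
    calc dist (gmap y) (gmap z) ≤ Real.sqrt (1 + (s/c)^2) * dist y z := this
      _ ≤ L * dist y z := by
          apply mul_le_mul_of_nonneg_right _ dist_nonneg
          exact Real.le_coe_toNNReal _
  have himg := hlip.hausdorffMeasure_image_le (Nat.cast_nonneg m)
  have hsub := capC_elast_subset (m := m) hc hc1
  calc μH[(m:ℝ)] (capC (elast m) c) ≤ μH[(m:ℝ)] (gmap '' (closedBall (0:Eucl m) s)) :=
        measure_mono hsub
    _ ≤ (L : ℝ≥0∞)^(m:ℝ) * μH[(m:ℝ)] (closedBall (0:Eucl m) s) := himg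
    _ < ∞ := by
        apply ENNReal.mul_lt_top
        · exact ENNReal.rpow_lt_top_of_nonneg (Nat.cast_nonneg m) ENNReal.coe_ne_top
        · exact eucl_hausdorff_finite (isBounded_closedBall)

lemma capC_finite {e : Eucl (m+1)} (he : ‖e‖ = 1) {c : ℝ} (hc : 0 < c) (hc1 : c ≤ 1) :
    μH[(m:ℝ)] (capC e c) < ∞ := by
  rw [capC_measure_eq (norm_elast m) he c (m:ℝ) (Nat.cast_nonneg m)]
  exact capC_elast_finite hc hc1

lemma capC_pos {e : Eucl (m+1)} (hm : 1 ≤ m) (he : ‖e‖ = 1) {c : ℝ}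
    (hc0 : 0 ≤ c) (hc1 : c < 1) : 0 < μH[(m:ℝ)] (capC e c) := by
  rw [capC_measure_eq (norm_elast m) he c (m:ℝ) (Nat.cast_nonneg m)]
  -- ball (0, √(1-c²)) ⊆ qmap '' capC (elast m) c
  set s := Real.sqrt (1 - c^2) with hs
  have hs2 : s^2 = 1 - c^2 := Real.sq_sqrt (by nlinarith)
  have hspos : 0 < s := Real.sqrt_pos.2 (by nlinarith)
  have hsub : ball (0 : Eucl m) s ⊆ qmap '' (capC (elast m) c) := by
    intro y hy
    rw [mem_ball, dist_zero_right] at hy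
    have hy1 : ‖y‖ ≤ 1 := by nlinarith [norm_nonneg y]
    refine ⟨gmap y, ⟨gmap_mem hy1, ?_⟩, ?_⟩
    · rw [gmap_last]
      have : c = Real.sqrt (c^2) := (Real.sqrt_sq hc0).symm
      rw [this]
      apply Real.sqrt_le_sqrt
      nlinarith [norm_nonneg y]
    · ext i; simp [qmap, gmap, Fin.snoc_castSucc]
  have h1 : 0 < μH[(m:ℝ)] (qmap '' (capC (elast m) c)) := eucl_hausdorff_pos hspos hsub
  have h2 := qmap_lipschitz.lipschitzOnWith (s := capC (elast m) c)
  have h3 := h2.hausdorffMeasure_image_le (Nat.cast_nonneg m)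
  simp only [ENNReal.coe_one, ENNReal.one_rpow, one_mul] at h3
  exact lt_of_lt_of_le h1 h3

-- sphere covering
lemma sphere_hmeas_finite (m : ℕ) : μH[(m:ℝ)] (sphere (0 : Eucl (m+1)) 1) < ∞ := by
  set c : ℝ := 1 / Real.sqrt (m+1) with hc
  have hm1 : (0:ℝ) < Real.sqrt (m+1) := Real.sqrt_pos.2 (by positivity)
  have hc0 : 0 < c := by positivity
  have hc1 : c ≤ 1 := by
    rw [hc, div_le_one hm1]
    have h := Real.sqrt_le_sqrt (show (1:ℝ) ≤ (m:ℝ)+1 by linarith [Nat.cast_nonneg (α := ℝ) m])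
    simpa using h
  have hcov : sphere (0 : Eucl (m+1)) 1 ⊆
      ⋃ i : Fin (m+1), (capC (EuclideanSpace.single i (1:ℝ)) c ∪
        capC (-(EuclideanSpace.single i (1:ℝ))) c) := by
    intro x hx
    rw [mem_sphere_iff_norm, sub_zero] at hx
    have hsum : ∑ i, (x i)^2 = 1 := by
      have hnorm : ‖x‖^2 = ∑ i, (x i)^2 := by
        rw [EuclideanSpace.norm_eq, Real.sq_sqrt (Finset.sum_nonneg fun i _ => sq_nonneg _)]
        congr 1; funext i; rw [Real.norm_eq_abs, sq_abs]
      rw [← hnorm, hx]; norm_num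
    have hex : ∃ i, c^2 ≤ (x i)^2 := by
      by_contra hno
      push_neg at hno
      have hlt : ∑ i, (x i)^2 < ∑ _i : Fin (m+1), c^2 :=
        Finset.sum_lt_sum_of_nonempty ⟨0, Finset.mem_univ 0⟩ (fun i _ => hno i)
      rw [Finset.sum_const, Finset.card_univ, Fintype.card_fin] at hlt
      have hc2 : c^2 = 1/(m+1) := by
        rw [hc, div_pow, one_pow, Real.sq_sqrt (by positivity)]
      rw [hc2, hsum] at hlt
      rw [nsmul_eq_mul] at hlt
      push_cast at hlt
      rw [mul_one_div, div_self (show ((m:ℝ)+1) ≠ 0 by positivity)] at hlt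
      exact lt_irrefl _ hlt
    obtain ⟨i, hi⟩ := hex
    have habs : c ≤ |x i| := by
      rw [show c = Real.sqrt (c^2) from (Real.sqrt_sq hc0.le).symm,
        show |x i| = Real.sqrt ((x i)^2) from (Real.sqrt_sq_eq_abs _).symm]
      exact Real.sqrt_le_sqrt hi
    apply mem_iUnion.2 ⟨i, ?_⟩
    rcases abs_cases (x i) with ⟨heq, _⟩ | ⟨heq, _⟩
    · left
      refine ⟨by rwa [mem_sphere_iff_norm, sub_zero], ?_⟩
      rw [EuclideanSpace.inner_single_left]
      simp only [map_one, one_mul]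
      rw [heq] at habs
      exact habs
    · right
      refine ⟨by rwa [mem_sphere_iff_norm, sub_zero], ?_⟩
      rw [inner_neg_left, EuclideanSpace.inner_single_left]
      simp only [map_one, one_mul]
      rw [heq] at habs
      linarith
  calc μH[(m:ℝ)] (sphere (0 : Eucl (m+1)) 1) ≤
      ∑ i : Fin (m+1), μH[(m:ℝ)] ((capC (EuclideanSpace.single i (1:ℝ)) c ∪
        capC (-(EuclideanSpace.single i (1:ℝ))) c)) :=
        le_trans (measure_mono hcov) (measure_iUnion_fintype_le _ _)
    _ < ∞ := by
        apply ENNReal.sum_lt_top.2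
        intro i _
        apply lt_of_le_of_lt (measure_union_le _ _)
        apply ENNReal.add_lt_top.2
        constructor
        · exact capC_finite (by simp [EuclideanSpace.norm_single]) hc0 hc1
        · exact capC_finite (by rw [norm_neg]; simp [EuclideanSpace.norm_single]) hc0 hc1

end graph



section meridian
variable {N : ℕ} {e : Eucl N}

def ang (e x : Eucl N) : ℝ := Real.arccos ⟪e, x⟫

def Ψmap (e : Eucl N) (g : ℝ → ℝ) (x : Eucl N) : Eucl N :=
  Real.cos (g (ang e x)) • e + (Real.sin (g (ang e x)) / Real.sin (ang e x)) • (x - ⟪e, x⟫ • e)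

def annE (e : Eucl N) (l m : ℝ) : Set (Eucl N) :=
  {x ∈ sphere (0 : Eucl N) 1 | ⟪e, x⟫ ∈ Icc (Real.cos m) (Real.cos l)}

lemma inner_abs_le (he : ‖e‖ = 1) {x : Eucl N} (hx : ‖x‖ = 1) : |⟪e, x⟫| ≤ 1 := by
  have := abs_real_inner_le_norm e x
  rwa [he, hx, one_mul] at this

lemma cos_ang (he : ‖e‖ = 1) {x : Eucl N} (hx : ‖x‖ = 1) : Real.cos (ang e x) = ⟪e, x⟫ := by
  have h := inner_abs_le he hx
  rw [abs_le] at h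
  exact Real.cos_arccos h.1 h.2

lemma ang_mem {x : Eucl N} : ang e x ∈ Icc 0 π :=
  ⟨Real.arccos_nonneg _, Real.arccos_le_pi _⟩

lemma sin_ang_nonneg (x : Eucl N) : 0 ≤ Real.sin (ang e x) :=
  Real.sin_nonneg_of_nonneg_of_le_pi (ang_mem).1 (ang_mem).2

lemma inner_e_wpart (he : ‖e‖ = 1) {x : Eucl N} : ⟪e, x - ⟪e,x⟫ • e⟫ = 0 := by
  rw [inner_sub_right, real_inner_smul_right, real_inner_self_eq_norm_sq, he]
  norm_num

lemma norm_wpart_sq (he : ‖e‖ = 1) {x : Eucl N} (hx : ‖x‖ = 1) :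
    ‖x - ⟪e,x⟫ • e‖^2 = Real.sin (ang e x)^2 := by
  have hs : Real.sin (ang e x)^2 = 1 - ⟪e,x⟫^2 := by
    have := Real.sin_sq_add_cos_sq (ang e x)
    rw [cos_ang he hx] at this
    linarith
  rw [hs]
  rw [norm_sub_sq_real, norm_smul, real_inner_smul_right, real_inner_comm x e]
  rw [hx, he, Real.norm_eq_abs]
  ring_nf
  rw [sq_abs]
  ring

lemma norm_wpart (he : ‖e‖ = 1) {x : Eucl N} (hx : ‖x‖ = 1) :
    ‖x - ⟪e,x⟫ • e‖ = Real.sin (ang e x) := by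
  have h := norm_wpart_sq he hx
  have h1 : ‖x - ⟪e,x⟫ • e‖ = |Real.sin (ang e x)| := by
    rw [← Real.sqrt_sq_eq_abs, ← h, Real.sqrt_sq (norm_nonneg _)]
  rw [h1, abs_of_nonneg (sin_ang_nonneg _)]

lemma inner_wpart_wpart (he : ‖e‖ = 1) {x y : Eucl N} :
    ⟪x - ⟪e,x⟫ • e, y - ⟪e,y⟫ • e⟫ = ⟪x,y⟫ - ⟪e,x⟫ * ⟪e,y⟫ := by
  rw [inner_sub_left, inner_sub_right, inner_sub_right, real_inner_smul_right,
    real_inner_smul_left, real_inner_smul_left, real_inner_smul_right,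
    real_inner_self_eq_norm_sq, he, real_inner_comm y e, real_inner_comm x e]
  ring

lemma inner_x_eq (he : ‖e‖ = 1) {x y : Eucl N} :
    ⟪x, y⟫ = ⟪e,x⟫ * ⟪e,y⟫ + ⟪x - ⟪e,x⟫ • e, y - ⟪e,y⟫ • e⟫ := by
  rw [inner_wpart_wpart he]; ring

/-- distance squared between unit vectors -/
lemma dist_sq_units {x y : Eucl N} (hx : ‖x‖ = 1) (hy : ‖y‖ = 1) :
    dist x y ^ 2 = 2 - 2 * ⟪x, y⟫ := by
  rw [dist_eq_norm, norm_sub_sq_real, hx, hy]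
  ring

-- membership translation
lemma mem_annE_iff (he : ‖e‖ = 1) {l m : ℝ} (hl : 0 ≤ l) (hlm : l ≤ m) (hm : m ≤ π)
    {x : Eucl N} (hx : ‖x‖ = 1) :
    x ∈ annE e l m ↔ ang e x ∈ Icc l m := by
  have hmem : ang e x ∈ Icc 0 π := ang_mem
  have hmm : m ∈ Icc 0 π := ⟨le_trans hl hlm, hm⟩
  have hll : l ∈ Icc 0 π := ⟨hl, le_trans hlm hm⟩
  have h1 : Real.cos m ≤ Real.cos (ang e x) ↔ ang e x ≤ m :=
    Real.strictAntiOn_cos.le_iff_ge hmm hmem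
  have h2 : Real.cos (ang e x) ≤ Real.cos l ↔ l ≤ ang e x :=
    Real.strictAntiOn_cos.le_iff_ge hmem hll
  constructor
  · rintro ⟨-, ha, hb⟩
    rw [← cos_ang he hx] at ha hb
    exact ⟨h2.1 hb, h1.1 ha⟩
  · rintro ⟨ha, hb⟩
    refine ⟨by simpa [mem_sphere_iff_norm] using hx, ?_, ?_⟩
    · rw [← cos_ang he hx]; exact h1.2 hb
    · rw [← cos_ang he hx]; exact h2.2 ha

lemma mem_annE_sphere {l m : ℝ} {x : Eucl N} (hx : x ∈ annE e l m) : ‖x‖ = 1 := by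
  have := hx.1
  rwa [mem_sphere_iff_norm, sub_zero] at this

-- image facts
lemma Ψmap_inner (he : ‖e‖ = 1) {g : ℝ → ℝ} {x : Eucl N} :
    ⟪e, Ψmap e g x⟫ = Real.cos (g (ang e x)) := by
  rw [Ψmap, inner_add_right, real_inner_smul_right, real_inner_smul_right,
    real_inner_self_eq_norm_sq, he, inner_e_wpart he]
  norm_num

lemma Ψmap_norm (he : ‖e‖ = 1) {g : ℝ → ℝ} {x : Eucl N} (hx : ‖x‖ = 1)
    (hsin : Real.sin (ang e x) ≠ 0) : ‖Ψmap e g x‖ = 1 := by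
  have hw := norm_wpart_sq he hx
  have h : ‖Ψmap e g x‖^2 = 1 := by
    rw [Ψmap, norm_add_sq_real, norm_smul, norm_smul, real_inner_smul_left,
      real_inner_smul_right, inner_e_wpart he, he]
    rw [Real.norm_eq_abs, Real.norm_eq_abs]
    rw [mul_pow, mul_pow, sq_abs, sq_abs, hw]
    have h2 : (Real.sin (g (ang e x)) / Real.sin (ang e x))^2 * Real.sin (ang e x)^2
        = Real.sin (g (ang e x))^2 := by
      field_simp
    rw [div_pow] at h2 ⊢
    rw [one_pow, mul_one]
    have := Real.sin_sq_add_cos_sq (g (ang e x))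
    nlinarith [h2]
  have hnn := norm_nonneg (Ψmap e g x)
  nlinarith

lemma wpart_inner_e (he : ‖e‖ = 1) {x : Eucl N} : ⟪x - ⟪e,x⟫ • e, e⟫ = 0 := by
  rw [real_inner_comm]; exact inner_e_wpart he

lemma Ψmap_inner_pair (he : ‖e‖ = 1) {g : ℝ → ℝ} {x y : Eucl N} :
    ⟪Ψmap e g x, Ψmap e g y⟫ =
      Real.cos (g (ang e x)) * Real.cos (g (ang e y)) +
      (Real.sin (g (ang e x)) / Real.sin (ang e x)) *
        (Real.sin (g (ang e y)) / Real.sin (ang e y)) *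
        ⟪x - ⟪e,x⟫ • e, y - ⟪e,y⟫ • e⟫ := by
  rw [Ψmap, Ψmap]
  simp only [inner_add_left, inner_add_right, real_inner_smul_left, real_inner_smul_right]
  rw [real_inner_self_eq_norm_sq, he, inner_e_wpart he, wpart_inner_e he]
  ring


lemma sin_ang_pos {l m : ℝ} (hl : 0 < l) (hm : m < π) {x : Eucl N}
    (hang : ang e x ∈ Icc l m) : 0 < Real.sin (ang e x) :=
  Real.sin_pos_of_pos_of_lt_pi (lt_of_lt_of_le hl hang.1) (lt_of_le_of_lt hang.2 hm)

/-- The key Lipschitz estimate for meridian maps. -/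
lemma Ψmap_dist_le (he : ‖e‖ = 1) {g : ℝ → ℝ} {l m Λ : ℝ}
    (hl : 0 < l) (hm : m < π) (hΛ : 0 ≤ Λ)
    (hg1 : ∀ α ∈ Icc l m, ∀ β ∈ Icc l m,
      1 - Real.cos (g α - g β) ≤ Λ^2 * (1 - Real.cos (α - β)))
    (hg2 : ∀ α ∈ Icc l m, 0 ≤ Real.sin (g α) ∧ Real.sin (g α) ≤ Λ * Real.sin α)
    {x y : Eucl N} (hx : ‖x‖ = 1) (hy : ‖y‖ = 1)
    (hax : ang e x ∈ Icc l m) (hay : ang e y ∈ Icc l m) :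
    dist (Ψmap e g x) (Ψmap e g y) ≤ Λ * dist x y := by
  set α := ang e x
  set β := ang e y
  have hsx : 0 < Real.sin α := sin_ang_pos hl hm hax
  have hsy : 0 < Real.sin β := sin_ang_pos hl hm hay
  have hΨx : ‖Ψmap e g x‖ = 1 := Ψmap_norm he hx (ne_of_gt hsx)
  have hΨy : ‖Ψmap e g y‖ = 1 := Ψmap_norm he hy (ne_of_gt hsy)
  obtain ⟨W, hW⟩ : ∃ W, ⟪x - ⟪e,x⟫ • e, y - ⟪e,y⟫ • e⟫ = W := ⟨_, rfl⟩
  have hWle : W ≤ Real.sin α * Real.sin β := by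
    rw [← hW]
    calc ⟪x - ⟪e,x⟫ • e, y - ⟪e,y⟫ • e⟫ ≤ ‖x - ⟪e,x⟫ • e‖ * ‖y - ⟪e,y⟫ • e‖ :=
          real_inner_le_norm _ _
      _ = Real.sin α * Real.sin β := by rw [norm_wpart he hx, norm_wpart he hy]
  -- source distance
  have hsrc : dist x y ^ 2 =
      (2 - 2 * Real.cos (α - β)) + 2 * (Real.sin α * Real.sin β - W) := by
    rw [dist_sq_units hx hy, inner_x_eq he (x := x) (y := y), hW]
    rw [← cos_ang he hx, ← cos_ang he hy, Real.cos_sub]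
    ring
  have htgt : dist (Ψmap e g x) (Ψmap e g y) ^ 2 =
      (2 - 2 * Real.cos (g α - g β)) +
        2 * ((Real.sin (g α) * Real.sin (g β)) / (Real.sin α * Real.sin β)) *
          (Real.sin α * Real.sin β - W) := by
    rw [dist_sq_units hΨx hΨy, Ψmap_inner_pair he, hW, Real.cos_sub]
    rw [show ang e x = α from rfl, show ang e y = β from rfl]
    have hne : Real.sin α * Real.sin β ≠ 0 := by positivity
    field_simp
    ring
  -- bounds
  have hb1 : 1 - Real.cos (g α - g β) ≤ Λ^2 * (1 - Real.cos (α - β)) :=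
    hg1 α hax β hay
  have hb2 : (Real.sin (g α) * Real.sin (g β)) / (Real.sin α * Real.sin β) ≤ Λ^2 := by
    rw [div_le_iff₀ (by positivity)]
    have h1 := hg2 α hax
    have h2 := hg2 β hay
    calc Real.sin (g α) * Real.sin (g β) ≤ (Λ * Real.sin α) * (Λ * Real.sin β) :=
          mul_le_mul h1.2 h2.2 h2.1 (by positivity)
      _ = Λ^2 * (Real.sin α * Real.sin β) := by ring
  have hb2' : 0 ≤ (Real.sin (g α) * Real.sin (g β)) / (Real.sin α * Real.sin β) := by
    have h1 := hg2 α hax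
    have h2 := hg2 β hay
    exact div_nonneg (mul_nonneg h1.1 h2.1) (by positivity)
  have hWnn : 0 ≤ Real.sin α * Real.sin β - W := by linarith
  have hsq : dist (Ψmap e g x) (Ψmap e g y) ^ 2 ≤ Λ^2 * dist x y ^ 2 := by
    rw [htgt, hsrc]
    have e1 : 2 * ((Real.sin (g α) * Real.sin (g β)) / (Real.sin α * Real.sin β)) *
        (Real.sin α * Real.sin β - W) ≤ 2 * Λ^2 * (Real.sin α * Real.sin β - W) := by
      apply mul_le_mul_of_nonneg_right _ hWnn
      linarith
    nlinarith
  have hfin : dist (Ψmap e g x) (Ψmap e g y) ≤ Real.sqrt (Λ^2 * dist x y ^2) := by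
    rw [← Real.sqrt_sq dist_nonneg]
    exact Real.sqrt_le_sqrt hsq
  rwa [Real.sqrt_mul (by positivity), Real.sqrt_sq hΛ, Real.sqrt_sq dist_nonneg] at hfin

/-- Ψmap image: sphere membership, angle value. -/
lemma Ψmap_mem (he : ‖e‖ = 1) {g : ℝ → ℝ} {x : Eucl N} (hx : ‖x‖ = 1)
    (hsin : Real.sin (ang e x) ≠ 0) (hg0 : 0 ≤ g (ang e x)) (hgπ : g (ang e x) ≤ π) :
    ‖Ψmap e g x‖ = 1 ∧ ang e (Ψmap e g x) = g (ang e x) := by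
  refine ⟨Ψmap_norm he hx hsin, ?_⟩
  rw [ang, Ψmap_inner he, Real.arccos_cos hg0 hgπ]

/-- wpart of the image -/
lemma Ψmap_wpart (he : ‖e‖ = 1) {g : ℝ → ℝ} {x : Eucl N} :
    Ψmap e g x - ⟪e, Ψmap e g x⟫ • e =
      (Real.sin (g (ang e x)) / Real.sin (ang e x)) • (x - ⟪e,x⟫ • e) := by
  rw [Ψmap_inner he, Ψmap]
  abel

/-- inverse composition -/
lemma Ψmap_comp (he : ‖e‖ = 1) {g g' : ℝ → ℝ} {x : Eucl N} (hx : ‖x‖ = 1)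
    (hsin : Real.sin (ang e x) ≠ 0) (hg0 : 0 ≤ g (ang e x)) (hgπ : g (ang e x) ≤ π)
    (hsin' : Real.sin (g (ang e x)) ≠ 0)
    (hinv : g' (g (ang e x)) = ang e x) :
    Ψmap e g' (Ψmap e g x) = x := by
  have hmem := Ψmap_mem he hx hsin hg0 hgπ
  have hang : ang e (Ψmap e g x) = g (ang e x) := hmem.2
  rw [Ψmap, hang, hinv, Ψmap_wpart he]
  rw [smul_smul]
  rw [div_mul_div_comm]
  rw [mul_comm (Real.sin (ang e x)) (Real.sin (g (ang e x)))]
  rw [div_self (by exact mul_ne_zero hsin' hsin)]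
  rw [one_smul, ← cos_ang he hx]
  abel

/-- point at angle α in direction u -/
def pointAt (e : Eucl N) (α : ℝ) (u : Eucl N) : Eucl N := Real.cos α • e + Real.sin α • u

lemma pointAt_norm (he : ‖e‖ = 1) {u : Eucl N} (hu : ‖u‖ = 1) (hue : ⟪e,u⟫ = 0) (α : ℝ) :
    ‖pointAt e α u‖ = 1 := by
  have h : ‖pointAt e α u‖^2 = 1 := by
    rw [pointAt, norm_add_sq_real, norm_smul, norm_smul, real_inner_smul_left,
      real_inner_smul_right, hue, he, hu, Real.norm_eq_abs, Real.norm_eq_abs]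
    simp only [mul_zero, mul_one]
    rw [sq_abs, sq_abs]
    have := Real.sin_sq_add_cos_sq α
    linarith
  have := norm_nonneg (pointAt e α u)
  nlinarith

lemma pointAt_inner (he : ‖e‖ = 1) {u : Eucl N} (hue : ⟪e,u⟫ = 0) (α : ℝ) :
    ⟪e, pointAt e α u⟫ = Real.cos α := by
  rw [pointAt, inner_add_right, real_inner_smul_right, real_inner_smul_right,
    real_inner_self_eq_norm_sq, he, hue]
  norm_num

lemma pointAt_ang (he : ‖e‖ = 1) {u : Eucl N} (hue : ⟪e,u⟫ = 0) {α : ℝ}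
    (h0 : 0 ≤ α) (hπ : α ≤ π) : ang e (pointAt e α u) = α := by
  rw [ang, pointAt_inner he hue, Real.arccos_cos h0 hπ]

lemma pointAt_wpart (he : ‖e‖ = 1) {u : Eucl N} (hue : ⟪e,u⟫ = 0) (α : ℝ) :
    pointAt e α u - ⟪e, pointAt e α u⟫ • e = Real.sin α • u := by
  rw [pointAt_inner he hue, pointAt]
  abel

lemma Ψmap_pointAt (he : ‖e‖ = 1) {g : ℝ → ℝ} {u : Eucl N} (hu : ‖u‖ = 1)
    (hue : ⟪e,u⟫ = 0) {α : ℝ} (h0 : 0 ≤ α) (hπ : α ≤ π)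
    (hsin : Real.sin α ≠ 0) :
    Ψmap e g (pointAt e α u) = pointAt e (g α) u := by
  rw [Ψmap, pointAt_ang he hue h0 hπ, pointAt_wpart he hue, smul_smul,
    div_mul_cancel₀ _ hsin]
  rfl

end meridian

section instmaps
variable {ϑ : ℝ}

def gT (ϑ α : ℝ) : ℝ := 2*α + ϑ/2
def gU (ϑ β : ℝ) : ℝ := β/2 - ϑ/4
def gF (ϑ α : ℝ) : ℝ := 8*α - ϑ

lemma annA_subset : ∀ α ∈ Icc (ϑ/8) (ϑ/4), True := fun _ _ => trivial

lemma gT_hyp1 (hϑ0 : 0 < ϑ) (hϑπ : ϑ ≤ π/2) :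
    ∀ α ∈ Icc (ϑ/8) (ϑ/4), ∀ β ∈ Icc (ϑ/8) (ϑ/4),
      1 - Real.cos (gT ϑ α - gT ϑ β) ≤ (4*π)^2 * (1 - Real.cos (α - β)) := by
  intro α _ β _
  have h : gT ϑ α - gT ϑ β = 2 * (α - β) := by rw [gT, gT]; ring
  rw [h]
  have h2 := one_sub_cos_nat_mul_le 2 (α - β)
  push_cast at h2
  have h3 := one_sub_cos_nonneg (α - β)
  have h5 : ((2:ℝ))^2 ≤ (4*π)^2 := by nlinarith [Real.pi_gt_three]
  calc 1 - Real.cos (2*(α-β)) ≤ (2:ℝ)^2 * (1 - Real.cos (α-β)) := h2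
    _ ≤ (4*π)^2 * (1 - Real.cos (α-β)) := mul_le_mul_of_nonneg_right h5 h3

lemma gF_hyp1 (hϑ0 : 0 < ϑ) (hϑπ : ϑ ≤ π/2) :
    ∀ α ∈ Icc (ϑ/8) (ϑ/4), ∀ β ∈ Icc (ϑ/8) (ϑ/4),
      1 - Real.cos (gF ϑ α - gF ϑ β) ≤ (4*π)^2 * (1 - Real.cos (α - β)) := by
  intro α _ β _
  have h : gF ϑ α - gF ϑ β = 8 * (α - β) := by rw [gF, gF]; ring
  rw [h]
  have h2 := one_sub_cos_nat_mul_le 8 (α - β)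
  push_cast at h2
  have h3 := one_sub_cos_nonneg (α - β)
  have h5 : ((8:ℝ))^2 ≤ (4*π)^2 := by nlinarith [Real.pi_gt_three]
  calc 1 - Real.cos (8*(α-β)) ≤ (8:ℝ)^2 * (1 - Real.cos (α-β)) := h2
    _ ≤ (4*π)^2 * (1 - Real.cos (α-β)) := mul_le_mul_of_nonneg_right h5 h3

lemma gU_hyp1 (hϑ0 : 0 < ϑ) (hϑπ : ϑ ≤ π/2) :
    ∀ α ∈ Icc (3*ϑ/4) ϑ, ∀ β ∈ Icc (3*ϑ/4) ϑ,
      1 - Real.cos (gU ϑ α - gU ϑ β) ≤ (1:ℝ)^2 * (1 - Real.cos (α - β)) := by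
  intro α hα β hβ
  have h : gU ϑ α - gU ϑ β = (α - β)/2 := by rw [gU, gU]; ring
  rw [h, one_pow, one_mul]
  have habs : |α - β| ≤ π := by
    rw [abs_le]
    constructor <;> [skip; skip] <;>
    · have := hα.1; have := hα.2; have := hβ.1; have := hβ.2
      have := Real.pi_pos
      linarith
  have h1 : Real.cos (α - β) ≤ Real.cos ((α - β)/2) := by
    rw [← Real.cos_abs (α - β), ← Real.cos_abs ((α-β)/2)]
    have hd : |(α - β)/2| = |α - β|/2 := by rw [abs_div]; norm_num
    rw [hd]
    apply Real.cos_le_cos_of_nonneg_of_le_pi (by positivity) habs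
    have := abs_nonneg (α - β)
    linarith
  linarith

lemma gT_hyp2 (hϑ0 : 0 < ϑ) (hϑπ : ϑ ≤ π/2) :
    ∀ α ∈ Icc (ϑ/8) (ϑ/4),
      0 ≤ Real.sin (gT ϑ α) ∧ Real.sin (gT ϑ α) ≤ (4*π) * Real.sin α := by
  intro α hα
  have hπ := Real.pi_pos
  have h1 : 0 ≤ gT ϑ α := by rw [gT]; have := hα.1; linarith
  have h2 : gT ϑ α ≤ ϑ := by rw [gT]; have := hα.2; linarith
  have h3 : gT ϑ α ≤ 6*α := by rw [gT]; have := hα.1; linarith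
  constructor
  · exact Real.sin_nonneg_of_nonneg_of_le_pi h1 (by linarith)
  · have h4 : Real.sin (gT ϑ α) ≤ gT ϑ α := Real.sin_le h1
    have hα0 : 0 ≤ α := by have := hα.1; linarith
    have hαπ : α ≤ π/2 := by have := hα.2; linarith
    have h5 : 2/π * α ≤ Real.sin α := Real.mul_le_sin hα0 hαπ
    have h6 : (4*π) * (2/π * α) = 8*α := by field_simp; ring
    nlinarith

lemma gF_hyp2 (hϑ0 : 0 < ϑ) (hϑπ : ϑ ≤ π/2) :
    ∀ α ∈ Icc (ϑ/8) (ϑ/4),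
      0 ≤ Real.sin (gF ϑ α) ∧ Real.sin (gF ϑ α) ≤ (4*π) * Real.sin α := by
  intro α hα
  have hπ := Real.pi_pos
  have h1 : 0 ≤ gF ϑ α := by rw [gF]; have := hα.1; linarith
  have h2 : gF ϑ α ≤ ϑ := by rw [gF]; have := hα.2; linarith
  have h3 : gF ϑ α ≤ 8*α := by rw [gF]; linarith
  constructor
  · exact Real.sin_nonneg_of_nonneg_of_le_pi h1 (by linarith)
  · have h4 : Real.sin (gF ϑ α) ≤ gF ϑ α := Real.sin_le h1
    have hα0 : 0 ≤ α := by have := hα.1; linarith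
    have hαπ : α ≤ π/2 := by have := hα.2; linarith
    have h5 : 2/π * α ≤ Real.sin α := Real.mul_le_sin hα0 hαπ
    have h6 : (4*π) * (2/π * α) = 8*α := by field_simp; ring
    nlinarith

lemma gU_hyp2 (hϑ0 : 0 < ϑ) (hϑπ : ϑ ≤ π/2) :
    ∀ β ∈ Icc (3*ϑ/4) ϑ,
      0 ≤ Real.sin (gU ϑ β) ∧ Real.sin (gU ϑ β) ≤ (1:ℝ) * Real.sin β := by
  intro β hβ
  have hπ := Real.pi_pos
  have h1 : 0 ≤ gU ϑ β := by rw [gU]; have := hβ.1; linarith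
  have h2 : gU ϑ β ≤ β := by rw [gU]; have := hβ.1; have := hβ.2; linarith
  have h3 : β ≤ π/2 := le_trans hβ.2 hϑπ
  constructor
  · exact Real.sin_nonneg_of_nonneg_of_le_pi h1 (by linarith)
  · rw [one_mul]
    exact Real.sin_le_sin_of_le_of_le_pi_div_two (by linarith) h3 h2

lemma gT_maps (hϑ0 : 0 < ϑ) : ∀ α ∈ Icc (ϑ/8) (ϑ/4), gT ϑ α ∈ Icc (3*ϑ/4) ϑ := by
  intro α hα
  constructor
  · rw [gT]; have := hα.1; linarith
  · rw [gT]; have := hα.2; linarith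

lemma gF_maps (hϑ0 : 0 < ϑ) : ∀ α ∈ Icc (ϑ/8) (ϑ/4), gF ϑ α ∈ Icc 0 ϑ := by
  intro α hα
  constructor
  · rw [gF]; have := hα.1; linarith
  · rw [gF]; have := hα.2; linarith

lemma gU_gT (α : ℝ) : gU ϑ (gT ϑ α) = α := by rw [gU, gT]; ring

-- core trig inequalities
lemma core_trig2 (hϑ0 : 0 < ϑ) (hϑπ : ϑ ≤ π/2) {α : ℝ} (hα : α ∈ Icc (ϑ/8) (ϑ/4)) :
    Real.sin (gT ϑ α - α) + Real.sin α - Real.sin (gT ϑ α)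
      ≤ (1 - Real.cos (gT ϑ α)) * Real.sin α := by
  set β := gT ϑ α with hβ
  have hπ := Real.pi_pos
  have hα1 := hα.1; have hα2 := hα.2
  have hβϑ : β ≤ ϑ := by rw [hβ, gT]; linarith
  have hβα : α ≤ β := by rw [hβ, gT]; linarith
  have hβ0 : 0 ≤ β := by rw [hβ, gT]; linarith
  -- sin β = sin(β-α)cos α + cos(β-α) sin α
  have hexp : Real.sin β = Real.sin (β-α)*Real.cos α + Real.cos (β-α)*Real.sin α := by
    rw [show β = (β - α) + α by ring, Real.sin_add]
    ring_nf
  -- cos(β-α) - cos β = 2 sin(β - α/2) sin(α/2)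
  have hcc : Real.cos (β-α) - Real.cos β = 2 * Real.sin (β - α/2) * Real.sin (α/2) := by
    rw [Real.cos_sub_cos]
    rw [show ((β-α) + β)/2 = β - α/2 by ring, show ((β-α) - β)/2 = -(α/2) by ring,
      Real.sin_neg]
    ring
  have h1cos : 1 - Real.cos α = 2 * Real.sin (α/2)^2 := one_sub_cos_eq α
  have hsinα : Real.sin α = 2 * Real.sin (α/2) * Real.cos (α/2) := by
    rw [show α = 2*(α/2) by ring, Real.sin_two_mul]
    ring_nf
  -- key: sin(β-α) ≤ 2 cos(α/2) sin(β - α/2)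
  have hkey : Real.sin (β-α) ≤ 2 * Real.cos (α/2) * Real.sin (β - α/2) := by
    have hmono : Real.sin (β-α) ≤ Real.sin (β - α/2) := by
      apply Real.sin_le_sin_of_le_of_le_pi_div_two (by linarith) (by linarith) (by linarith)
    have hcos12 : (1:ℝ)/2 ≤ Real.cos (α/2) := by
      have hc : Real.cos (α/2) ≥ Real.cos (π/3) := by
        apply Real.cos_le_cos_of_nonneg_of_le_pi (by linarith) (by linarith) (by linarith)
      rw [Real.cos_pi_div_three] at hc
      linarith
    have hsnn : 0 ≤ Real.sin (β - α/2) :=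
      Real.sin_nonneg_of_nonneg_of_le_pi (by linarith) (by linarith)
    nlinarith
  -- conclude
  have hgoal : Real.sin α * (Real.cos (β-α) - Real.cos β)
      ≥ Real.sin (β-α) * (1 - Real.cos α) := by
    rw [hcc, h1cos]
    rw [hsinα]
    have hs2 : 0 ≤ Real.sin (α/2) :=
      Real.sin_nonneg_of_nonneg_of_le_pi (by linarith) (by linarith)
    nlinarith [sq_nonneg (Real.sin (α/2))]
  nlinarith [hexp, hgoal]

lemma core_trig3 (hϑ0 : 0 < ϑ) (hϑπ : ϑ ≤ π/2) {α : ℝ} (hα : α ∈ Icc (ϑ/8) (ϑ/4)) :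
    (3/(2*π) - 1/4) * Real.sin (gT ϑ α) ≤ Real.sin (gT ϑ α - α) - Real.sin α := by
  set β := gT ϑ α with hβ
  have hπ := Real.pi_gt_three
  have hπ0 := Real.pi_pos
  have hα1 := hα.1; have hα2 := hα.2
  have hβα : β - α = α + ϑ/2 := by rw [hβ, gT]; ring
  have h1 : 2/π * (β - α) ≤ Real.sin (β - α) := by
    apply Real.mul_le_sin
    · rw [hβα]; linarith
    · rw [hβα]; linarith
  have h2 : Real.sin α ≤ α := Real.sin_le (by linarith)
  have h3 : Real.sin β ≤ β := Real.sin_le (by rw [hβ, gT]; linarith)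
  have h4 : β ≤ ϑ := by rw [hβ, gT]; linarith
  have h5 : Real.sin β ≤ ϑ := by linarith
  have hsβnn : 0 ≤ Real.sin β := by
    apply Real.sin_nonneg_of_nonneg_of_le_pi
    · rw [hβ, gT]; linarith
    · linarith
  -- sin(β-α) - sin α ≥ (2/π)(α + ϑ/2) - α = ϑ/π - (1-2/π)α ≥ ϑ(3/(2π) - 1/4)
  have h6 : Real.sin (β-α) - Real.sin α ≥ ϑ/π - (1 - 2/π)*α := by
    rw [hβα] at h1 ⊢
    have : 2/π * (α + ϑ/2) = ϑ/π + 2/π*α := by field_simp; ring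
    nlinarith
  have h7 : ϑ/π - (1 - 2/π)*α ≥ ϑ * (3/(2*π) - 1/4) := by
    have hc : 1 - 2/π ≥ 0 := by
      rw [ge_iff_le, sub_nonneg, div_le_one hπ0]; linarith
    have : (1 - 2/π)*α ≤ (1 - 2/π)*(ϑ/4) := by nlinarith
    have hid : ϑ/π - (1-2/π)*(ϑ/4) = ϑ * (3/(2*π) - 1/4) := by field_simp; ring
    linarith
  have h8 : ϑ * (3/(2*π) - 1/4) ≥ Real.sin β * (3/(2*π) - 1/4) := by
    have hc1 : (0:ℝ) < 3/(2*π) - 1/4 := by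
      rw [sub_pos, div_lt_div_iff₀ (by norm_num) (by positivity)]
      nlinarith [Real.pi_lt_d2]
    nlinarith
  nlinarith

end instmaps

section core
set_option maxHeartbeats 1000000
variable {N : ℕ} {e : Eucl N} {ϑ : ℝ} {K : Set (Eucl N)} {R : ℝ}

/-- The key convexity estimate: for `x` in the inner annulus, the oscillations at `x` and
at its meridian image dominate `δ = R - h_K(e)`. -/
lemma core_estimate (he : ‖e‖ = 1) (hϑ0 : 0 < ϑ) (hϑπ : ϑ ≤ π/2)
    (hK : IsCompact K) (hne : K.Nonempty) (hR : 0 < R)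
    (hKe : suppFn K e ≤ R * Real.cos ϑ)
    {x : Eucl N} (hx : x ∈ annE e (ϑ/8) (ϑ/4)) :
    (3/(2*π) - 1/4) * (R - suppFn K e) ≤
      |suppFn K x - R| + |suppFn K (Ψmap e (gT ϑ) x) - R| := by
  have hπ := Real.pi_gt_three
  have hπ0 := Real.pi_pos
  have hx1 : ‖x‖ = 1 := mem_annE_sphere hx
  have hang : ang e x ∈ Icc (ϑ/8) (ϑ/4) :=
    (mem_annE_iff he (by linarith) (by linarith) (by linarith) hx1).1 hx
  set α := ang e x with hαdef
  set β := gT ϑ α with hβdef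
  have hβmem : β ∈ Icc (3*ϑ/4) ϑ := gT_maps hϑ0 α hang
  have hsinα : 0 < Real.sin α :=
    Real.sin_pos_of_pos_of_lt_pi (by linarith [hang.1]) (by linarith [hang.2])
  have hsinβ : 0 < Real.sin β :=
    Real.sin_pos_of_pos_of_lt_pi (by linarith [hβmem.1]) (by linarith [hβmem.2])
  set y := Ψmap e (gT ϑ) x with hydef
  have hy1 : ‖y‖ = 1 := Ψmap_norm he hx1 (ne_of_gt hsinα)
  -- decomposition x = s • e + tt • y
  set s := Real.sin (β - α) / Real.sin β with hsdef
  set tt := Real.sin α / Real.sin β with httdef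
  have hyval : y = Real.cos β • e + (Real.sin β / Real.sin α) • (x - ⟪e,x⟫ • e) := rfl
  have hsβα : 0 ≤ Real.sin (β - α) := by
    apply Real.sin_nonneg_of_nonneg_of_le_pi
    · rw [hβdef, gT]; linarith [hang.1]
    · rw [hβdef, gT]; linarith [hang.2]
  have hs0 : 0 ≤ s := div_nonneg hsβα hsinβ.le
  have htt0 : 0 < tt := div_pos hsinα hsinβ
  have htt1 : tt ≤ 1 := by
    rw [httdef, div_le_one hsinβ]
    apply Real.sin_le_sin_of_le_of_le_pi_div_two (by linarith [hang.1])
      (by linarith [hβmem.2]) (by rw [hβdef, gT]; linarith [hang.1])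
  have hcoeff1 : tt * (Real.sin β / Real.sin α) = 1 := by
    rw [httdef]; field_simp
  have hcoeff2 : s + tt * Real.cos β = ⟪e,x⟫ := by
    rw [← cos_ang he hx1, ← hαdef, hsdef, httdef]
    rw [Real.sin_sub]
    field_simp
    ring
  have hdecomp : x = s • e + tt • y := by
    rw [hyval, smul_add, smul_smul, smul_smul, hcoeff1, one_smul, ← add_assoc,
      ← add_smul, hcoeff2]
    abel
  -- support function inequality
  have hsupp : suppFn K x ≤ s * suppFn K e + tt * suppFn K y := by
    conv_lhs => rw [hdecomp]
    exact suppFn_comb hK hne hs0 htt0.le e y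
  -- scalar inequalities
  have hs_mul : s * Real.sin β = Real.sin (β - α) := div_mul_cancel₀ _ (ne_of_gt hsinβ)
  have htt_mul : tt * Real.sin β = Real.sin α := div_mul_cancel₀ _ (ne_of_gt hsinβ)
  have hst : s + tt - 1 ≤ (1 - Real.cos β) * tt := by
    have h2 := core_trig2 hϑ0 hϑπ hang
    rw [← hβdef] at h2
    rw [← mul_le_mul_iff_left₀ hsinβ]
    nlinarith
  have hstt : 3/(2*π) - 1/4 ≤ s - tt := by
    have h3 := core_trig3 hϑ0 hϑπ hang
    rw [← hβdef] at h3
    rw [← mul_le_mul_iff_left₀ hsinβ]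
    nlinarith
  have hcosβ : Real.cos ϑ ≤ Real.cos β :=
    Real.cos_le_cos_of_nonneg_of_le_pi (by linarith [hβmem.1]) (by linarith) hβmem.2
  set δ := R - suppFn K e with hδdef
  have hδ1 : R * (1 - Real.cos ϑ) ≤ δ := by rw [hδdef]; nlinarith
  have hδ0 : 0 ≤ δ := by
    have hcos1 : Real.cos ϑ ≤ 1 := Real.cos_le_one ϑ
    nlinarith
  -- assemble
  set ωx := suppFn K x - R with hωx
  set ωy := suppFn K y - R with hωy
  have hkey : ωx ≤ R * (s + tt - 1) - s * δ + tt * ωy := by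
    have : suppFn K e = R - δ := by rw [hδdef]; ring
    rw [this] at hsupp
    rw [hωx, hωy]
    nlinarith
  have hR1 : R * (s + tt - 1) ≤ δ * tt := by
    have h1 : R * (s + tt - 1) ≤ R * ((1 - Real.cos β) * tt) := by
      apply mul_le_mul_of_nonneg_left hst hR.le
    have h2 : R * (1 - Real.cos β) ≤ R * (1 - Real.cos ϑ) := by nlinarith
    nlinarith
  have habs1 : -|ωx| ≤ ωx := neg_abs_le _
  have habs2 : ωy ≤ |ωy| := le_abs_self _
  have habs3 : 0 ≤ |ωy| := abs_nonneg _
  have hchain : (s - tt) * δ ≤ |ωx| + |ωy| := by nlinarith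
  calc (3/(2*π) - 1/4) * δ ≤ (s - tt) * δ := by nlinarith
    _ ≤ |ωx| + |ωy| := hchain

end core

section setmaps
set_option maxHeartbeats 1000000
variable {m : ℕ} {e : Eucl (m+1)} {ϑ : ℝ}

lemma exists_unit_orthogonal (hm : 1 ≤ m) (he : ‖e‖ = 1) :
    ∃ u : Eucl (m+1), ‖u‖ = 1 ∧ ⟪e, u⟫ = 0 := by
  obtain ⟨ρ, hρ⟩ : ∃ ρ : Eucl (m+1) ≃ₗᵢ[ℝ] Eucl (m+1), ρ (elast m) = e :=
    ⟨Submodule.reflection (ℝ ∙ (elast m - e))ᗮ, Submodule.reflection_sub ((norm_elast m).trans he.symm)⟩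
  refine ⟨ρ (EuclideanSpace.single 0 1), ?_, ?_⟩
  · rw [ρ.norm_map]; simp [EuclideanSpace.norm_single]
  · rw [← hρ, ρ.inner_map_map, inner_elast]
    rw [EuclideanSpace.single_apply]
    have hne : Fin.last m ≠ 0 := by
      intro h
      have := congrArg Fin.val h
      simp [Fin.last] at this
      omega
    simp [hne]

lemma mem_annE_iff' (he : ‖e‖ = 1) {l mm : ℝ} (hl : 0 ≤ l) (hlm : l ≤ mm) (hmπ : mm ≤ π)
    {x : Eucl (m+1)} (hx : ‖x‖ = 1) :
    x ∈ annE e l mm ↔ ang e x ∈ Icc l mm := mem_annE_iff he hl hlm hmπ hx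

lemma T_maps_A_to_B (he : ‖e‖ = 1) (hϑ0 : 0 < ϑ) (hϑπ : ϑ ≤ π/2) :
    ∀ x ∈ annE e (ϑ/8) (ϑ/4), Ψmap e (gT ϑ) x ∈ annE e (3*ϑ/4) ϑ := by
  intro x hx
  have hπ := Real.pi_pos
  have hx1 : ‖x‖ = 1 := mem_annE_sphere hx
  have hang : ang e x ∈ Icc (ϑ/8) (ϑ/4) :=
    (mem_annE_iff he (by linarith) (by linarith) (by linarith) hx1).1 hx
  have hsinα : 0 < Real.sin (ang e x) :=
    Real.sin_pos_of_pos_of_lt_pi (by linarith [hang.1]) (by linarith [hang.2])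
  have hgmem := gT_maps hϑ0 _ hang
  have hmem := Ψmap_mem he hx1 (ne_of_gt hsinα)
    (by linarith [hgmem.1] : 0 ≤ gT ϑ (ang e x)) (by linarith [hgmem.2])
  rw [mem_annE_iff he (by linarith) (by linarith) (by linarith) hmem.1]
  rw [hmem.2]
  exact hgmem

lemma UT_eq_id (he : ‖e‖ = 1) (hϑ0 : 0 < ϑ) (hϑπ : ϑ ≤ π/2) :
    ∀ x ∈ annE e (ϑ/8) (ϑ/4), Ψmap e (gU ϑ) (Ψmap e (gT ϑ) x) = x := by
  intro x hx
  have hπ := Real.pi_pos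
  have hx1 : ‖x‖ = 1 := mem_annE_sphere hx
  have hang : ang e x ∈ Icc (ϑ/8) (ϑ/4) :=
    (mem_annE_iff he (by linarith) (by linarith) (by linarith) hx1).1 hx
  have hsinα : 0 < Real.sin (ang e x) :=
    Real.sin_pos_of_pos_of_lt_pi (by linarith [hang.1]) (by linarith [hang.2])
  have hgmem := gT_maps hϑ0 _ hang
  have hsin' : Real.sin (gT ϑ (ang e x)) ≠ 0 := by
    apply ne_of_gt
    exact Real.sin_pos_of_pos_of_lt_pi (by linarith [hgmem.1]) (by linarith [hgmem.2])
  exact Ψmap_comp he hx1 (ne_of_gt hsinα) (by linarith [hgmem.1]) (by linarith [hgmem.2])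
    hsin' (gU_gT _)

lemma A_subset_cap (he : ‖e‖ = 1) (hϑ0 : 0 < ϑ) (hϑπ : ϑ ≤ π/2) :
    annE e (ϑ/8) (ϑ/4) ⊆ capC e (Real.cos ϑ) := by
  rintro x ⟨hx1, hx2, hx3⟩
  refine ⟨hx1, le_trans ?_ hx2⟩
  apply Real.cos_le_cos_of_nonneg_of_le_pi (by linarith) (by linarith) (by linarith)

lemma B_subset_cap (he : ‖e‖ = 1) (hϑ0 : 0 < ϑ) (hϑπ : ϑ ≤ π/2) :
    annE e (3*ϑ/4) ϑ ⊆ capC e (Real.cos ϑ) := by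
  rintro x ⟨hx1, hx2, hx3⟩
  exact ⟨hx1, hx2⟩

lemma z_eq_e_of_inner_one {z : Eucl (m+1)} (he : ‖e‖ = 1) (hz : ‖z‖ = 1)
    (h1 : ⟪e, z⟫ = 1) : z = e := by
  have h : ‖z - e‖^2 = 0 := by
    rw [norm_sub_sq_real, hz, he]
    linarith [real_inner_comm z e, h1]
  have := norm_nonneg (z - e)
  have h2 : ‖z - e‖ = 0 := by nlinarith
  rw [norm_sub_eq_zero_iff] at h2
  exact h2

lemma cap_subset_F_image (hm : 1 ≤ m) (he : ‖e‖ = 1) (hϑ0 : 0 < ϑ) (hϑπ : ϑ ≤ π/2) :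
    capC e (Real.cos ϑ) ⊆ Ψmap e (gF ϑ) '' (annE e (ϑ/8) (ϑ/4)) := by
  have hπ := Real.pi_pos
  rintro z ⟨hz1, hz2⟩
  rw [mem_sphere_iff_norm, sub_zero] at hz1
  have hzin : |⟪e,z⟫| ≤ 1 := inner_abs_le he hz1
  set α' := ang e z with hα'
  have hα'mem : α' ∈ Icc 0 π := ang_mem
  have hcosα' : Real.cos α' = ⟪e,z⟫ := cos_ang he hz1
  have hα'ϑ : α' ≤ ϑ := by
    have h1 : Real.cos ϑ ≤ Real.cos α' := by rw [hcosα']; exact hz2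
    by_contra hcon
    push_neg at hcon
    have := Real.strictAntiOn_cos ⟨by linarith, by linarith⟩ ⟨hα'mem.1, hα'mem.2⟩ hcon
    linarith
  -- choose u
  rcases eq_or_lt_of_le (Real.sin_nonneg_of_nonneg_of_le_pi hα'mem.1 hα'mem.2) with hsin0 | hsinpos
  · -- sin α' = 0, so α' = 0 and z = e
    have hα'0 : α' = 0 := by
      by_contra hcon
      have h0 : 0 < α' := lt_of_le_of_ne hα'mem.1 (Ne.symm hcon)
      have := Real.sin_pos_of_pos_of_lt_pi h0 (by linarith)
      linarith
    have hz_e : z = e := by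
      apply z_eq_e_of_inner_one he hz1
      rw [← hcosα', hα'0, Real.cos_zero]
    obtain ⟨u, hu1, hu2⟩ := exists_unit_orthogonal hm he
    refine ⟨pointAt e (ϑ/8) u, ?_, ?_⟩
    · rw [mem_annE_iff he (by linarith) (by linarith) (by linarith)
        (pointAt_norm he hu1 hu2 _)]
      rw [pointAt_ang he hu2 (by linarith) (by linarith)]
      exact ⟨le_refl _, by linarith⟩
    · rw [Ψmap_pointAt he hu1 hu2 (by linarith) (by linarith)
        (ne_of_gt (Real.sin_pos_of_pos_of_lt_pi (by linarith) (by linarith)))]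
      rw [show gF ϑ (ϑ/8) = 0 by rw [gF]; ring]
      rw [pointAt, Real.cos_zero, Real.sin_zero, one_smul, zero_smul, add_zero, hz_e]
  · -- sin α' > 0
    set u := (Real.sin α')⁻¹ • (z - ⟪e,z⟫ • e) with hu
    have hu1 : ‖u‖ = 1 := by
      rw [hu, norm_smul, norm_wpart he hz1, ← hα', Real.norm_eq_abs,
        abs_of_pos (inv_pos.2 hsinpos), inv_mul_cancel₀ (ne_of_gt hsinpos)]
    have hu2 : ⟪e, u⟫ = 0 := by
      rw [hu, real_inner_smul_right, inner_e_wpart he, mul_zero]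
    set γ := (α' + ϑ)/8 with hγ
    have hγmem : γ ∈ Icc (ϑ/8) (ϑ/4) := by
      constructor
      · rw [hγ]; linarith [hα'mem.1]
      · rw [hγ]; linarith
    refine ⟨pointAt e γ u, ?_, ?_⟩
    · rw [mem_annE_iff he (by linarith) (by linarith) (by linarith)
        (pointAt_norm he hu1 hu2 _)]
      rw [pointAt_ang he hu2 (by linarith [hα'mem.1]) (by linarith [hγmem.2])]
      exact hγmem
    · rw [Ψmap_pointAt he hu1 hu2 (by linarith [hγmem.1]) (by linarith [hγmem.2])
        (ne_of_gt (Real.sin_pos_of_pos_of_lt_pi (by linarith [hγmem.1])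
          (by linarith [hγmem.2])))]
      rw [show gF ϑ γ = α' by rw [gF, hγ]; ring]
      rw [pointAt, hu, smul_smul, mul_inv_cancel₀ (ne_of_gt hsinpos), one_smul, hcosα']
      abel

end setmaps


end dev

section finalproof
set_option maxHeartbeats 4000000

/-- the higher-dimensional maximal-function corollary. -/
theorem stmt_8 (n : ℕ) (hn : 2 ≤ n) :
    ∃ C : ℝ, 0 < C ∧
      ∀ K : Set (Eucl n), Convex ℝ K → IsCompact K → (0 : Eucl n) ∈ interior K →
        ∀ R : ℝ, 0 < R → ∀ e ∈ sphere (0 : Eucl n) 1, ∀ ϑ ∈ Ioo 0 (π / 2),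
          suppFn K e ≤ R * Real.cos ϑ →
          |suppFn K e - R| ≤
            C * ((sphσ n (cap e ϑ)).toReal)⁻¹ *
              ∫ x in cap e ϑ, |suppFn K x - R| ∂(sphσ n) := by
  obtain ⟨m, rfl⟩ : ∃ m, n = m + 1 := ⟨n - 1, by omega⟩
  have hm : 1 ≤ m := by omega
  have hπ := Real.pi_gt_three
  have hπ0 := Real.pi_pos
  set c₁ : ℝ := 3/(2*π) - 1/4 with hc₁def
  have hc₁pos : 0 < c₁ := by
    rw [hc₁def, sub_pos, div_lt_div_iff₀ (by norm_num) (by positivity)]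
    nlinarith [Real.pi_lt_d2]
  set lamd : ℝ := (4*π) ^ (m:ℝ) with hlamddef
  have hlamdpos : 0 < lamd := by rw [hlamddef]; positivity
  refine ⟨4*lamd/c₁, by positivity, ?_⟩
  intro K hKconv hKcomp hK0 R hR e he ϑ hϑ hKe
  have he1 : ‖e‖ = 1 := by rwa [mem_sphere_iff_norm, sub_zero] at he
  obtain ⟨hϑ0, hϑhalf⟩ := hϑ
  have hϑπ : ϑ ≤ π/2 := le_of_lt hϑhalf
  have hne : K.Nonempty := ⟨0, interior_subset hK0⟩
  set δ := R - suppFn K e with hδdef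
  have hcosϑ1 : Real.cos ϑ < 1 := by
    have h := Real.strictAntiOn_cos (a := 0) (b := ϑ) ⟨le_rfl, hπ0.le⟩
      ⟨hϑ0.le, by linarith⟩ hϑ0
    rwa [Real.cos_zero] at h
  have hcosϑ0 : 0 ≤ Real.cos ϑ := Real.cos_nonneg_of_mem_Icc ⟨by linarith, hϑπ⟩
  have hδpos : 0 < δ := by rw [hδdef]; nlinarith
  have hLHS : |suppFn K e - R| = δ := by
    rw [hδdef, abs_of_nonpos (by nlinarith)]
    ring
  rw [hLHS]
  -- measure exponent bookkeeping
  have hexp : ((m+1 : ℕ):ℝ) - 1 = (m:ℝ) := by push_cast; ring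
  have hσdef : sphσ (m+1) = (μH[(m:ℝ)] (sphere (0:Eucl (m+1)) 1))⁻¹ •
      (μH[(m:ℝ)]).restrict (sphere (0:Eucl (m+1)) 1) := by
    rw [sphσ, hexp]
  have hsphm : MeasurableSet (sphere (0:Eucl (m+1)) 1) :=
    (isClosed_sphere).measurableSet
  set μS := μH[(m:ℝ)] (sphere (0:Eucl (m+1)) 1) with hμS
  have hSfin : μS < ∞ := sphere_hmeas_finite m
  have hσapply : ∀ X : Set (Eucl (m+1)), X ⊆ sphere (0:Eucl (m+1)) 1 →
      sphσ (m+1) X = μS⁻¹ * μH[(m:ℝ)] X := by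
    intro X hX
    rw [hσdef, Measure.smul_apply, Measure.restrict_apply' hsphm,
      inter_eq_self_of_subset_left hX, smul_eq_mul]
  -- cap facts
  have hcap_capC : cap e ϑ = capC e (Real.cos ϑ) := rfl
  have hcap_sub_sphere : cap e ϑ ⊆ sphere (0:Eucl (m+1)) 1 := fun x hx => hx.1
  have hcappos : 0 < μH[(m:ℝ)] (cap e ϑ) := by
    rw [hcap_capC]
    exact capC_pos hm he1 hcosϑ0 hcosϑ1
  have hSpos : 0 < μS := lt_of_lt_of_le hcappos (measure_mono hcap_sub_sphere)
  have hcapfin : μH[(m:ℝ)] (cap e ϑ) < ∞ :=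
    lt_of_le_of_lt (measure_mono hcap_sub_sphere) hSfin
  haveI hσfinite : IsFiniteMeasure (sphσ (m+1)) := by
    constructor
    rw [hσdef, Measure.smul_apply, Measure.restrict_apply' hsphm, univ_inter, smul_eq_mul,
      ENNReal.inv_mul_cancel (ne_of_gt hSpos) hSfin.ne]
    exact ENNReal.one_lt_top
  -- function f
  have hfc : Continuous (fun x : Eucl (m+1) => |suppFn K x - R|) :=
    ((suppFn_continuous hKcomp hne).sub continuous_const).abs
  set ε := c₁ * δ/2 with hεdef
  set G := {x ∈ cap e ϑ | ε ≤ |suppFn K x - R|} with hGdef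
  have hGsub : G ⊆ cap e ϑ := fun x hx => hx.1
  have hG_sub_sphere : G ⊆ sphere (0:Eucl (m+1)) 1 := subset_trans hGsub hcap_sub_sphere
  -- sets A, B
  set A := annE e (ϑ/8) (ϑ/4) with hAdef
  set B := annE e (3*ϑ/4) ϑ with hBdef
  -- Lipschitz data
  set Λ : ℝ≥0 := Real.toNNReal (4*π) with hΛdef
  have hΛreal : (Λ:ℝ) = 4*π := Real.coe_toNNReal _ (by positivity)
  have hTlip : LipschitzOnWith Λ (Ψmap e (gT ϑ)) A := by
    apply LipschitzOnWith.of_dist_le_mul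
    intro x hx y hy
    have hx1 := mem_annE_sphere hx
    have hy1 := mem_annE_sphere hy
    have hax := (mem_annE_iff he1 (by linarith) (by linarith) (by linarith) hx1).1 hx
    have hay := (mem_annE_iff he1 (by linarith) (by linarith) (by linarith) hy1).1 hy
    have := Ψmap_dist_le he1 (by positivity : 0 < ϑ/8) (by linarith : ϑ/4 < π)
      (by positivity : (0:ℝ) ≤ 4*π) (gT_hyp1 hϑ0 hϑπ) (gT_hyp2 hϑ0 hϑπ) hx1 hy1 hax hay
    rwa [hΛreal]
  have hFlip : LipschitzOnWith Λ (Ψmap e (gF ϑ)) A := by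
    apply LipschitzOnWith.of_dist_le_mul
    intro x hx y hy
    have hx1 := mem_annE_sphere hx
    have hy1 := mem_annE_sphere hy
    have hax := (mem_annE_iff he1 (by linarith) (by linarith) (by linarith) hx1).1 hx
    have hay := (mem_annE_iff he1 (by linarith) (by linarith) (by linarith) hy1).1 hy
    have := Ψmap_dist_le he1 (by positivity : 0 < ϑ/8) (by linarith : ϑ/4 < π)
      (by positivity : (0:ℝ) ≤ 4*π) (gF_hyp1 hϑ0 hϑπ) (gF_hyp2 hϑ0 hϑπ) hx1 hy1 hax hay
    rwa [hΛreal]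
  have hUlip : LipschitzOnWith 1 (Ψmap e (gU ϑ)) B := by
    apply LipschitzOnWith.of_dist_le_mul
    intro x hx y hy
    have hx1 := mem_annE_sphere hx
    have hy1 := mem_annE_sphere hy
    have hax := (mem_annE_iff he1 (by positivity) (by linarith) (by linarith) hx1).1 hx
    have hay := (mem_annE_iff he1 (by positivity) (by linarith) (by linarith) hy1).1 hy
    have := Ψmap_dist_le he1 (by positivity : 0 < 3*ϑ/4) (by linarith : ϑ < π)
      (by norm_num : (0:ℝ) ≤ 1) (gU_hyp1 hϑ0 hϑπ) (gU_hyp2 hϑ0 hϑπ) hx1 hy1 hax hay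
    rw [one_mul] at this
    simpa using this
  -- measure chain
  have hTG_sub : Ψmap e (gT ϑ) '' (A \ G) ⊆ G := by
    rintro _ ⟨x, ⟨hxA, hxnG⟩, rfl⟩
    have hxcap : x ∈ cap e ϑ := A_subset_cap he1 hϑ0 hϑπ hxA
    have hfx : |suppFn K x - R| < ε := by
      by_contra hcon
      push_neg at hcon
      exact hxnG ⟨hxcap, hcon⟩
    have hcore := core_estimate he1 hϑ0 hϑπ hKcomp hne hR hKe hxA
    refine ⟨B_subset_cap he1 hϑ0 hϑπ (T_maps_A_to_B he1 hϑ0 hϑπ x hxA), ?_⟩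
    rw [← hc₁def, ← hδdef] at hcore
    have : c₁ * δ - ε ≤ |suppFn K (Ψmap e (gT ϑ) x) - R| := by linarith
    calc ε = c₁ * δ - ε := by rw [hεdef]; ring
      _ ≤ _ := this
  have hAG_sub : A \ G ⊆ Ψmap e (gU ϑ) '' (Ψmap e (gT ϑ) '' (A \ G)) := by
    intro x hx
    refine ⟨Ψmap e (gT ϑ) x, mem_image_of_mem _ hx, ?_⟩
    exact UT_eq_id he1 hϑ0 hϑπ x hx.1
  have hTAB : Ψmap e (gT ϑ) '' (A \ G) ⊆ B := by
    rintro _ ⟨x, hx, rfl⟩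
    exact T_maps_A_to_B he1 hϑ0 hϑπ x hx.1
  have hAG1 : μH[(m:ℝ)] (A \ G) ≤ μH[(m:ℝ)] G := by
    calc μH[(m:ℝ)] (A \ G)
        ≤ μH[(m:ℝ)] (Ψmap e (gU ϑ) '' (Ψmap e (gT ϑ) '' (A \ G))) :=
          measure_mono hAG_sub
      _ ≤ (1:ℝ≥0∞)^(m:ℝ) * μH[(m:ℝ)] (Ψmap e (gT ϑ) '' (A \ G)) :=
          (hUlip.mono hTAB).hausdorffMeasure_image_le (Nat.cast_nonneg m)
      _ = μH[(m:ℝ)] (Ψmap e (gT ϑ) '' (A \ G)) := by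
          norm_num
      _ ≤ μH[(m:ℝ)] G := measure_mono hTG_sub
  have hcapA : μH[(m:ℝ)] (cap e ϑ) ≤ (Λ:ℝ≥0∞)^(m:ℝ) * μH[(m:ℝ)] A := by
    calc μH[(m:ℝ)] (cap e ϑ) ≤ μH[(m:ℝ)] (Ψmap e (gF ϑ) '' A) := by
          rw [hcap_capC]
          exact measure_mono (cap_subset_F_image hm he1 hϑ0 hϑπ)
      _ ≤ (Λ:ℝ≥0∞)^(m:ℝ) * μH[(m:ℝ)] A :=
          hFlip.hausdorffMeasure_image_le (Nat.cast_nonneg m)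
  have hA_split : μH[(m:ℝ)] A ≤ μH[(m:ℝ)] G + μH[(m:ℝ)] G := by
    calc μH[(m:ℝ)] A ≤ μH[(m:ℝ)] (A ∩ G) + μH[(m:ℝ)] (A \ G) :=
          measure_le_inter_add_diff _ _ _
      _ ≤ μH[(m:ℝ)] G + μH[(m:ℝ)] G :=
          add_le_add (measure_mono inter_subset_right) hAG1
  have hchain : μH[(m:ℝ)] (cap e ϑ) ≤ 2 * (Λ:ℝ≥0∞)^(m:ℝ) * μH[(m:ℝ)] G := by
    calc μH[(m:ℝ)] (cap e ϑ) ≤ (Λ:ℝ≥0∞)^(m:ℝ) * μH[(m:ℝ)] A := hcapA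
      _ ≤ (Λ:ℝ≥0∞)^(m:ℝ) * (μH[(m:ℝ)] G + μH[(m:ℝ)] G) :=
          mul_le_mul_right hA_split _
      _ = 2 * (Λ:ℝ≥0∞)^(m:ℝ) * μH[(m:ℝ)] G := by ring
  -- σ versions
  have hσcap : sphσ (m+1) (cap e ϑ) = μS⁻¹ * μH[(m:ℝ)] (cap e ϑ) :=
    hσapply _ hcap_sub_sphere
  have hσG : sphσ (m+1) G = μS⁻¹ * μH[(m:ℝ)] G := hσapply _ hG_sub_sphere
  have hσchain : sphσ (m+1) (cap e ϑ) ≤ 2 * (Λ:ℝ≥0∞)^(m:ℝ) * sphσ (m+1) G := by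
    rw [hσcap, hσG]
    calc μS⁻¹ * μH[(m:ℝ)] (cap e ϑ) ≤ μS⁻¹ * (2 * (Λ:ℝ≥0∞)^(m:ℝ) * μH[(m:ℝ)] G) :=
          mul_le_mul_right hchain _
      _ = 2 * (Λ:ℝ≥0∞)^(m:ℝ) * (μS⁻¹ * μH[(m:ℝ)] G) := by ring
  -- positivity and finiteness of σ cap
  have hσcap_pos : 0 < sphσ (m+1) (cap e ϑ) := by
    rw [hσcap]
    apply ENNReal.mul_pos
    · exact ENNReal.inv_ne_zero.2 hSfin.ne
    · exact hcappos.ne'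
  have hσcap_fin : sphσ (m+1) (cap e ϑ) ≠ ∞ := measure_ne_top _ _
  have hσG_fin : sphσ (m+1) G ≠ ∞ := measure_ne_top _ _
  -- integrability
  have hcap_eq : cap e ϑ = sphere (0:Eucl (m+1)) 1 ∩ {x | Real.cos ϑ ≤ ⟪e,x⟫} := by
    ext x; simp [cap, mem_sep_iff, mem_inter_iff, mem_setOf_eq]
  have hinner_cont : Continuous (fun x : Eucl (m+1) => ⟪e,x⟫) :=
    continuous_const.inner continuous_id
  have hcap_compact : IsCompact (cap e ϑ) := by
    rw [hcap_eq]
    exact (isCompact_sphere 0 1).inter_right (isClosed_le continuous_const hinner_cont)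
  have hGmeas : MeasurableSet G := by
    have : G = cap e ϑ ∩ {x | ε ≤ |suppFn K x - R|} := by
      ext x; simp [hGdef, mem_sep_iff, mem_inter_iff, mem_setOf_eq]
    rw [this]
    exact (hcap_compact.isClosed.measurableSet).inter
      ((isClosed_le continuous_const hfc).measurableSet)
  have hInt : IntegrableOn (fun x => |suppFn K x - R|) (cap e ϑ) (sphσ (m+1)) :=
    hfc.continuousOn.integrableOn_compact hcap_compact
  have hIntG : IntegrableOn (fun x => |suppFn K x - R|) G (sphσ (m+1)) :=
    hInt.mono_set hGsub
  -- integral bounds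
  have hIG : ε * (sphσ (m+1) G).toReal ≤ ∫ x in G, |suppFn K x - R| ∂(sphσ (m+1)) :=
    setIntegral_ge_of_const_le_real hGmeas hσG_fin (fun x hx => hx.2) hIntG
  have hGI : (∫ x in G, |suppFn K x - R| ∂(sphσ (m+1))) ≤
      ∫ x in cap e ϑ, |suppFn K x - R| ∂(sphσ (m+1)) :=
    setIntegral_mono_set hInt
      (Filter.Eventually.of_forall (fun x => abs_nonneg _))
      (HasSubset.Subset.eventuallyLE hGsub)
  -- real arithmetic
  set a := (sphσ (m+1) (cap e ϑ)).toReal with hadef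
  set g := (sphσ (m+1) G).toReal with hgdef
  have ha_pos : 0 < a := ENNReal.toReal_pos hσcap_pos.ne' hσcap_fin
  have hg_nonneg : 0 ≤ g := ENNReal.toReal_nonneg
  have hRHS_toReal : ((2 * (Λ:ℝ≥0∞)^(m:ℝ) * sphσ (m+1) G)).toReal = 2 * lamd * g := by
    rw [ENNReal.toReal_mul, ENNReal.toReal_mul]
    have h1 : ((2:ℝ≥0∞)).toReal = 2 := by simp
    have h2 : (((Λ:ℝ≥0∞))^(m:ℝ)).toReal = lamd := by
      rw [← ENNReal.toReal_rpow, ENNReal.coe_toReal, hΛreal, hlamddef]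
    rw [h1, h2, hgdef]
  have hareal : a ≤ 2 * lamd * g := by
    rw [hadef, ← hRHS_toReal]
    apply ENNReal.toReal_mono _ hσchain
    apply ENNReal.mul_ne_top
    · apply ENNReal.mul_ne_top
      · norm_num
      · exact ENNReal.rpow_ne_top_of_nonneg (Nat.cast_nonneg m) ENNReal.coe_ne_top
    · exact hσG_fin
  set I := ∫ x in cap e ϑ, |suppFn K x - R| ∂(sphσ (m+1)) with hIdef
  have hI1 : ε * g ≤ I := le_trans hIG hGI
  have hεpos : 0 < ε := by rw [hεdef]; positivity
  have hfinal : δ ≤ 4*lamd/c₁ * a⁻¹ * I := by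
    have hga : a / (2*lamd) ≤ g := by
      rw [div_le_iff₀ (by positivity)]
      nlinarith
    have h2 : ε * (a / (2*lamd)) ≤ I := by
      calc ε * (a / (2*lamd)) ≤ ε * g := by nlinarith
        _ ≤ I := hI1
    have h3 : 4*lamd/c₁ * a⁻¹ * (ε * (a / (2*lamd))) ≤ 4*lamd/c₁ * a⁻¹ * I := by
      apply mul_le_mul_of_nonneg_left h2 (by positivity)
    have h4 : 4*lamd/c₁ * a⁻¹ * (ε * (a / (2*lamd))) = δ := by
      rw [hεdef]
      field_simp
      ring
    linarith
  exact hfinal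


end finalproof

end
end

section
/- Let n ≥ 2, δ ∈ (0, 1/25), and let K ⊂ ℝⁿ be an origin-symmetric convex body with (1−δ) B₂ⁿ ⊆ K ⊆ (1+δ) B₂ⁿ. Then the radial function ρ_K is Lipschitz on S^{n−1} with Lipschitz constant 5√δ, i.e., |ρ_K(x) − ρ_K(y)| ≤ 5√δ |x−y| for all x, y ∈ S^{n−1}. -/
open MeasureTheory Metric Set Real
open scoped ENNReal RealInnerProductSpace Pointwise

noncomputable section

set_option maxHeartbeats 1000000 in
lemma radFn_le_aux {n : ℕ} (δ : ℝ) (hδ : δ ∈ Ioo (0 : ℝ) (1 / 25))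
    (K : Set (Eucl n)) (hconv : Convex ℝ K)
    (h1 : closedBall (0 : Eucl n) (1 - δ) ⊆ K)
    (h2 : K ⊆ closedBall (0 : Eucl n) (1 + δ)) :
    ∀ x ∈ sphere (0 : Eucl n) 1, ∀ y ∈ sphere (0 : Eucl n) 1,
      radFn K x ≤ radFn K y + 5 * Real.sqrt δ * ‖x - y‖ := by
  obtain ⟨hδ0, hδ25⟩ := hδ
  have hsd0 : 0 ≤ Real.sqrt δ := Real.sqrt_nonneg δ
  have hsdsq : Real.sqrt δ ^ 2 = δ := Real.sq_sqrt hδ0.le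
  have hδ5 : Real.sqrt δ < 1 / 5 := by
    have h := Real.sqrt_lt_sqrt hδ0.le hδ25
    rwa [show (1/25:ℝ) = (1/5)^2 by norm_num,
      Real.sqrt_sq (by norm_num : (0:ℝ) ≤ 1/5)] at h
  intro x hx y hy
  rw [mem_sphere_zero_iff_norm] at hx hy
  set r : ℝ := 1 - δ with hrdef
  clear_value r
  have hr0 : (0:ℝ) < r := by rw [hrdef]; linarith only [hδ25]
  have hr1 : r ≤ 1 := by rw [hrdef]; linarith only [hδ0]
  have hr2425 : (24:ℝ)/25 ≤ r := by rw [hrdef]; linarith only [hδ25]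
  -- basic facts about the sets defining radFn
  have bdd : ∀ θ : Eucl n, ‖θ‖ = 1 → BddAbove {t : ℝ | 0 < t ∧ t • θ ∈ K} := by
    intro θ hθ
    refine ⟨1 + δ, fun t ht => ?_⟩
    obtain ⟨ht0, htK⟩ := ht
    have := mem_closedBall_zero_iff.1 (h2 htK)
    rwa [norm_smul, hθ, mul_one, Real.norm_eq_abs, abs_of_pos ht0] at this
  have hmem : ∀ θ : Eucl n, ‖θ‖ = 1 → r ∈ {t : ℝ | 0 < t ∧ t • θ ∈ K} := by
    intro θ hθ
    refine ⟨hr0, h1 (mem_closedBall_zero_iff.2 ?_)⟩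
    rw [norm_smul, hθ, mul_one, Real.norm_eq_abs, abs_of_pos hr0]
  have hσ : r ≤ radFn K y := le_csSup (bdd y hy) (hmem y hy)
  show sSup {t : ℝ | 0 < t ∧ t • x ∈ K} ≤ _
  refine csSup_le ⟨r, hmem x hx⟩ fun t ht => ?_
  obtain ⟨ht0, htK⟩ := ht
  set ρ : ℝ := max t r with hρdef
  have htρ : t ≤ ρ := le_max_left _ _
  have hρr : r ≤ ρ := le_max_right _ _
  have hρ0 : 0 < ρ := lt_of_lt_of_le hr0 hρr
  have hρK : ρ • x ∈ K := by
    rcases le_total t r with h | h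
    · rw [hρdef, max_eq_right h]; exact (hmem x hx).2
    · rw [hρdef, max_eq_left h]; exact htK
  have hρub : ρ ≤ 1 + δ := by
    have h2' := mem_closedBall_zero_iff.1 (h2 htK)
    rw [norm_smul, hx, mul_one, Real.norm_eq_abs, abs_of_pos ht0] at h2'
    refine max_le h2' ?_
    rw [hrdef]; linarith only [hδ0]
  clear_value ρ
  clear htK
  suffices hs : ρ ≤ radFn K y + 5 * Real.sqrt δ * ‖x - y‖ by linarith only [hs, htρ]
  set e : ℝ := ‖x - y‖ with hedef
  have he0 : 0 ≤ e := hedef ▸ norm_nonneg _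
  set c : ℝ := ⟪x, y⟫ with hcdef
  have hc1 : |c| ≤ 1 := by
    have h := abs_real_inner_le_norm x y
    rw [hx, hy, mul_one] at h
    rw [hcdef]; exact h
  have hcle : c ≤ 1 := (abs_le.1 hc1).2
  have hcge : -1 ≤ c := (abs_le.1 hc1).1
  have hee : e ^ 2 = 2 - 2 * c := by
    rw [hedef, hcdef, norm_sub_sq_real, hx, hy]; ring
  clear_value e c
  set a : ℝ := Real.sqrt (ρ ^ 2 - r ^ 2) with hadef
  have ha2 : a ^ 2 = ρ ^ 2 - r ^ 2 := by
    rw [hadef]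
    refine Real.sq_sqrt ?_
    have hmul : 0 ≤ (ρ - r) * (ρ + r) :=
      mul_nonneg (by linarith only [hρr]) (by linarith only [hρ0, hr0])
    nlinarith only [hmul]
  have ha0 : 0 ≤ a := hadef ▸ Real.sqrt_nonneg _
  clear_value a
  have ha2d : a ≤ 2 * Real.sqrt δ := by
    have ha2' := ha2
    rw [hrdef] at ha2'
    have hmul : 0 ≤ (1 + δ - ρ) * (1 + δ + ρ) :=
      mul_nonneg (by linarith only [hρub]) (by linarith only [hρ0, hδ0])
    have hsq : a ^ 2 ≤ (2 * Real.sqrt δ) ^ 2 := by nlinarith only [ha2', hmul, hsdsq]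
    nlinarith only [hsq, ha0, hsd0]
  set s : ℝ := Real.sqrt (1 - c ^ 2) with hsdef
  have hs2 : s ^ 2 = 1 - c ^ 2 := by
    rw [hsdef]
    refine Real.sq_sqrt ?_
    nlinarith only [mul_nonneg (by linarith only [hcle] : (0:ℝ) ≤ 1 - c)
      (by linarith only [hcge] : (0:ℝ) ≤ 1 + c)]
  have hs0 : 0 ≤ s := hsdef ▸ Real.sqrt_nonneg _
  clear_value s
  have hse : s ≤ e := by
    have h' : s ^ 2 ≤ e ^ 2 := by
      have := sq_nonneg (1 - c)
      linarith only [hs2, hee, this]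
    calc s = Real.sqrt (s ^ 2) := (Real.sqrt_sq hs0).symm
      _ ≤ Real.sqrt (e ^ 2) := Real.sqrt_le_sqrt h'
      _ = e := Real.sqrt_sq he0
  by_cases hc12 : c < 12 / 13
  · -- the two directions are far apart; the trivial bound suffices
    have he2 : (2:ℝ)/13 ≤ e ^ 2 := by rw [hee]; linarith only [hc12]
    have he3 : (1:ℝ)/3 ≤ e := by nlinarith only [he2, he0]
    have hρ' : ρ ≤ r + 2 * δ := by rw [hrdef]; linarith only [hρub]
    have hprod : 5 * Real.sqrt δ * (1/3) ≤ 5 * Real.sqrt δ * e :=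
      mul_le_mul_of_nonneg_left he3 (by positivity)
    have hprod2 : Real.sqrt δ * Real.sqrt δ ≤ Real.sqrt δ * (1/5) :=
      mul_le_mul_of_nonneg_left hδ5.le hsd0
    linarith only [hσ, hρ', hsdsq, hprod, hprod2, hsd0]
  · rw [not_lt] at hc12
    have hc0 : (0:ℝ) < c := by linarith only [hc12]
    by_cases hacrs : a * c < r * s
    · -- ρ is close to r
      have hkey : (ρ - r) * (ρ + r) = a ^ 2 := by rw [ha2]; ring
      have hA1 : a * (a * c) ≤ a * (r * s) := mul_le_mul_of_nonneg_left hacrs.le ha0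
      have hA2 : a * (r * s) ≤ (2 * Real.sqrt δ) * e := by
        have hrs : r * s ≤ e := by
          have h' : r * s ≤ 1 * s := mul_le_mul_of_nonneg_right hr1 hs0
          linarith only [h', hse]
        exact mul_le_mul ha2d hrs (mul_nonneg hr0.le hs0) (by positivity)
      have h48 : (48:ℝ)/25 ≤ ρ + r := by linarith only [hρr, hr2425]
      have hP : (ρ - r) * ((ρ + r) * c) = a * (a * c) := by linear_combination c * hkey
      have hstep := mul_le_mul_of_nonneg_left
        (mul_le_mul h48 hc12 (by norm_num) (by linarith only [h48] : (0:ℝ) ≤ ρ + r))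
        (by linarith only [hρr] : (0:ℝ) ≤ ρ - r)
      linarith only [hstep, hP, hA1, hA2, hσ, mul_nonneg hsd0 he0]
    · rw [not_lt] at hacrs
      -- main case: tangent line construction
      by_cases hs0' : s = 0
      · -- x = y
        have hc2 : c ^ 2 = 1 := by rw [hs0'] at hs2; nlinarith only [hs2]
        have hcc : c = 1 := by nlinarith only [hc2, hc12]
        have he2' : e ^ 2 = 0 := by rw [hee, hcc]; ring
        have he' : e = 0 := by nlinarith only [he2', he0]
        have hxy : x = y := by
          have h' : ‖x - y‖ = 0 := by rw [← hedef]; exact he'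
          rwa [norm_sub_eq_zero_iff] at h'
        have hρσ : ρ ≤ radFn K y := le_csSup (bdd y hy) ⟨hρ0, hxy ▸ hρK⟩
        have hnn : (0:ℝ) ≤ 5 * Real.sqrt δ * e := by positivity
        linarith only [hρσ, hnn]
      · have hspos : 0 < s := lt_of_le_of_ne hs0 (Ne.symm hs0')
        have hapos : 0 < a := by
          rcases lt_or_eq_of_le ha0 with h | h
          · exact h
          · exfalso
            rw [← h, zero_mul] at hacrs
            have := mul_pos hr0 hspos
            linarith only [hacrs, this]
        set D : ℝ := r * c + a * s with hDdef
        have hD0 : 0 < D := by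
          rw [hDdef]
          have h' := mul_pos hr0 hc0
          have h'' := mul_nonneg ha0 hs0
          linarith only [h', h'']
        clear_value D
        set u : Eucl n := s⁻¹ • (y - c • x) with hudef
        have hyu : y = c • x + s • u := by
          rw [hudef, smul_inv_smul₀ (ne_of_gt hspos)]; abel
        have hxu : ⟪x, u⟫ = 0 := by
          rw [hudef, real_inner_smul_right, inner_sub_right, real_inner_smul_right,
            real_inner_self_eq_norm_sq, hx, ← hcdef]
          ring
        have huu : ‖u‖ ^ 2 = 1 := by
          have hyc : ‖y - c • x‖ ^ 2 = s ^ 2 := by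
            rw [norm_sub_sq_real, real_inner_smul_right, norm_smul, hy, hx,
              Real.norm_eq_abs, real_inner_comm, ← hcdef, hs2, mul_one, sq_abs]
            ring
          rw [hudef, norm_smul, mul_pow, Real.norm_eq_abs, sq_abs, hyc,
            inv_pow, inv_mul_cancel₀ (pow_ne_zero 2 (ne_of_gt hspos))]
        clear_value u
        have hinner : ⟪r • x, a • u⟫ = 0 := by
          rw [real_inner_smul_left, real_inner_smul_right, hxu]; ring
        have hnx : ‖r • x‖ ^ 2 = r ^ 2 := by
          rw [norm_smul, hx, mul_one, Real.norm_eq_abs, sq_abs]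
        have hnu : ‖a • u‖ ^ 2 = a ^ 2 := by
          rw [norm_smul, mul_pow, Real.norm_eq_abs, sq_abs, huu, mul_one]
        have hw : ‖r • x + a • u‖ ^ 2 = ρ ^ 2 := by
          rw [norm_add_sq_real, hinner, hnx, hnu]
          linarith only [ha2]
        have hwnorm : ‖r • x + a • u‖ = ρ := by
          have hn := norm_nonneg (r • x + a • u)
          nlinarith only [hw, hn, hρ0]
        set z : Eucl n := (r / ρ) • (r • x + a • u) with hzdef
        have hzn : ‖z‖ = r := by
          rw [hzdef, norm_smul, hwnorm, Real.norm_eq_abs,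
            abs_of_pos (div_pos hr0 hρ0), div_mul_cancel₀ _ (ne_of_gt hρ0)]
        have hzK : z ∈ K := by
          refine h1 (mem_closedBall_zero_iff.2 ?_)
          rw [hzn]
        set N : ℝ := r * (a * c - r * s) + s * ρ ^ 2 with hNdef
        have hk0 : 0 ≤ r * (a * c - r * s) :=
          mul_nonneg hr0.le (by linarith only [hacrs])
        have hsρ : 0 < s * ρ ^ 2 := mul_pos hspos (pow_pos hρ0 2)
        have hN0 : 0 < N := by
          rw [hNdef]; linarith only [hk0, hsρ]
        clear_value N
        set l : ℝ := r * (a * c - r * s) / N with hldef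
        have hl0 : 0 ≤ l := hldef ▸ div_nonneg hk0 hN0.le
        have hl1 : l ≤ 1 := by
          rw [hldef, div_le_one hN0, hNdef]
          linarith only [hsρ]
        clear_value l
        set tt : ℝ := ρ * r * a / N with httdef
        have htt0 : 0 < tt := by
          rw [httdef]
          exact div_pos (mul_pos (mul_pos hρ0 hr0) hapos) hN0
        clear_value tt
        have hNne : r * (a * c - r * s) + s * ρ ^ 2 ≠ 0 := by
          rw [← hNdef]; exact hN0.ne'
        have hcomb : l • (ρ • x) + (1 - l) • z = tt • y := by
          rw [hyu, hzdef, hldef, httdef, hNdef]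
          match_scalars
          · field_simp
            ring
          · field_simp
            ring
        have htty : tt • y ∈ K := by
          have hcv : l • (ρ • x) + (1 - l) • z ∈ K :=
            hconv hρK hzK hl0 (by linarith only [hl1]) (by ring)
          rwa [hcomb] at hcv
        have httσ : tt ≤ radFn K y := le_csSup (bdd y hy) ⟨htt0, htty⟩
        have hN : N = a * D := by
          rw [hNdef, hDdef]
          linear_combination (-s) * ha2
        have hfin : ρ ≤ tt + 5 * Real.sqrt δ * e := by
          have hA1 : ρ * a ≤ (26/25) * (2 * Real.sqrt δ) := by
            refine mul_le_mul ?_ ha2d ha0 (by norm_num)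
            linarith only [hρub, hδ25]
          have hA2 : ρ * a * s ≤ (52/25) * (Real.sqrt δ * e) := by
            have t1 : ρ * a * s ≤ ((26/25) * (2 * Real.sqrt δ)) * s :=
              mul_le_mul_of_nonneg_right hA1 hs0
            have t2 : ((26/25) * (2 * Real.sqrt δ)) * s
                ≤ ((26/25) * (2 * Real.sqrt δ)) * e :=
              mul_le_mul_of_nonneg_left hse (by positivity)
            linarith only [t1, t2]
          have hA3 : (24:ℝ)/25 * (12/13) ≤ r * c :=
            mul_le_mul hr2425 hc12 (by norm_num) hr0.le
          have hmain : (ρ - 5 * Real.sqrt δ * e) * D ≤ ρ * r := by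
            rw [hDdef]
            have hb : (5 * Real.sqrt δ * e) * ((24:ℝ)/25 * (12/13))
                ≤ (5 * Real.sqrt δ * e) * (r * c) :=
              mul_le_mul_of_nonneg_left hA3 (by positivity)
            have hcineq : 0 ≤ (ρ * r) * (1 - c) :=
              mul_nonneg (mul_nonneg hρ0.le hr0.le) (by linarith only [hcle])
            have hd : 0 ≤ (5 * Real.sqrt δ * e) * (a * s) :=
              mul_nonneg (by positivity) (mul_nonneg ha0 hs0)
            have hsde : 0 ≤ Real.sqrt δ * e := mul_nonneg hsd0 he0
            nlinarith only [hA2, hb, hcineq, hd, hsde]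
          have hfin2 : (ρ - 5 * Real.sqrt δ * e) * N ≤ ρ * r * a := by
            rw [hN]
            calc (ρ - 5 * Real.sqrt δ * e) * (a * D)
                = ((ρ - 5 * Real.sqrt δ * e) * D) * a := by ring
              _ ≤ (ρ * r) * a := mul_le_mul_of_nonneg_right hmain ha0
              _ = ρ * r * a := by ring
          have hdiv : (ρ - 5 * Real.sqrt δ * e) ≤ ρ * r * a / N := by
            rw [le_div_iff₀ hN0]
            exact hfin2
          rw [httdef]
          linarith only [hdiv]
        linarith only [httσ, hfin]

/-- the radial function of a body `δ`-close to the unit ball is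
Lipschitz with constant `5√δ`. -/
theorem stmt_11 (n : ℕ) (hn : 2 ≤ n) (δ : ℝ) (hδ : δ ∈ Ioo (0 : ℝ) (1 / 25))
    (K : Set (Eucl n)) (hK : IsSymmConvexBody K)
    (h1 : closedBall (0 : Eucl n) (1 - δ) ⊆ K)
    (h2 : K ⊆ closedBall (0 : Eucl n) (1 + δ)) :
    ∀ x ∈ sphere (0 : Eucl n) 1, ∀ y ∈ sphere (0 : Eucl n) 1,
      |radFn K x - radFn K y| ≤ 5 * Real.sqrt δ * ‖x - y‖ := by
  intro x hx y hy
  have L := radFn_le_aux δ hδ K hK.1 h1 h2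
  rw [abs_sub_le_iff]
  constructor
  · linarith [L x hx y hy]
  · have := L y hy x hx
    rw [norm_sub_rev] at this
    linarith

end
end

section
/- Let n ≥ 2, δ ∈ (0,1), and let K ⊂ ℝⁿ be a convex set with (1−δ) B₂ⁿ ⊆ K ⊆ (1+δ) B₂ⁿ. Then for every X ∈ K and every Y in the topological boundary of K, ⟨X − Y, Y⟩ ≤ 2√δ |X − Y|. -/
open MeasureTheory Metric Set Real
open scoped ENNReal RealInnerProductSpace Pointwise

noncomputable section

/-- the key inequality `⟨X−Y, Y⟩ ≤ 2√δ |X−Y|` for a convex set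
squeezed between `(1−δ)B` and `(1+δ)B`. -/
theorem stmt_12 (n : ℕ) (hn : 2 ≤ n) (δ : ℝ) (hδ : δ ∈ Ioo (0 : ℝ) 1)
    (K : Set (Eucl n)) (hK : Convex ℝ K)
    (h1 : closedBall (0 : Eucl n) (1 - δ) ⊆ K)
    (h2 : K ⊆ closedBall (0 : Eucl n) (1 + δ))
    (X : Eucl n) (hX : X ∈ K) (Y : Eucl n) (hY : Y ∈ frontier K) :
    ⟪X - Y, Y⟫ ≤ 2 * Real.sqrt δ * ‖X - Y‖ := by
  obtain ⟨hδ0, hδ1⟩ := hδ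
  have hball : ball (0 : Eucl n) (1 - δ) ⊆ interior K :=
    interior_maximal (ball_subset_closedBall.trans h1) isOpen_ball
  have hne : (interior K).Nonempty :=
    ⟨0, hball (mem_ball_self (by linarith))⟩
  have hYnint : Y ∉ interior K := hY.2
  obtain ⟨f, hf⟩ := geometric_hahn_banach_open_point (hK.interior) isOpen_interior hYnint
  have hclos : ∀ a ∈ K, f a ≤ f Y := by
    intro a ha
    obtain ⟨x₀, hx₀⟩ := hne
    have hcont : Continuous fun ε : ℝ => f (ε • x₀ + (1 - ε) • a) := by
      apply f.continuous.comp
      continuity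
    have htend : Filter.Tendsto (fun ε : ℝ => f (ε • x₀ + (1 - ε) • a))
        (nhdsWithin (0:ℝ) (Ioi 0)) (nhds (f a)) := by
      have h0 : f ((0:ℝ) • x₀ + ((1:ℝ) - (0:ℝ)) • a) = f a := by norm_num
      exact tendsto_nhdsWithin_of_tendsto_nhds (h0 ▸ hcont.tendsto 0)
    refine le_of_tendsto htend ?_
    filter_upwards [Ioc_mem_nhdsGT_of_mem (Set.left_mem_Ico.mpr one_pos)] with ε hε
    exact le_of_lt (hf _ (hK.combo_interior_closure_mem_interior hx₀ (subset_closure ha)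
      hε.1 (by linarith [hε.2]) (by ring)))
  set v := (InnerProductSpace.toDual ℝ (Eucl n)).symm f with hv
  have hvf : ∀ x, ⟪v, x⟫ = f x := fun x => InnerProductSpace.toDual_symm_apply
  have hvne : v ≠ 0 := by
    intro h0
    obtain ⟨a, ha⟩ := hne
    have := hf a ha
    rw [← hvf a, ← hvf Y, h0] at this
    simp at this
  set θ : Eucl n := ‖v‖⁻¹ • v with hθdef
  have hθ : ‖θ‖ = 1 := by
    rw [hθdef, norm_smul, norm_inv, norm_norm, inv_mul_cancel₀ (norm_ne_zero_iff.mpr hvne)]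
  have hsupp : ∀ a ∈ K, ⟪a, θ⟫ ≤ ⟪Y, θ⟫ := by
    intro a ha
    have h := hclos a ha
    rw [← hvf a, ← hvf Y, real_inner_comm a v, real_inner_comm Y v] at h
    rw [hθdef, real_inner_smul_right, real_inner_smul_right]
    exact mul_le_mul_of_nonneg_left h (by positivity)
  clear hθdef
  clear_value θ
  set t : ℝ := ⟪Y, θ⟫ with ht
  have htge : 1 - δ ≤ t := by
    have hmem : (1 - δ) • θ ∈ K := by
      apply h1
      rw [mem_closedBall, dist_zero_right, norm_smul, hθ, mul_one]
      rw [Real.norm_eq_abs, abs_of_nonneg (by linarith)]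
    have := hsupp _ hmem
    rwa [real_inner_smul_left, real_inner_self_eq_norm_sq, hθ, one_pow, mul_one] at this
  have hXθ : ⟪X - Y, θ⟫ ≤ 0 := by
    rw [inner_sub_left]
    linarith [hsupp X hX]
  have hYnorm : ‖Y‖ ≤ 1 + δ := by
    have hYc : Y ∈ closure K := hY.1
    have hc : closure K ⊆ closedBall (0 : Eucl n) (1 + δ) :=
      closure_minimal h2 isClosed_closedBall
    have := hc hYc
    rwa [mem_closedBall, dist_zero_right] at this
  have hperp : ‖Y - t • θ‖ ^ 2 = ‖Y‖ ^ 2 - t ^ 2 := by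
    rw [norm_sub_sq_real, real_inner_smul_right, norm_smul, ← ht]
    rw [Real.norm_eq_abs, hθ, mul_one, sq_abs]
    ring
  have hperple : ‖Y - t • θ‖ ≤ 2 * Real.sqrt δ := by
    have h4 : ‖Y - t • θ‖ ^ 2 ≤ 4 * δ := by
      rw [hperp]
      nlinarith [norm_nonneg Y]
    have hs := Real.sqrt_le_sqrt h4
    rw [Real.sqrt_sq (norm_nonneg _)] at hs
    calc ‖Y - t • θ‖ ≤ Real.sqrt (4 * δ) := hs
      _ = 2 * Real.sqrt δ := by
          rw [show (4 : ℝ) * δ = 2 ^ 2 * δ by ring, Real.sqrt_mul (by positivity),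
            Real.sqrt_sq (by norm_num)]
  have hdecomp : ⟪X - Y, Y⟫ = t * ⟪X - Y, θ⟫ + ⟪X - Y, Y - t • θ⟫ := by
    rw [inner_sub_right, real_inner_smul_right]
    ring
  have h1' : t * ⟪X - Y, θ⟫ ≤ 0 :=
    mul_nonpos_of_nonneg_of_nonpos (by linarith) hXθ
  have h2' : ⟪X - Y, Y - t • θ⟫ ≤ ‖X - Y‖ * ‖Y - t • θ‖ := real_inner_le_norm _ _
  calc ⟪X - Y, Y⟫ ≤ ‖X - Y‖ * ‖Y - t • θ‖ := by rw [hdecomp]; linarith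
    _ ≤ ‖X - Y‖ * (2 * Real.sqrt δ) :=
        mul_le_mul_of_nonneg_left hperple (norm_nonneg _)
    _ = 2 * Real.sqrt δ * ‖X - Y‖ := by ring
end
end
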